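/- arXiv:1804.11282 — 10 statements merged into one kernel-verified Lean document; each statement's English description precedes it below -/
import Mathlib

section
/- Let R ∈ (0, +∞] and let ψ : (0,R) → ℝ be an increasing function such that for some real constants A, B, C, D one has (A + B·ψ(r))² = (C·ψ(r) + D)/(2r²) for all r ∈ (0,R). If ψ(r) → +∞ as r → R (from below, or as r → ∞ when R = +∞), then B = 0; consequently, if in addition C ≠ 0, then ψ(r) = (2A²/C)·r² − D/C for all r ∈ (0,R), i.e. ψ is a harmonic potential up to an additive constant. -/
open Filter Set

/-- Let `R ∈ (0,+∞]` and `ψ : (0,R) → ℝ` be increasing with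
`(A + Bψ(r))² = (Cψ(r) + D)/(2r²)` on `(0,R)`. If `ψ(r) → +∞` as `r → R` from below
(i.e. as `r → ∞` when `R = +∞`), then `B = 0`; consequently, if moreover `C ≠ 0`,
then `ψ(r) = (2A²/C) r² − D/C` on `(0,R)`, i.e. `ψ` is harmonic up to a constant. -/
theorem stmt_1 (R : EReal) (hR : 0 < R) (ψ : ℝ → ℝ) (A B C D : ℝ)
    (hmono : StrictMonoOn ψ {r : ℝ | 0 < r ∧ (r : EReal) < R})
    (heq : ∀ r : ℝ, 0 < r → (r : EReal) < R →
      (A + B * ψ r) ^ 2 = (C * ψ r + D) / (2 * r ^ 2))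
    (hlim : Filter.Tendsto ψ
      (Filter.comap (fun r : ℝ => (r : EReal)) (nhdsWithin R (Set.Iio R)))
      Filter.atTop) :
    B = 0 ∧ (C ≠ 0 → ∀ r : ℝ, 0 < r → (r : EReal) < R →
      ψ r = (2 * A ^ 2 / C) * r ^ 2 - D / C) := by
  set L := Filter.comap (fun r : ℝ => (r : EReal)) (nhdsWithin R (Set.Iio R)) with hL
  -- a real r₀ with 0 < r₀ < R
  obtain ⟨r₀, hr₀0, hr₀R⟩ := EReal.exists_between_coe_real hR
  have hr₀0' : (0:ℝ) < r₀ := by exact_mod_cast hr₀0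
  -- L is NeBot
  have hne : L.NeBot := by
    rw [hL, Filter.comap_neBot_iff]
    intro t ht
    rw [mem_nhdsWithin] at ht
    obtain ⟨u, hu, hRu, hut⟩ := ht
    obtain ⟨l, hl, hsub⟩ := exists_Ioc_subset_of_mem_nhds (hu.mem_nhds hRu) ⟨_, hr₀R⟩
    obtain ⟨x, hx1, hx2⟩ := EReal.exists_between_coe_real hl
    exact ⟨x, hut ⟨hsub ⟨hx1, le_of_lt hx2⟩, hx2⟩⟩
  -- eventually facts in L
  have hev : ∀ᶠ r in L, (r₀ ≤ r ∧ (r:EReal) < R) := by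
    apply Filter.Eventually.and
    · have h1 : Set.Ioi (r₀:EReal) ∈ nhdsWithin R (Set.Iio R) :=
        nhdsWithin_le_nhds (Ioi_mem_nhds hr₀R)
      have h2 := Filter.preimage_mem_comap (m := fun r:ℝ => (r:EReal)) h1
      rw [← hL] at h2
      filter_upwards [h2] with r hr
      exact le_of_lt (by simpa using (EReal.coe_lt_coe_iff.mp hr))
    · exact Filter.preimage_mem_comap self_mem_nhdsWithin
  have hB : B = 0 := by
    by_contra hB
    -- f t = (A+B t)^2 - (C t + D)/(2 r₀^2) tends to atTop
    have hBB : (0:ℝ) < B^2 := by positivity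
    have hf : Tendsto (fun t : ℝ => (A + B*t)^2 - (C*t+D)/(2*r₀^2)) atTop atTop := by
      have h1 : Tendsto (fun t : ℝ => t * (B^2 * t + (2*A*B - C/(2*r₀^2)))) atTop atTop :=
        Filter.Tendsto.atTop_mul_atTop₀ tendsto_id
          (tendsto_atTop_add_const_right _ _ ((tendsto_const_mul_atTop_of_pos hBB).mpr tendsto_id))
      have h2 := tendsto_atTop_add_const_right atTop (A^2 - D/(2*r₀^2)) h1
      refine h2.congr (fun t => by field_simp; ring)
    have h3 : Tendsto (fun r => (A + B*ψ r)^2 - (C*ψ r+D)/(2*r₀^2)) L atTop :=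
      hf.comp hlim
    have h4 : ∀ᶠ r in L, (1:ℝ) ≤ (A + B*ψ r)^2 - (C*ψ r+D)/(2*r₀^2) :=
      h3.eventually_ge_atTop 1
    have h5 : ∀ᶠ r in L, (A + B*ψ r)^2 - (C*ψ r+D)/(2*r₀^2) ≤ 0 := by
      filter_upwards [hev] with r ⟨hr1, hr2⟩
      have hr0 : (0:ℝ) < r := lt_of_lt_of_le hr₀0' hr1
      have he := heq r hr0 hr2
      have hpos : (0:ℝ) < 2*r^2 := by positivity
      have hnn : 0 ≤ C*ψ r + D := by
        have h6 : C*ψ r + D = (A+B*ψ r)^2 * (2*r^2) := by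
          field_simp at he; linarith
        rw [h6]; positivity
      rw [he, sub_nonpos]
      exact div_le_div_of_nonneg_left hnn (by positivity) (by nlinarith)
    obtain ⟨r, h1', h2'⟩ := (h4.and h5).exists
    linarith
  refine ⟨hB, fun hC r hr0 hrR => ?_⟩
  have he := heq r hr0 hrR
  rw [hB] at he
  have hpos : (0:ℝ) < 2*r^2 := by positivity
  field_simp at he ⊢
  nlinarith [he]
end

section
/- Let φ be a real-analytic function on a neighborhood of a point x₀ ∈ ℝ with φ'(x₀) = 0 and φ''(x₀) = 2. Suppose there exist ε > 0 and ϖ ≥ 0 such that for every λ ∈ (0,ε) and all points x_p < x_a in (x₀ − ε, x₀ + ε) with φ(x_p) = φ(x₀) + λ and φ(x_a) = φ(x₀) + λ, one has x_a − x_p = ϖ·√λ. Then 5·(φ'''(x₀))² = 6·φ⁗(x₀). -/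
open Filter Topology

private lemma analyticAt_deriv' {f : ℝ → ℝ} {x : ℝ} (hf : AnalyticAt ℝ f x) :
    AnalyticAt ℝ (deriv f) x := by
  obtain ⟨s, hs, hso, hxs⟩ := eventually_nhds_iff.mp hf.eventually_analyticAt
  exact (AnalyticOnNhd.deriv (fun y hy => hs y hy)) x hxs

private lemma analyticAt_rlog {x : ℝ} (hx : 0 < x) : AnalyticAt ℝ Real.log x := by
  have h1 : AnalyticAt ℝ (fun t : ℝ => (Complex.log (Complex.ofRealCLM t)).re) x := by
    have hc : AnalyticAt ℂ Complex.log ((x : ℝ) : ℂ) :=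
      analyticAt_clog (Complex.ofReal_mem_slitPlane.mpr hx)
    have hR : AnalyticAt ℝ Complex.log (Complex.ofRealCLM x) := hc.restrictScalars
    exact (Complex.reCLM.analyticAt _).comp (hR.comp (Complex.ofRealCLM.analyticAt x))
  exact h1.congr (Eventually.of_forall fun t => Complex.log_ofReal_re t)

private lemma analyticAt_rsqrt {x : ℝ} (hx : 0 < x) : AnalyticAt ℝ Real.sqrt x := by
  have h1 : AnalyticAt ℝ (fun t : ℝ => Real.exp (Real.log t * (1/2))) x :=
    analyticAt_rexp.comp ((analyticAt_rlog hx).mul analyticAt_const)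
  refine h1.congr ?_
  filter_upwards [eventually_gt_nhds hx] with t ht
  have h2 : Real.exp (Real.log t * (1/2)) ^ 2 = t := by
    rw [sq, ← Real.exp_add]
    rw [show Real.log t * (1/2) + Real.log t * (1/2) = Real.log t by ring, Real.exp_log ht]
  conv_rhs => rw [← h2, Real.sqrt_sq (Real.exp_nonneg _)]

private lemma evd_comp {f Ψ : ℝ → ℝ} {x : ℝ} (hΨ : AnalyticAt ℝ Ψ x) (hf : AnalyticAt ℝ f (Ψ x)) :
    deriv (fun t => f (Ψ t)) =ᶠ[𝓝 x] fun t => deriv f (Ψ t) * deriv Ψ t := by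
  filter_upwards [hΨ.eventually_analyticAt, hΨ.continuousAt.eventually hf.eventually_analyticAt]
    with t ht1 ht2
  exact deriv_comp t ht2.differentiableAt ht1.differentiableAt

set_option maxHeartbeats 2000000

/-- **Lemma B.2.** Let `φ` be real-analytic near `x₀` with `φ'(x₀) = 0` and
`φ''(x₀) = 2`. If there are `ε > 0` and `ϖ ≥ 0` such that for every `λ ∈ (0,ε)` and all
points `x_p < x_a` of `(x₀ − ε, x₀ + ε)` with `φ(x_p) = φ(x_a) = φ(x₀) + λ` one has
`x_a − x_p = ϖ √λ`, then `5 (φ'''(x₀))² = 6 φ⁗(x₀)`. -/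
theorem stmt_4 (φ : ℝ → ℝ) (x₀ : ℝ) (hφ : AnalyticAt ℝ φ x₀)
    (h1 : deriv φ x₀ = 0) (h2 : iteratedDeriv 2 φ x₀ = 2)
    (hchord : ∃ ε : ℝ, 0 < ε ∧ ∃ ϖ : ℝ, 0 ≤ ϖ ∧
      ∀ lam : ℝ, 0 < lam → lam < ε →
        ∀ xp xa : ℝ, xp ∈ Set.Ioo (x₀ - ε) (x₀ + ε) → xa ∈ Set.Ioo (x₀ - ε) (x₀ + ε) →
          xp < xa → φ xp = φ x₀ + lam → φ xa = φ x₀ + lam →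
          xa - xp = ϖ * Real.sqrt lam) :
    5 * (iteratedDeriv 3 φ x₀) ^ 2 = 6 * iteratedDeriv 4 φ x₀ := by
  obtain ⟨ε, hε, ϖ, hϖ0, hch⟩ := hchord
  set A := iteratedDeriv 3 φ x₀ with hA_def
  set B := iteratedDeriv 4 φ x₀ with hB_def
  set g : ℝ → ℝ := fun t => φ (x₀ + t) - φ x₀ with hgdef
  have hg : AnalyticAt ℝ g 0 := by
    have h0 : AnalyticAt ℝ (fun t : ℝ => φ (x₀ + t)) 0 :=
      AnalyticAt.comp (by simpa using hφ) (analyticAt_const.add analyticAt_id)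
    exact h0.sub analyticAt_const
  have htrans : ∀ n : ℕ, iteratedDeriv (n+1) g 0 = iteratedDeriv (n+1) φ x₀ := by
    intro n
    have e1 : deriv g = deriv (fun t => φ (x₀ + t)) := by
      funext t; exact deriv_sub_const _
    rw [iteratedDeriv_succ', e1, ← iteratedDeriv_succ', iteratedDeriv_comp_const_add]
    norm_num
  have hg0 : g 0 = 0 := by simp [hgdef]
  have hg1 : deriv g 0 = 0 := by
    have := htrans 0; rwa [iteratedDeriv_one, iteratedDeriv_one, h1] at this
  have hg2 : deriv (deriv g) 0 = 2 := by
    have := htrans 1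
    rwa [iteratedDeriv_succ, iteratedDeriv_one, h2] at this
  have hg3 : deriv (deriv (deriv g)) 0 = A := by
    have := htrans 2
    rwa [iteratedDeriv_succ, iteratedDeriv_succ, iteratedDeriv_one, ← hA_def] at this
  have hg4 : deriv (deriv (deriv (deriv g))) 0 = B := by
    have := htrans 3
    rwa [iteratedDeriv_succ, iteratedDeriv_succ, iteratedDeriv_succ, iteratedDeriv_one,
      ← hB_def] at this
  -- factor g z = z^2 * h z
  obtain ⟨h, hh, key⟩ : ∃ h : ℝ → ℝ, AnalyticAt ℝ h 0 ∧ ∀ z, g z = z ^ 2 * h z := by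
    obtain ⟨p, hp⟩ := hg
    refine ⟨dslope (dslope g 0) 0,
      ⟨_, hp.has_fpower_series_dslope_fslope.has_fpower_series_dslope_fslope⟩, ?_⟩
    intro z
    rcases eq_or_ne z 0 with rfl | hz
    · simpa using hg0
    · rw [dslope_of_ne _ hz, slope_def_field, dslope_of_ne _ hz, slope_def_field, dslope_same,
        hg1, hg0]
      field_simp; ring
  have hgfun : g = fun z => z ^ 2 * h z := funext key
  -- h 0 = 1
  have h0 : h 0 = 1 := by
    have s1 : deriv g =ᶠ[𝓝 0] fun z => 2 * z * h z + z ^ 2 * deriv h z := by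
      filter_upwards [hh.eventually_analyticAt] with t ht
      rw [hgfun]
      have H := (hasDerivAt_pow 2 t).mul ht.differentiableAt.hasDerivAt
      exact H.deriv.trans (by push_cast; ring)
    have s2 : deriv (fun z => 2 * z * h z + z ^ 2 * deriv h z) =ᶠ[𝓝 0]
        fun z => (2 * h z + 2 * z * deriv h z) + (2 * z * deriv h z + z ^ 2 * deriv (deriv h) z) := by
      filter_upwards [hh.eventually_analyticAt, (analyticAt_deriv' hh).eventually_analyticAt]
        with t ht1 ht2
      have Ha : HasDerivAt (fun z : ℝ => 2 * z) 2 t := by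
        simpa using (hasDerivAt_id t).const_mul (2:ℝ)
      have H := (Ha.mul ht1.differentiableAt.hasDerivAt).add
        ((hasDerivAt_pow 2 t).mul ht2.differentiableAt.hasDerivAt)
      exact H.deriv.trans (by push_cast; ring)
    have := (s1.deriv.trans s2).eq_of_nhds
    rw [hg2] at this
    simp at this
    linarith
  -- eventual positivity and analyticity
  have hpos : ∀ᶠ t in 𝓝 (0:ℝ), 0 < h t :=
    hh.continuousAt.eventually (eventually_gt_nhds (by rw [h0]; norm_num))
  have hganal : ∀ᶠ t in 𝓝 (0:ℝ), AnalyticAt ℝ g t := hg.eventually_analyticAt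
  obtain ⟨δ0, hδ00, hδ0p⟩ := Metric.eventually_nhds_iff.mp (hpos.and hganal)
  set δ : ℝ := min (δ0/2) (ε/2) with hδdef
  have hδpos : 0 < δ := by positivity
  have hδε : δ < ε := by
    have : δ ≤ ε/2 := min_le_right _ _
    linarith
  have hδ : ∀ t : ℝ, |t| ≤ δ → 0 < h t ∧ AnalyticAt ℝ g t := by
    intro t ht
    apply hδ0p
    rw [Real.dist_eq, sub_zero]
    have : δ ≤ δ0/2 := min_le_left _ _
    calc |t| ≤ δ := ht
    _ ≤ δ0/2 := this
    _ < δ0 := by linarith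
  -- u
  set u : ℝ → ℝ := fun t => t * Real.sqrt (h t) with hudef
  have hsq : AnalyticAt ℝ (fun t => Real.sqrt (h t)) 0 :=
    (analyticAt_rsqrt (x := h 0) (by rw [h0]; norm_num)).comp hh
  have hu : AnalyticAt ℝ u 0 := analyticAt_id.mul hsq
  have u0 : u 0 = 0 := by simp [hudef]
  have husq : ∀ t : ℝ, 0 < h t → u t * u t = g t := by
    intro t ht
    have : Real.sqrt (h t) * Real.sqrt (h t) = h t := Real.mul_self_sqrt ht.le
    rw [hudef]; simp only []
    rw [key t]
    nlinarith [this]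
  have hueq : (fun t => u t * u t) =ᶠ[𝓝 (0:ℝ)] g := by
    filter_upwards [hpos] with t ht
    exact husq t ht
  -- ψ
  set ψ : ℝ → ℝ := fun t => t - ϖ * u t with hψdef
  have hψ : AnalyticAt ℝ ψ 0 := analyticAt_id.sub (analyticAt_const.mul hu)
  have ψ0 : ψ 0 = 0 := by simp [hψdef, u0]
  have tendstoψ : Tendsto ψ (𝓝 0) (𝓝 0) := by
    have := hψ.continuousAt
    rwa [ContinuousAt, ψ0] at this
  -- continuity of g on [-δ, 0]
  have hcont : ContinuousOn g (Set.Icc (-δ) 0) := by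
    intro y hy
    have : |y| ≤ δ := by
      rw [abs_le]; exact ⟨hy.1, le_trans hy.2 hδpos.le⟩
    exact ((hδ y this).2).continuousAt.continuousWithinAt
  have gdneg : 0 < g (-δ) := by
    have h1 := (hδ (-δ) (by rw [abs_neg, abs_of_pos hδpos]; )).1
    have e : ((-δ):ℝ)^2 = δ^2 := by ring
    rw [key, e]
    exact mul_pos (pow_pos hδpos 2) h1
  -- choose δ'
  have hsmall : ∀ᶠ t in 𝓝 (0:ℝ), g t < min ε (g (-δ)) := by
    have h01 : (0:ℝ) < min ε (g (-δ)) := lt_min hε gdneg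
    have := hg.continuousAt.eventually (eventually_lt_nhds (by rw [hg0]; exact h01))
    exact this
  obtain ⟨δ1, hδ10, hδ1p⟩ := Metric.eventually_nhds_iff.mp hsmall
  set δ' : ℝ := min (δ1/2) δ with hδ'def
  have hδ'pos : 0 < δ' := by positivity
  have hδ'δ : δ' ≤ δ := min_le_right _ _
  -- main chord consequence
  have main : ∀ t : ℝ, 0 < t → t < δ' → ψ t < 0 ∧ g (ψ t) = g t := by
    intro t ht0 htδ'
    have htδ : |t| ≤ δ := by
      rw [abs_of_pos ht0]; exact le_trans htδ'.le hδ'δ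
    have hgt_pos : 0 < g t := by
      rw [key]
      exact mul_pos (pow_pos ht0 2) (hδ t htδ).1
    have hlt : g t < min ε (g (-δ)) := by
      apply hδ1p
      rw [Real.dist_eq, sub_zero, abs_of_pos ht0]
      have : δ' ≤ δ1/2 := min_le_left _ _
      linarith
    have hgtε : g t < ε := lt_of_lt_of_le hlt (min_le_left _ _)
    have hgtδ : g t < g (-δ) := lt_of_lt_of_le hlt (min_le_right _ _)
    -- IVT
    have hsub : Set.Ioo (g 0) (g (-δ)) ⊆ g '' Set.Ioo (-δ) 0 :=
      intermediate_value_Ioo' (by linarith) hcont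
    obtain ⟨c, hcmem, hgc⟩ := hsub (by rw [hg0]; exact ⟨hgt_pos, hgtδ⟩)
    have hchres := hch (g t) hgt_pos hgtε (x₀ + c) (x₀ + t)
      (Set.mem_Ioo.mpr ⟨by linarith [hcmem.1, hδε], by linarith [hcmem.2, hε]⟩)
      (Set.mem_Ioo.mpr ⟨by linarith, by linarith [htδ', hδ'δ, hδε]⟩)
      (by linarith [hcmem.2])
      (by rw [show φ (x₀ + c) = g c + φ x₀ by rw [hgdef]; ring, hgc]; ring)
      (by rw [show φ (x₀ + t) = g t + φ x₀ by rw [hgdef]; ring]; ring)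
    have hsqrt : Real.sqrt (g t) = u t := by
      rw [← husq t (hδ t htδ).1, Real.sqrt_mul_self]
      rw [hudef]
      have := Real.sqrt_nonneg (h t)
      positivity
    have hcval : c = ψ t := by
      rw [hψdef]; simp only []
      rw [hsqrt] at hchres
      linarith
    constructor
    · rw [← hcval]; exact hcmem.2
    · rw [← hcval, hgc]
  -- ϖ > 0
  have hϖpos : 0 < ϖ := by
    rcases hϖ0.lt_or_eq with h | h
    · exact h
    · exfalso
      have hm := (main (δ'/2) (by positivity) (by linarith)).1
      rw [hψdef] at hm
      simp only [← h] at hm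
      simp at hm
      linarith
  -- identity theorem
  haveI : NeBot (𝓝[≠] (0:ℝ)) := NormedField.nhdsNE_neBot 0
  have hgψ : AnalyticAt ℝ (fun t => g (ψ t)) 0 := by
    have hc : AnalyticAt ℝ (g ∘ ψ) 0 := AnalyticAt.comp (by rw [ψ0]; exact hg) hψ
    exact hc
  have heq : (fun t => g (ψ t)) =ᶠ[𝓝 (0:ℝ)] g := by
    have hP : AnalyticAt ℝ (fun t => g (ψ t) - g t) 0 := hgψ.sub hg
    have hev : ∀ᶠ z in 𝓝[>] (0:ℝ), g (ψ z) - g z = 0 := by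
      filter_upwards [Ioo_mem_nhdsGT_of_mem (Set.mem_Ico.mpr ⟨le_refl (0:ℝ), hδ'pos⟩)] with z hz
      rw [(main z hz.1 hz.2).2]; ring
    have hfreq : ∃ᶠ z in 𝓝[≠] (0:ℝ), g (ψ z) - g z = 0 :=
      (hev.frequently).filter_mono (nhdsWithin_mono 0 (fun x hx => by simpa using ne_of_gt hx))
    have := hP.frequently_zero_iff_eventually_zero.mp hfreq
    filter_upwards [this] with t ht
    linarith [ht]
  -- (u∘ψ)² = u²
  have hwsq : (fun t => u (ψ t) * u (ψ t)) =ᶠ[𝓝 (0:ℝ)] fun t => u t * u t := by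
    have e1 : ∀ᶠ t in 𝓝 (0:ℝ), u (ψ t) * u (ψ t) = g (ψ t) := tendstoψ.eventually hueq
    filter_upwards [e1, heq, hueq] with t a b c
    rw [a, b, ← c]
  -- basic derivative values
  have hu1 : deriv u 0 = 1 := by
    have s0 : deriv u =ᶠ[𝓝 (0:ℝ)] fun t => Real.sqrt (h t) + t * deriv (fun z => Real.sqrt (h z)) t := by
      filter_upwards [hsq.eventually_analyticAt] with t ht
      have H := (hasDerivAt_id t).mul ht.differentiableAt.hasDerivAt
      exact H.deriv.trans (by simp only [id_eq]; ring)
    have := s0.eq_of_nhds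
    rw [this]
    simp [h0]
  have hψd1 : deriv ψ =ᶠ[𝓝 (0:ℝ)] fun t => 1 - ϖ * deriv u t := by
    filter_upwards [hu.eventually_analyticAt] with t ht
    have H := (hasDerivAt_id t).sub ((ht.differentiableAt.hasDerivAt).const_mul ϖ)
    exact H.deriv.trans (by simp only [id_eq])
  have hdψ0 : deriv ψ 0 = 1 - ϖ := by
    have := hψd1.eq_of_nhds
    rw [this, hu1, mul_one]
  -- dichotomy
  have hcases : (∀ᶠ z in 𝓝 (0:ℝ), u (ψ z) - u z = 0) ∨ (∀ᶠ z in 𝓝 (0:ℝ), u (ψ z) + u z = 0) := by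
    have huψ : AnalyticAt ℝ (fun t => u (ψ t)) 0 := by
      have hc : AnalyticAt ℝ (u ∘ ψ) 0 := AnalyticAt.comp (by rw [ψ0]; exact hu) hψ
      exact hc
    have hPf : AnalyticAt ℝ (fun t => u (ψ t) - u t) 0 := huψ.sub hu
    have hQf : AnalyticAt ℝ (fun t => u (ψ t) + u t) 0 := huψ.add hu
    by_contra hc
    push_neg at hc
    obtain ⟨hc1, hc2⟩ := hc
    have f1 : ∀ᶠ z in 𝓝[≠] (0:ℝ), u (ψ z) - u z ≠ 0 :=
      hPf.eventually_eq_zero_or_eventually_ne_zero.resolve_left (Filter.not_eventually.mpr hc1)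
    have f2 : ∀ᶠ z in 𝓝[≠] (0:ℝ), u (ψ z) + u z ≠ 0 :=
      hQf.eventually_eq_zero_or_eventually_ne_zero.resolve_left (Filter.not_eventually.mpr hc2)
    have f3 : ∀ᶠ z in 𝓝[≠] (0:ℝ), (u (ψ z) - u z) * (u (ψ z) + u z) = 0 := by
      apply Filter.Eventually.filter_mono nhdsWithin_le_nhds
      filter_upwards [hwsq] with t ht
      nlinarith [ht]
    obtain ⟨z, hz1, hz2, hz3⟩ := (f1.and (f2.and f3)).exists
    exact hz2 (by rcases mul_eq_zero.mp hz3 with h' | h'; exact absurd h' hz1; exact h')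
  -- rule out the minus case
  have hplus : ∀ᶠ z in 𝓝 (0:ℝ), u (ψ z) + u z = 0 := by
    rcases hcases with hmin | hplus
    · exfalso
      have hw : (fun t => u (ψ t)) =ᶠ[𝓝 (0:ℝ)] u := by
        filter_upwards [hmin] with t ht; linarith
      have W1 : deriv (fun t => u (ψ t)) =ᶠ[𝓝 (0:ℝ)] fun t => deriv u (ψ t) * deriv ψ t :=
        evd_comp hψ (by rw [ψ0]; exact hu)
      have := (W1.symm.trans hw.deriv).eq_of_nhds
      rw [ψ0, hu1, hdψ0] at this
      simp at this
      linarith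
    · exact hplus
  have hw : (fun t => u (ψ t)) =ᶠ[𝓝 (0:ℝ)] fun t => -(u t) := by
    filter_upwards [hplus] with t ht; linarith
  -- first order: ϖ = 2
  have W1 : deriv (fun t => u (ψ t)) =ᶠ[𝓝 (0:ℝ)] fun t => deriv u (ψ t) * deriv ψ t :=
    evd_comp hψ (by rw [ψ0]; exact hu)
  have r1 : deriv (fun t => -(u t)) =ᶠ[𝓝 (0:ℝ)] fun t => -(deriv u t) :=
    Eventually.of_forall (fun t => deriv.neg)
  have hϖ2 : ϖ = 2 := by
    have := (W1.symm.trans (hw.deriv.trans r1)).eq_of_nhds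
    rw [ψ0, hu1, hdψ0] at this
    simp at this
    linarith
  -- notation for higher derivatives of u and ψ
  have hDu := analyticAt_deriv' hu
  have hD2u := analyticAt_deriv' hDu
  have hD3u := analyticAt_deriv' hD2u
  have hDψ := analyticAt_deriv' hψ
  have hD2ψ := analyticAt_deriv' hDψ
  set u2 := deriv (deriv u) 0 with hu2_def
  set u3 := deriv (deriv (deriv u)) 0 with hu3_def
  -- ψ derivative chains
  have hψd2 : deriv (deriv ψ) =ᶠ[𝓝 (0:ℝ)] fun t => -(ϖ * deriv (deriv u) t) := by
    refine hψd1.deriv.trans (Eventually.of_forall (fun t => ?_))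
    rw [deriv_const_sub, deriv_const_mul_field]
  have hψd3 : deriv (deriv (deriv ψ)) =ᶠ[𝓝 (0:ℝ)] fun t => -(ϖ * deriv (deriv (deriv u)) t) := by
    refine hψd2.deriv.trans (Eventually.of_forall (fun t => ?_))
    rw [deriv.fun_neg, deriv_const_mul_field]
  have hdψ2_0 : deriv (deriv ψ) 0 = -(ϖ * u2) := hψd2.eq_of_nhds
  have hdψ3_0 : deriv (deriv (deriv ψ)) 0 = -(ϖ * u3) := hψd3.eq_of_nhds
  -- second and third order chains for w = u ∘ ψ
  have W2 : deriv (fun t => deriv u (ψ t) * deriv ψ t) =ᶠ[𝓝 (0:ℝ)]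
      fun t => (deriv (deriv u) (ψ t) * deriv ψ t) * deriv ψ t
        + deriv u (ψ t) * deriv (deriv ψ) t := by
    filter_upwards [hψ.eventually_analyticAt, tendstoψ.eventually hDu.eventually_analyticAt,
      hDψ.eventually_analyticAt] with t h1t h2t h3t
    have Hc : HasDerivAt (fun s => deriv u (ψ s)) (deriv (deriv u) (ψ t) * deriv ψ t) t :=
      (h2t.differentiableAt.hasDerivAt).comp t (h1t.differentiableAt.hasDerivAt)
    have H := Hc.mul (h3t.differentiableAt.hasDerivAt)
    exact H.deriv.trans (by ring)
  have W3 : deriv (fun t => (deriv (deriv u) (ψ t) * deriv ψ t) * deriv ψ t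
        + deriv u (ψ t) * deriv (deriv ψ) t) =ᶠ[𝓝 (0:ℝ)]
      fun t => ((deriv (deriv (deriv u)) (ψ t) * deriv ψ t * deriv ψ t
          + deriv (deriv u) (ψ t) * deriv (deriv ψ) t) * deriv ψ t
          + (deriv (deriv u) (ψ t) * deriv ψ t) * deriv (deriv ψ) t)
        + (deriv (deriv u) (ψ t) * deriv ψ t * deriv (deriv ψ) t
          + deriv u (ψ t) * deriv (deriv (deriv ψ)) t) := by
    filter_upwards [hψ.eventually_analyticAt, tendstoψ.eventually hDu.eventually_analyticAt,
      tendstoψ.eventually hD2u.eventually_analyticAt, hDψ.eventually_analyticAt,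
      hD2ψ.eventually_analyticAt] with t h1t h2t h3t h4t h5t
    have Hc1 : HasDerivAt (fun s => deriv u (ψ s)) (deriv (deriv u) (ψ t) * deriv ψ t) t :=
      (h2t.differentiableAt.hasDerivAt).comp t (h1t.differentiableAt.hasDerivAt)
    have Hc2 : HasDerivAt (fun s => deriv (deriv u) (ψ s))
        (deriv (deriv (deriv u)) (ψ t) * deriv ψ t) t :=
      (h3t.differentiableAt.hasDerivAt).comp t (h1t.differentiableAt.hasDerivAt)
    have H := ((Hc2.mul (h4t.differentiableAt.hasDerivAt)).mul
        (h4t.differentiableAt.hasDerivAt)).add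
      (Hc1.mul (h5t.differentiableAt.hasDerivAt))
    exact H.deriv.trans (by simp only [Pi.mul_apply])
  have r2 : deriv (fun t => -(deriv u t)) =ᶠ[𝓝 (0:ℝ)] fun t => -(deriv (deriv u) t) :=
    Eventually.of_forall (fun t => deriv.neg)
  have r3 : deriv (fun t => -(deriv (deriv u) t)) =ᶠ[𝓝 (0:ℝ)]
      fun t => -(deriv (deriv (deriv u)) t) :=
    Eventually.of_forall (fun t => deriv.neg)
  -- third order equation : u3 = 3 u2^2
  have hu3eq : 2 * u3 = 6 * u2 ^ 2 := by
    have L : deriv (deriv (deriv (fun t => u (ψ t)))) =ᶠ[𝓝 (0:ℝ)] _ :=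
      ((W1.deriv.trans W2).deriv.trans W3)
    have R : deriv (deriv (deriv (fun t => u (ψ t)))) =ᶠ[𝓝 (0:ℝ)]
        fun t => -(deriv (deriv (deriv u)) t) :=
      ((hw.deriv.trans r1).deriv.trans r2).deriv.trans r3
    have := (L.symm.trans R).eq_of_nhds
    rw [ψ0, hu1, hdψ0, hdψ2_0, hdψ3_0, hϖ2, ← hu2_def, ← hu3_def] at this
    norm_num at this
    nlinarith [this]
  -- chains for q = u * u  (equal to g near 0)
  have c1 : deriv (fun t => u t * u t) =ᶠ[𝓝 (0:ℝ)]
      fun t => deriv u t * u t + u t * deriv u t := by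
    filter_upwards [hu.eventually_analyticAt] with t ht
    have H := (ht.differentiableAt.hasDerivAt).mul (ht.differentiableAt.hasDerivAt)
    exact H.deriv.trans (by ring)
  have c2 : deriv (fun t => deriv u t * u t + u t * deriv u t) =ᶠ[𝓝 (0:ℝ)]
      fun t => (deriv (deriv u) t * u t + deriv u t * deriv u t)
        + (deriv u t * deriv u t + u t * deriv (deriv u) t) := by
    filter_upwards [hu.eventually_analyticAt, hDu.eventually_analyticAt] with t h0t h1t
    have H := ((h1t.differentiableAt.hasDerivAt).mul (h0t.differentiableAt.hasDerivAt)).add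
      ((h0t.differentiableAt.hasDerivAt).mul (h1t.differentiableAt.hasDerivAt))
    exact H.deriv.trans (by ring)
  have c3 : deriv (fun t => (deriv (deriv u) t * u t + deriv u t * deriv u t)
        + (deriv u t * deriv u t + u t * deriv (deriv u) t)) =ᶠ[𝓝 (0:ℝ)]
      fun t => ((deriv (deriv (deriv u)) t * u t + deriv (deriv u) t * deriv u t)
          + (deriv (deriv u) t * deriv u t + deriv u t * deriv (deriv u) t))
        + ((deriv (deriv u) t * deriv u t + deriv u t * deriv (deriv u) t)
          + (deriv u t * deriv (deriv u) t + u t * deriv (deriv (deriv u)) t)) := by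
    filter_upwards [hu.eventually_analyticAt, hDu.eventually_analyticAt,
      hD2u.eventually_analyticAt] with t h0t h1t h2t
    have H := (((h2t.differentiableAt.hasDerivAt).mul (h0t.differentiableAt.hasDerivAt)).add
        ((h1t.differentiableAt.hasDerivAt).mul (h1t.differentiableAt.hasDerivAt))).add
      (((h1t.differentiableAt.hasDerivAt).mul (h1t.differentiableAt.hasDerivAt)).add
        ((h0t.differentiableAt.hasDerivAt).mul (h2t.differentiableAt.hasDerivAt)))
    exact H.deriv.trans (by ring)
  have c4 : deriv (fun t => ((deriv (deriv (deriv u)) t * u t + deriv (deriv u) t * deriv u t)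
          + (deriv (deriv u) t * deriv u t + deriv u t * deriv (deriv u) t))
        + ((deriv (deriv u) t * deriv u t + deriv u t * deriv (deriv u) t)
          + (deriv u t * deriv (deriv u) t + u t * deriv (deriv (deriv u)) t))) =ᶠ[𝓝 (0:ℝ)]
      fun t => (((deriv (deriv (deriv (deriv u))) t * u t + deriv (deriv (deriv u)) t * deriv u t)
          + (deriv (deriv (deriv u)) t * deriv u t + deriv (deriv u) t * deriv (deriv u) t))
          + ((deriv (deriv (deriv u)) t * deriv u t + deriv (deriv u) t * deriv (deriv u) t)
          + (deriv (deriv u) t * deriv (deriv u) t + deriv u t * deriv (deriv (deriv u)) t)))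
        + (((deriv (deriv (deriv u)) t * deriv u t + deriv (deriv u) t * deriv (deriv u) t)
          + (deriv (deriv u) t * deriv (deriv u) t + deriv u t * deriv (deriv (deriv u)) t))
          + ((deriv (deriv u) t * deriv (deriv u) t + deriv u t * deriv (deriv (deriv u)) t)
          + (deriv u t * deriv (deriv (deriv u)) t + u t * deriv (deriv (deriv (deriv u))) t))) := by
    filter_upwards [hu.eventually_analyticAt, hDu.eventually_analyticAt,
      hD2u.eventually_analyticAt, hD3u.eventually_analyticAt] with t h0t h1t h2t h3t
    have d0 := h0t.differentiableAt.hasDerivAt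
    have d1 := h1t.differentiableAt.hasDerivAt
    have d2 := h2t.differentiableAt.hasDerivAt
    have d3 := h3t.differentiableAt.hasDerivAt
    have H := (((d3.mul d0).add (d2.mul d1)).add ((d2.mul d1).add (d1.mul d2))).add
      (((d2.mul d1).add (d1.mul d2)).add ((d1.mul d2).add (d0.mul d3)))
    exact H.deriv.trans (by ring)
  have hgq : g =ᶠ[𝓝 (0:ℝ)] fun t => u t * u t := hueq.symm
  -- A = 6 u2
  have hAeq : A = 6 * u2 := by
    have G3 : deriv (deriv (deriv g)) =ᶠ[𝓝 (0:ℝ)] _ :=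
      ((hgq.deriv.trans c1).deriv.trans c2).deriv.trans c3
    have := G3.eq_of_nhds
    rw [hg3, u0, hu1, ← hu2_def, ← hu3_def] at this
    rw [this]; ring
  -- B = 6 u2^2 + 8 u3
  have hBeq : B = 6 * u2 ^ 2 + 8 * u3 := by
    have G4 : deriv (deriv (deriv (deriv g))) =ᶠ[𝓝 (0:ℝ)] _ :=
      (((hgq.deriv.trans c1).deriv.trans c2).deriv.trans c3).deriv.trans c4
    have := G4.eq_of_nhds
    rw [hg4, u0, hu1, ← hu2_def, ← hu3_def] at this
    rw [this]; ring
  rw [hAeq, hBeq]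
  nlinarith [hu3eq]
end

section
/- Let I ⊆ ℝ be an open interval and f : I → ℝ a real-analytic function satisfying 5·(f'''(x))² = 3·f⁗(x)·f''(x) for every x ∈ I. Then either f is a polynomial of degree at most 2 on I, or there exist real constants c ≠ 0, α ≠ 0, β, a, d with α·x + β > 0 for all x ∈ I and f(x) = c·√(α·x + β) + a·x + d for all x ∈ I. -/
open Real Set Filter Topology

section Aux
lemma const_on_of_hasDerivAt_zero {s : Set ℝ} (hs : IsOpen s) (hconv : Convex ℝ s)
    {g : ℝ → ℝ} (hg : ∀ x ∈ s, HasDerivAt g 0 x) {x y : ℝ} (hx : x ∈ s) (hy : y ∈ s) :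
    g x = g y := by
  refine hconv.is_const_of_fderivWithin_eq_zero
    (fun z hz => ((hg z hz).differentiableAt).differentiableWithinAt) (fun z hz => ?_) hx hy
  rw [fderivWithin_of_isOpen hs hz, (hg z hz).hasFDerivAt.fderiv]
  ext
  simp

lemma affine_on_of_hasDerivAt {s : Set ℝ} (hs : IsOpen s) (hconv : Convex ℝ s)
    {g g1 : ℝ → ℝ} (hg : ∀ x ∈ s, HasDerivAt g (g1 x) x)
    (hg1 : ∀ x ∈ s, HasDerivAt g1 0 x) {m : ℝ} (hm : m ∈ s) :
    ∀ x ∈ s, g x = g m + g1 m * (x - m) := by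
  intro x hx
  have hc : ∀ y ∈ s, g1 y = g1 m := fun y hy => const_on_of_hasDerivAt_zero hs hconv hg1 hy hm
  have hG : ∀ y ∈ s, HasDerivAt (fun t => g t - g1 m * t) 0 y := by
    intro y hy
    have := (hg y hy).fun_sub ((hasDerivAt_id y).const_mul (g1 m))
    simpa [hc y hy] using this
  have := const_on_of_hasDerivAt_zero hs hconv hG hx hm
  linarith [this]

lemma W_hasDeriv {h h3 h4 : ℝ → ℝ} {x : ℝ}
    (hh : HasDerivAt h (h3 x) x) (hh3 : HasDerivAt h3 (h4 x) x)
    (hx : h x ≠ 0) (hode : 5 * (h3 x)^2 = 3 * h4 x * h x) :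
    HasDerivAt (fun t => (h t ^ 2) ^ (-(1/3):ℝ))
      ((-(1/3):ℝ) * ((2 * h x * h3 x) * (h x ^ 2) ^ (-(4/3):ℝ))) x ∧
    HasDerivAt (fun t => (-(1/3):ℝ) * ((2 * h t * h3 t) * (h t ^ 2) ^ (-(4/3):ℝ))) 0 x := by
  have hsq : (0:ℝ) < h x ^ 2 := by positivity
  have hu : HasDerivAt (fun t => h t ^ 2) (2 * h x * h3 x) x := by
    have := hh.fun_pow 2
    simpa [mul_comm, mul_assoc, mul_left_comm] using this
  constructor
  · have := hu.rpow_const (p := (-(1/3):ℝ)) (Or.inl hsq.ne')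
    convert this using 1
    rw [show (-(1/3):ℝ) - 1 = -(4/3) by norm_num]
    ring
  · have hv : HasDerivAt (fun t => (h t ^ 2) ^ (-(4/3):ℝ))
        ((2 * h x * h3 x) * (-(4/3)) * (h x ^ 2) ^ ((-(4/3):ℝ) - 1)) x :=
      hu.rpow_const (Or.inl hsq.ne')
    have hw : HasDerivAt (fun t => 2 * h t * h3 t)
        (2 * h3 x * h3 x + 2 * h x * h4 x) x := by
      have := ((hh.const_mul 2).fun_mul hh3)
      simpa [mul_comm, mul_assoc, mul_left_comm] using this
    have H := ((hw.mul hv).const_mul (-(1/3):ℝ))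
    have e1 : (h x ^ 2) ^ ((-(4/3):ℝ) - 1) = (h x ^ 2) ^ (-(4/3):ℝ) / (h x ^ 2) := by
      rw [Real.rpow_sub hsq, Real.rpow_one]
    have hD : (-(1/3):ℝ) * ((2 * h3 x * h3 x + 2 * h x * h4 x) * (h x ^ 2) ^ (-(4/3):ℝ)
        + (2 * h x * h3 x) * ((2 * h x * h3 x) * (-(4/3)) * (h x ^ 2) ^ ((-(4/3):ℝ) - 1))) = 0 := by
      rw [e1]
      set A := (h x ^ 2) ^ (-(4/3):ℝ)
      field_simp
      linear_combination (2 * A) * hode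
    exact hD ▸ H

lemma W_affine {J : Set ℝ} (hJ : IsOpen J) (hc : Convex ℝ J) {h h3 h4 : ℝ → ℝ}
    (hd1 : ∀ x ∈ J, HasDerivAt h (h3 x) x) (hd2 : ∀ x ∈ J, HasDerivAt h3 (h4 x) x)
    (hode : ∀ x ∈ J, 5 * (h3 x)^2 = 3 * h4 x * h x)
    (hne : ∀ x ∈ J, h x ≠ 0) {m : ℝ} (hm : m ∈ J) :
    ∃ A B : ℝ, ∀ x ∈ J, (h x ^ 2) ^ (-(1/3):ℝ) = A + B * x := by
  have key := affine_on_of_hasDerivAt hJ hc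
    (g := fun t => (h t ^ 2) ^ (-(1/3):ℝ))
    (g1 := fun t => (-(1/3):ℝ) * ((2 * h t * h3 t) * (h t ^ 2) ^ (-(4/3):ℝ)))
    (fun x hx => (W_hasDeriv (hd1 x hx) (hd2 x hx) (hne x hx) (hode x hx)).1)
    (fun x hx => (W_hasDeriv (hd1 x hx) (hd2 x hx) (hne x hx) (hode x hx)).2) hm
  refine ⟨(h m ^ 2) ^ (-(1/3):ℝ)
      - (-(1/3):ℝ) * ((2 * h m * h3 m) * (h m ^ 2) ^ (-(4/3):ℝ)) * m,
    (-(1/3):ℝ) * ((2 * h m * h3 m) * (h m ^ 2) ^ (-(4/3):ℝ)), fun x hx => ?_⟩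
  have := key x hx
  linarith [this]
end Aux

section Aux2
variable {I : Set ℝ}

lemma sign_const (hIopen : IsOpen I) (hpre : IsPreconnected I) {h : ℝ → ℝ}
    (hcont : ∀ x ∈ I, ContinuousAt h x) (hne : ∀ x ∈ I, h x ≠ 0) {m : ℝ} (hm : m ∈ I) :
    ∀ x ∈ I, 0 < h x * h m := by
  by_contra hcon
  push_neg at hcon
  obtain ⟨x₁, hx₁I, hx₁⟩ := hcon
  have hx₁' : h x₁ * h m < 0 :=
    lt_of_le_of_ne hx₁ (mul_ne_zero (hne x₁ hx₁I) (hne m hm))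
  set U : Set ℝ := {x | x ∈ I ∧ 0 < h x * h m} with hU
  set V : Set ℝ := {x | x ∈ I ∧ h x * h m < 0} with hV
  have hUopen : IsOpen U := by
    rw [isOpen_iff_mem_nhds]
    rintro x ⟨hxI, hxp⟩
    have h1 : (fun y => h y * h m) ⁻¹' (Ioi 0) ∈ 𝓝 x :=
      ((hcont x hxI).mul continuousAt_const).preimage_mem_nhds (isOpen_Ioi.mem_nhds hxp)
    filter_upwards [h1, hIopen.mem_nhds hxI] with y hy1 hy2
    exact ⟨hy2, hy1⟩
  have hVopen : IsOpen V := by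
    rw [isOpen_iff_mem_nhds]
    rintro x ⟨hxI, hxp⟩
    have h1 : (fun y => h y * h m) ⁻¹' (Iio 0) ∈ 𝓝 x :=
      ((hcont x hxI).mul continuousAt_const).preimage_mem_nhds (isOpen_Iio.mem_nhds hxp)
    filter_upwards [h1, hIopen.mem_nhds hxI] with y hy1 hy2
    exact ⟨hy2, hy1⟩
  have hcover : I ⊆ U ∪ V := by
    intro x hx
    rcases lt_or_gt_of_ne (mul_ne_zero (hne x hx) (hne m hm)) with hlt | hgt
    · exact Or.inr ⟨hx, hlt⟩
    · exact Or.inl ⟨hx, hgt⟩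
  obtain ⟨y, _, ⟨⟨_, hy1⟩, ⟨_, hy2⟩⟩⟩ := hpre U V hUopen hVopen hcover
    ⟨m, hm, hm, mul_self_pos.mpr (hne m hm)⟩ ⟨x₁, hx₁I, hx₁I, hx₁'⟩
  exact absurd (hy1.trans hy2) (lt_irrefl 0)
end Aux2

section Aux3
variable {I : Set ℝ}


lemma no_zero (hIopen : IsOpen I) (hconv : Convex ℝ I) {h h3 h4 : ℝ → ℝ}
    (hA : AnalyticOnNhd ℝ h I)
    (hd1 : ∀ x ∈ I, HasDerivAt h (h3 x) x) (hd2 : ∀ x ∈ I, HasDerivAt h3 (h4 x) x)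
    (hode : ∀ x ∈ I, 5 * (h3 x)^2 = 3 * h4 x * h x)
    {x₀ : ℝ} (hx₀I : x₀ ∈ I) (hx₀ : h x₀ ≠ 0) : ∀ x ∈ I, h x ≠ 0 := by
  -- blow-up: no boundary zero with h ≠ 0 just to the right
  have blow : ∀ x₁ ∈ I, h x₁ = 0 → ∀ δ > (0:ℝ), Ioo x₁ (x₁ + δ) ⊆ I →
      ¬ (∀ y ∈ Ioo x₁ (x₁ + δ), h y ≠ 0) := by
    intro x₁ hx₁I hzero δ hδ hsub hne'
    set J := Ioo x₁ (x₁ + δ) with hJdef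
    have hmJ : x₁ + δ/2 ∈ J := by constructor <;> simp <;> linarith
    obtain ⟨A, B, hAB⟩ := W_affine isOpen_Ioo (convex_Ioo _ _)
      (fun x hx => hd1 x (hsub hx)) (fun x hx => hd2 x (hsub hx))
      (fun x hx => hode x (hsub hx)) hne' hmJ
    set M : ℝ := |A| + |B| * (|x₁| + δ) + 1 with hMdef
    have hM : 0 < M := by positivity
    have hbound : ∀ x ∈ J, A + B * x ≤ M - 1 := by
      rintro x ⟨hx1, hx2⟩
      have habs : |x| ≤ |x₁| + δ := by
        rw [abs_le]
        have := le_abs_self x₁; have := neg_abs_le x₁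
        constructor <;> linarith
      have h1 : A + B * x ≤ |A| + |B| * |x| := by
        have := le_abs_self (B * x)
        have := le_abs_self A
        rw [abs_mul] at *
        linarith
      have h2 : |B| * |x| ≤ |B| * (|x₁| + δ) :=
        mul_le_mul_of_nonneg_left habs (abs_nonneg B)
      simp only [hMdef]; linarith
    set ε : ℝ := Real.sqrt (M ^ (-3:ℝ)) with hεdef
    have hMpow : (0:ℝ) < M ^ (-3:ℝ) := Real.rpow_pos_of_pos hM _
    have hε : 0 < ε := Real.sqrt_pos.mpr hMpow
    have hev : ∀ᶠ y in 𝓝 x₁, dist (h y) (h x₁) < ε :=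
      (Metric.tendsto_nhds.mp (hA x₁ hx₁I).continuousAt.tendsto) ε hε
    obtain ⟨η, hη, hball⟩ := Metric.eventually_nhds_iff.mp hev
    set x : ℝ := x₁ + min δ η / 2 with hxdef
    have hmin : 0 < min δ η := lt_min hδ hη
    have hxJ : x ∈ J := by
      constructor
      · simp only [hxdef]; linarith
      · simp only [hxdef]
        have : min δ η ≤ δ := min_le_left _ _
        linarith
    have hdist : dist x x₁ < η := by
      rw [Real.dist_eq]
      simp only [hxdef, add_sub_cancel_left]
      rw [abs_of_pos (by linarith)]
      have : min δ η ≤ η := min_le_right _ _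
      linarith
    have hsmall : |h x| < ε := by
      have := hball hdist
      rwa [hzero, Real.dist_eq, sub_zero] at this
    have hsq : h x ^ 2 < M ^ (-3:ℝ) := by
      have h1 : h x ^ 2 = |h x| ^ 2 := (sq_abs _).symm
      have h2 : |h x| ^ 2 < ε ^ 2 := by
        apply pow_lt_pow_left₀ hsmall (abs_nonneg _) (by norm_num)
      rw [h1]
      calc |h x| ^ 2 < ε ^ 2 := h2
        _ = M ^ (-3:ℝ) := Real.sq_sqrt hMpow.le
    have hpos : (0:ℝ) < h x ^ 2 := by
      have := hne' x hxJ; positivity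
    have hWlower : M ≤ (h x ^ 2) ^ (-(1/3):ℝ) := by
      have h3' := Real.rpow_le_rpow_of_nonpos hpos hsq.le (by norm_num : (-(1/3):ℝ) ≤ 0)
      calc M = (M ^ (-3:ℝ)) ^ (-(1/3):ℝ) := by
              rw [← Real.rpow_mul hM.le]; norm_num
        _ ≤ (h x ^ 2) ^ (-(1/3):ℝ) := h3'
    have e1 := hAB x hxJ
    have e2 := hbound x hxJ
    rw [e1] at hWlower
    linarith
  -- Z and N are open, conclude by preconnectedness
  by_contra hcon
  push_neg at hcon
  obtain ⟨x₁, hx₁I, hx₁⟩ := hcon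
  have hZopen : IsOpen {x | x ∈ I ∧ h x = 0} := by
    rw [isOpen_iff_mem_nhds]
    rintro x ⟨hxI, hx0⟩
    rcases (hA x hxI).eventually_eq_zero_or_eventually_ne_zero with hcase | hcase
    · filter_upwards [hcase, hIopen.mem_nhds hxI] with y hy1 hy2
      exact ⟨hy2, hy1⟩
    · exfalso
      rw [eventually_nhdsWithin_iff] at hcase
      have hIev : ∀ᶠ y in 𝓝 x, y ∈ I := hIopen.mem_nhds hxI
      obtain ⟨η, hη, hball⟩ := Metric.eventually_nhds_iff.mp (hcase.and hIev)
      refine blow x hxI hx0 η hη ?_ ?_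
      · rintro y ⟨hy1, hy2⟩
        have : dist y x < η := by rw [Real.dist_eq, abs_of_pos (by linarith)]; linarith
        exact (hball this).2
      · rintro y ⟨hy1, hy2⟩
        have : dist y x < η := by rw [Real.dist_eq, abs_of_pos (by linarith)]; linarith
        exact (hball this).1 (by intro hcontra; simp at hcontra; linarith)
  have hNopen : IsOpen {x | x ∈ I ∧ h x ≠ 0} := by
    rw [isOpen_iff_mem_nhds]
    rintro x ⟨hxI, hx0⟩
    have h1 : h ⁻¹' ({0}ᶜ) ∈ 𝓝 x :=
      (hA x hxI).continuousAt.preimage_mem_nhds (isOpen_compl_singleton.mem_nhds hx0)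
    filter_upwards [h1, hIopen.mem_nhds hxI] with y hy1 hy2
    exact ⟨hy2, hy1⟩
  have hpre : IsPreconnected I := hconv.isPreconnected
  obtain ⟨y, _, ⟨⟨_, hy1⟩, ⟨_, hy2⟩⟩⟩ := hpre _ _ hNopen hZopen
    (fun x hx => by by_cases h0 : h x = 0; exacts [Or.inr ⟨hx, h0⟩, Or.inl ⟨hx, h0⟩])
    ⟨x₀, hx₀I, hx₀I, hx₀⟩ ⟨x₁, hx₁I, hx₁I, hx₁⟩
  exact hy1 hy2
end Aux3


lemma pm_eq {s t : ℝ} (hs : s^2 = 1) (ht : t^2 = 1) (h : 0 < s*t) : s = t := by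
  have h1 : (s-1)*(s+1) = 0 := by linear_combination hs
  have h2 : (t-1)*(t+1) = 0 := by linear_combination ht
  rcases mul_eq_zero.mp h1 with h1|h1 <;> rcases mul_eq_zero.mp h2 with h2|h2 <;> nlinarith

/-- A real-analytic function on a nonempty open interval satisfying the
universal differential equation of parabolas `5 (f''')² = 3 f⁗ f''` on `I` is either a
polynomial of degree at most `2` on `I`, or of the form
`f(x) = c √(αx + β) + a x + d` with `c ≠ 0`, `α ≠ 0` and `αx + β > 0` on `I`. -/
theorem stmt_5 (I : Set ℝ) (hIopen : IsOpen I) (hIconn : I.OrdConnected)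
    (hIne : I.Nonempty) (f : ℝ → ℝ) (hf : AnalyticOnNhd ℝ f I)
    (hode : ∀ x ∈ I, 5 * (iteratedDeriv 3 f x) ^ 2
      = 3 * iteratedDeriv 4 f x * iteratedDeriv 2 f x) :
    (∃ a b c : ℝ, ∀ x ∈ I, f x = a * x ^ 2 + b * x + c) ∨
    (∃ c α β a d : ℝ, c ≠ 0 ∧ α ≠ 0 ∧ (∀ x ∈ I, 0 < α * x + β) ∧
       ∀ x ∈ I, f x = c * Real.sqrt (α * x + β) + a * x + d) := by
  obtain ⟨m, hm⟩ := hIne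
  have hconv : Convex ℝ I := convex_iff_ordConnected.mpr hIconn
  have hpre : IsPreconnected I := hconv.isPreconnected
  have e2 : iteratedDeriv 2 f = deriv (deriv f) := by
    rw [show (2:ℕ) = 1+1 from rfl, iteratedDeriv_succ, iteratedDeriv_one]
  have e3 : iteratedDeriv 3 f = deriv (iteratedDeriv 2 f) := iteratedDeriv_succ
  have e4 : iteratedDeriv 4 f = deriv (iteratedDeriv 3 f) := iteratedDeriv_succ
  set h := iteratedDeriv 2 f with hh
  set h3 := iteratedDeriv 3 f with hh3
  set h4 := iteratedDeriv 4 f with hh4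
  have hA1 : AnalyticOnNhd ℝ (deriv f) I := hf.deriv
  have hA2 : AnalyticOnNhd ℝ h I := by rw [e2]; exact hA1.deriv
  have hA3 : AnalyticOnNhd ℝ h3 I := by rw [e3]; exact hA2.deriv
  have hd0 : ∀ x ∈ I, HasDerivAt f (deriv f x) x :=
    fun x hx => (hf x hx).differentiableAt.hasDerivAt
  have hd1 : ∀ x ∈ I, HasDerivAt (deriv f) (h x) x := fun x hx => by
    rw [e2]; exact (hA1 x hx).differentiableAt.hasDerivAt
  have hd2 : ∀ x ∈ I, HasDerivAt h (h3 x) x := fun x hx => by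
    rw [e3]; exact (hA2 x hx).differentiableAt.hasDerivAt
  have hd3 : ∀ x ∈ I, HasDerivAt h3 (h4 x) x := fun x hx => by
    rw [e4]; exact (hA3 x hx).differentiableAt.hasDerivAt
  by_cases hz : ∀ x ∈ I, h x = 0
  · -- f'' ≡ 0 : f is affine
    left
    refine ⟨0, deriv f m, f m - deriv f m * m, fun x hx => ?_⟩
    have key := affine_on_of_hasDerivAt hIopen hconv hd0
      (fun y hy => by simpa [hz y hy] using hd1 y hy) hm x hx
    try simp only at key
    linear_combination key
  · push_neg at hz
    obtain ⟨x₀, hx₀I, hx₀⟩ := hz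
    have hne : ∀ x ∈ I, h x ≠ 0 := no_zero hIopen hconv hA2 hd2 hd3 hode hx₀I hx₀
    obtain ⟨A, B, hAB⟩ := W_affine hIopen hconv hd2 hd3 hode hne hm
    have hWpos : ∀ x ∈ I, 0 < A + B * x := by
      intro x hx
      have h0 : (0:ℝ) < h x ^ 2 := by have := hne x hx; positivity
      have := Real.rpow_pos_of_pos h0 (-(1/3):ℝ)
      rw [hAB x hx] at this; exact this
    have hsq : ∀ x ∈ I, h x ^ 2 * (A + B * x) ^ 3 = 1 := by
      intro x hx
      have h0 : (0:ℝ) < h x ^ 2 := by have := hne x hx; positivity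
      have h1 : ((h x ^ 2) ^ (-(1/3):ℝ)) ^ (-3:ℝ) = (A + B*x) ^ (-3:ℝ) := by
        rw [hAB x hx]
      rw [← Real.rpow_mul h0.le, show (-(1/3):ℝ)*(-3) = 1 by norm_num, Real.rpow_one] at h1
      have h2 : (A + B*x) ^ (-3:ℝ) = ((A+B*x)^(3:ℕ))⁻¹ := by
        rw [show (-3:ℝ) = -(3:ℕ) by norm_num, Real.rpow_neg (hWpos x hx).le,
          Real.rpow_natCast]
      rw [h2] at h1
      have hne3 : (A+B*x)^3 ≠ 0 := pow_ne_zero _ (hWpos x hx).ne'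
      field_simp at h1
      rw [h1]; exact one_div_mul_cancel hne3
    have hsign : ∀ x ∈ I, 0 < h x * h m :=
      sign_const hIopen hpre (fun x hx => (hA2 x hx).continuousAt) hne hm
    by_cases hB : B = 0
    · -- h constant : f quadratic
      left
      have hconst : ∀ x ∈ I, h x = h m := by
        intro x hx
        have h1 := hsq x hx
        have h2 := hsq m hm
        rw [hB] at h1 h2
        have hfac : (h x - h m) * (h x + h m) = 0 := by
          have hA3 : (A + 0 * x)^3 ≠ 0 := by
            intro hc
            rw [hc] at h1; simp at h1
          have hxm : h x^2 = h m^2 := by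
            have hzero : (h x^2 - h m^2) * (A + 0*x)^3 = 0 := by
              have e : (A + 0*m)^3 = (A + 0*x)^3 := by ring
              rw [e] at h2
              linear_combination h1 - h2
            rcases mul_eq_zero.mp hzero with hc|hc
            · linarith
            · exact absurd hc hA3
          linear_combination hxm
        rcases mul_eq_zero.mp hfac with hc | hc
        · linarith
        · exfalso
          have := hsign x hx
          have hm2 : 0 < h m ^ 2 := by have := hne m hm; positivity
          nlinarith
      set k := h m with hk
      refine ⟨k/2, deriv f m - k*m, f m - k/2*m^2 - (deriv f m - k*m)*m, fun x hx => ?_⟩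
      have hgd : ∀ y ∈ I, HasDerivAt (fun t => f t - k/2*t^2) (deriv f y - k*y) y := by
        intro y hy
        have := (hd0 y hy).fun_sub ((hasDerivAt_pow 2 y).const_mul (k/2))
        refine this.congr_deriv ?_
        push_cast; ring
      have hg1d : ∀ y ∈ I, HasDerivAt (fun t => deriv f t - k*t) 0 y := by
        intro y hy
        have := (hd1 y hy).fun_sub ((hasDerivAt_id y).const_mul k)
        simpa [hconst y hy] using this
      have key := affine_on_of_hasDerivAt hIopen hconv hgd hg1d hm x hx
      try simp only at key
      linear_combination key
    · -- the square-root case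
      right
      set σ : ℝ := if 0 < h m then 1 else -1 with hσdef
      have hσ2 : σ^2 = 1 := by by_cases h0 : 0 < h m <;> simp [hσdef, h0]
      have hσ0 : σ ≠ 0 := by intro hc; rw [hc] at hσ2; norm_num at hσ2
      have hs_eq : ∀ x ∈ I, h x * (Real.sqrt (B*x+A) * (B*x+A)) = σ := by
        intro x hx
        have hu : 0 < B*x+A := by have := hWpos x hx; linarith
        have hum : 0 < B*m+A := by have := hWpos m hm; linarith
        have hS : 0 < Real.sqrt (B*x+A) := Real.sqrt_pos.mpr hu
        have hSm : 0 < Real.sqrt (B*m+A) := Real.sqrt_pos.mpr hum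
        have hS2 : Real.sqrt (B*x+A) ^ 2 = B*x+A := Real.sq_sqrt hu.le
        have hSm2 : Real.sqrt (B*m+A) ^ 2 = B*m+A := Real.sq_sqrt hum.le
        have hx2 : (h x * (Real.sqrt (B*x+A) * (B*x+A)))^2 = 1 := by
          have := hsq x hx
          have e : (A + B*x) = (B*x+A) := by ring
          rw [e] at this
          nlinarith [this, hS2]
        have hm2 : (h m * (Real.sqrt (B*m+A) * (B*m+A)))^2 = 1 := by
          have := hsq m hm
          have e : (A + B*m) = (B*m+A) := by ring
          rw [e] at this
          nlinarith [this, hSm2]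
        have hsm_eq : h m * (Real.sqrt (B*m+A) * (B*m+A)) = σ := by
          refine pm_eq hm2 hσ2 ?_
          by_cases h0 : 0 < h m
          · simp only [hσdef, if_pos h0, mul_one]
            exact mul_pos h0 (mul_pos hSm hum)
          · have hmneg : h m < 0 := lt_of_le_of_ne (not_lt.mp h0) (hne m hm)
            simp only [hσdef, if_neg h0]
            have : h m * (Real.sqrt (B*m+A) * (B*m+A)) < 0 :=
              mul_neg_of_neg_of_pos hmneg (mul_pos hSm hum)
            nlinarith
        refine (pm_eq hx2 hm2 ?_).trans hsm_eq
        have e : h x * (Real.sqrt (B*x+A) * (B*x+A)) * (h m * (Real.sqrt (B*m+A) * (B*m+A)))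
            = (h x * h m) * ((Real.sqrt (B*x+A) * (B*x+A)) * (Real.sqrt (B*m+A) * (B*m+A))) := by
          ring
        rw [e]
        exact mul_pos (hsign x hx) (mul_pos (mul_pos hS hu) (mul_pos hSm hum))
      set cc : ℝ := -4*σ/B^2 with hccdef
      have hcc0 : cc ≠ 0 := by
        simp only [hccdef]
        apply div_ne_zero _ (pow_ne_zero 2 hB)
        intro hc
        have : σ = 0 := by linarith
        exact hσ0 this
      have hgd : ∀ y ∈ I, HasDerivAt (fun t => f t - cc * Real.sqrt (B*t+A))
          (deriv f y - cc * (B / (2 * Real.sqrt (B*y+A)))) y := by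
        intro y hy
        have hu : 0 < B*y+A := by have := hWpos y hy; linarith
        have hlin : HasDerivAt (fun t => B*t+A) B y := by
          simpa using ((hasDerivAt_id y).const_mul B).add_const A
        exact (hd0 y hy).sub ((hlin.sqrt hu.ne').const_mul cc)
      have hg1d : ∀ y ∈ I, HasDerivAt (fun t => deriv f t - cc * (B / (2 * Real.sqrt (B*t+A)))) 0 y := by
        intro y hy
        have hu : 0 < B*y+A := by have := hWpos y hy; linarith
        have hS : 0 < Real.sqrt (B*y+A) := Real.sqrt_pos.mpr hu
        have hS2 : Real.sqrt (B*y+A) ^ 2 = B*y+A := Real.sq_sqrt hu.le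
        have hlin : HasDerivAt (fun t => B*t+A) B y := by
          simpa using ((hasDerivAt_id y).const_mul B).add_const A
        have hden : HasDerivAt (fun t => 2 * Real.sqrt (B*t+A)) (2 * (B / (2 * Real.sqrt (B*y+A)))) y :=
          (hlin.sqrt hu.ne').const_mul 2
        have hdiv : HasDerivAt (fun t => B / (2 * Real.sqrt (B*t+A)))
            ((0 * (2 * Real.sqrt (B*y+A)) - B * (2 * (B / (2 * Real.sqrt (B*y+A))))) / (2 * Real.sqrt (B*y+A))^2) y :=
          (hasDerivAt_const y B).div hden (by positivity)
        have H := (hd1 y hy).sub (hdiv.const_mul cc)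
        have hval : h y - cc * ((0 * (2 * Real.sqrt (B*y+A)) - B * (2 * (B / (2 * Real.sqrt (B*y+A))))) / (2 * Real.sqrt (B*y+A))^2) = 0 := by
          have hy_eq : h y = σ / (Real.sqrt (B*y+A) * (B*y+A)) := by
            rw [eq_div_iff (by positivity)]
            exact hs_eq y hy
          rw [hy_eq, hccdef]
          field_simp
          linear_combination (4*σ*B^2) * hS2
        rw [hval] at H
        exact H
      have key := affine_on_of_hasDerivAt hIopen hconv hgd hg1d hm
      refine ⟨cc, B, A, deriv f m - cc * (B / (2 * Real.sqrt (B*m+A))),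
        (f m - cc * Real.sqrt (B*m+A)) - (deriv f m - cc * (B / (2 * Real.sqrt (B*m+A)))) * m,
        hcc0, hB, fun x hx => by have := hWpos x hx; linarith, fun x hx => ?_⟩
      have k := key x hx
      try simp only at k
      linear_combination k
end

section
/- For all real numbers u₁, u₂ with 0 < u₁ < u₂ and either 2 < u₁ or u₂ < 2: ∫_{u₁}^{u₂} ((u − 1)·√((u − u₁)·(u₂ − u)))/(u·(u − 2)) du equals (π/2)·(u₁ + u₂ − √(u₁·u₂) − √((u₁ − 2)·(u₂ − 2)) − 2) in the case 2 < u₁, and equals (π/2)·(u₁ + u₂ − √(u₁·u₂) + √((u₁ − 2)·(u₂ − 2)) − 2) in the case u₂ < 2. -/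
open intervalIntegral

open Real Set MeasureTheory intervalIntegral

lemma intg (a b c : ℝ) (hab : a ≤ b) (hc : ∀ u ∈ Set.Icc a b, u - c ≠ 0) :
    IntervalIntegrable (fun u => Real.sqrt ((u-a)*(b-u))/(u-c)) MeasureTheory.volume a b := by
  apply ContinuousOn.intervalIntegrable
  rw [uIcc_of_le hab]
  apply ContinuousOn.div
  · exact (Real.continuous_sqrt.comp (by continuity)).continuousOn
  · fun_prop
  · exact hc

set_option maxHeartbeats 1600000 in
lemma key (a b c σ : ℝ) (hab : a < b)
    (hcase : (σ = 1 ∧ c < a) ∨ (σ = -1 ∧ b < c)) :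
    ∫ u in a..b, Real.sqrt ((u - a) * (b - u)) / (u - c)
      = Real.pi * ((a + b) / 2 - c - σ * Real.sqrt ((c - a) * (c - b))) := by
  have hr : (0:ℝ) < (b - a) / 2 := by linarith
  set r : ℝ := (b - a) / 2 with hrdef
  set s : ℝ := (a + b) / 2 with hsdef
  set D : ℝ := (c - a) * (c - b) with hDdef
  have hDpos : 0 < D := by
    rcases hcase with ⟨_, h⟩ | ⟨_, h⟩ <;> nlinarith
  have hσ2 : σ^2 = 1 := by rcases hcase with ⟨h,_⟩|⟨h,_⟩ <;> rw [h] <;> norm_num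
  have hσne : σ ≠ 0 := by intro h; rw [h] at hσ2; norm_num at hσ2
  have hvpos : ∀ u ∈ Icc a b, 0 < σ * (u - c) := by
    intro u hu
    rcases hcase with ⟨h1,h2⟩|⟨h1,h2⟩ <;> rw [h1] <;> rcases hu with ⟨hu1, hu2⟩ <;> nlinarith
  have hcne : ∀ u ∈ Icc a b, u - c ≠ 0 := by
    intro u hu h
    have := hvpos u hu
    rw [h] at this; simp at this
  set d := Real.sqrt D with hddef
  have hd : d^2 = D := Real.sq_sqrt hDpos.le
  have hdpos : 0 < d := Real.sqrt_pos.mpr hDpos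
  set F : ℝ → ℝ := fun u =>
    Real.sqrt ((u - a) * (b - u)) + (s - c) * Real.arcsin ((u - s) / r)
      + σ * d * Real.arcsin (D / (r * (u - c)) - (s - c) / r) with hFdef
  have hane : a - c ≠ 0 := hcne a ⟨le_refl a, hab.le⟩
  have hbne : b - c ≠ 0 := hcne b ⟨hab.le, le_refl b⟩
  -- continuity of F
  have hFcont : ContinuousOn F (Icc a b) := by
    apply ContinuousOn.add
    apply ContinuousOn.add
    · exact (Real.continuous_sqrt.comp (by continuity)).continuousOn
    · apply continuousOn_const.mul
      exact Real.continuous_arcsin.comp_continuousOn (by fun_prop)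
    · apply continuousOn_const.mul
      apply Real.continuous_arcsin.comp_continuousOn
      apply ContinuousOn.sub _ continuousOn_const
      apply continuousOn_const.div (by fun_prop)
      intro u hu
      exact mul_ne_zero hr.ne' (hcne u hu)
  -- derivative of F on Ioo
  have hderiv : ∀ u ∈ Ioo a b, HasDerivAt F (Real.sqrt ((u - a) * (b - u)) / (u - c)) u := by
    intro u hu
    obtain ⟨hu1, hu2⟩ := hu
    have hQpos : 0 < (u - a) * (b - u) := by nlinarith
    set t := Real.sqrt ((u - a) * (b - u)) with htdef
    have ht : t^2 = (u - a) * (b - u) := Real.sq_sqrt hQpos.le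
    have htpos : 0 < t := Real.sqrt_pos.mpr hQpos
    have hv : u - c ≠ 0 := hcne u ⟨hu1.le, hu2.le⟩
    have hσv : 0 < σ * (u - c) := hvpos u ⟨hu1.le, hu2.le⟩
    -- piece 1
    have hQ' : HasDerivAt (fun u => (u - a) * (b - u)) (a + b - 2*u) u := by
      have h := ((hasDerivAt_id u).sub_const a).mul ((hasDerivAt_const u b).sub (hasDerivAt_id u))
      simp only [id_eq] at h
      exact h.congr_deriv (by simp only [Pi.sub_apply, id_eq]; ring)
    have p1 : HasDerivAt (fun u => Real.sqrt ((u - a) * (b - u))) ((s - u)/t) u := by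
      have := (Real.hasDerivAt_sqrt hQpos.ne').comp u hQ'
      refine this.congr_deriv ?_
      rw [← htdef]
      field_simp
      ring
    -- piece 2
    have harg2 : 1 - ((u - s)/r)^2 = (t/r)^2 := by
      have h2 : (t/r)^2 = ((u - a) * (b - u))/r^2 := by rw [div_pow, ht]
      rw [h2]
      simp only [hsdef, hrdef]
      have hba : b - a ≠ 0 := sub_ne_zero.mpr (ne_of_gt hab)
      field_simp
      ring
    have hne2a : (u - s)/r ≠ -1 := by
      intro h
      rw [div_eq_iff hr.ne'] at h
      simp only [hsdef, hrdef] at h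
      linarith
    have hne2b : (u - s)/r ≠ 1 := by
      intro h
      rw [div_eq_iff hr.ne'] at h
      simp only [hsdef, hrdef] at h
      linarith
    have p2 : HasDerivAt (fun u => (s - c) * Real.arcsin ((u - s) / r)) ((s - c)/t) u := by
      have hin : HasDerivAt (fun u : ℝ => (u - s)/r) (1/r) u := by
        have := ((hasDerivAt_id u).sub_const s).div_const r
        exact this
      have := ((Real.hasDerivAt_arcsin hne2a hne2b).comp u hin).const_mul (s - c)
      refine this.congr_deriv ?_
      rw [harg2, Real.sqrt_sq (by positivity)]
      field_simp
    -- piece 3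
    set g : ℝ → ℝ := fun u => D / (r * (u - c)) - (s - c) / r with hgdef
    have hg2 : 1 - (g u)^2 = D * ((u - a) * (b - u)) / (r * (u - c))^2 := by
      simp only [hgdef]
      field_simp
      ring
    have hgsq : (g u)^2 < 1 := by
      have hne : r * (u - c) ≠ 0 := mul_ne_zero hr.ne' hv
      have h2 : 0 < (r * (u - c))^2 := (sq_nonneg _).lt_of_ne' (pow_ne_zero 2 hne)
      have h1 : 0 < D * ((u - a) * (b - u)) / (r * (u - c))^2 :=
        div_pos (mul_pos hDpos hQpos) h2
      rw [← hg2] at h1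
      linarith
    have hgne1 : g u ≠ -1 := by intro h; rw [h] at hgsq; norm_num at hgsq
    have hgne2 : g u ≠ 1 := by intro h; rw [h] at hgsq; norm_num at hgsq
    have hsqrtg : Real.sqrt (1 - (g u)^2) = d * t / (r * (σ * (u - c))) := by
      have h2 : (d * t / (r * (σ * (u - c))))^2 = D * ((u - a) * (b - u)) / (r * (u - c))^2 := by
        rw [div_pow, mul_pow, hd, ht, mul_pow, mul_pow, hσ2]
        ring
      rw [hg2, ← h2, Real.sqrt_sq (by positivity)]
    have p3 : HasDerivAt (fun u => σ * d * Real.arcsin (g u)) (-D/((u - c)*t)) u := by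
      have hin0 : HasDerivAt (fun u : ℝ => r * (u - c)) r u := by
        have := ((hasDerivAt_id u).sub_const c).const_mul r
        exact this.congr_deriv (by ring)
      have hin : HasDerivAt g (D * (-r / (r * (u - c))^2)) u := by
        have h := ((hin0.inv (mul_ne_zero hr.ne' hv)).const_mul D).sub_const ((s - c)/r)
        simp only [div_eq_mul_inv] at h ⊢
        exact h
      have h := ((Real.hasDerivAt_arcsin hgne1 hgne2).comp u hin).const_mul (σ * d)
      refine h.congr_deriv ?_
      rw [hsqrtg, one_div_div]
      rcases hcase with ⟨hσ1, _⟩ | ⟨hσ1, _⟩ <;> rw [hσ1] <;>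
        field_simp <;> ring
    have := (p1.add p2).add p3
    refine this.congr_deriv ?_
    rw [eq_comm, ← add_div, div_add_div _ _ htpos.ne' (mul_ne_zero hv htpos.ne'),
      div_eq_div_iff hv (mul_ne_zero htpos.ne' (mul_ne_zero hv htpos.ne'))]
    simp only [hsdef, hDdef]
    linear_combination (t * (u - c)) * ht
  -- main computation
  have hint : IntervalIntegrable (fun u => Real.sqrt ((u - a) * (b - u)) / (u - c))
      MeasureTheory.volume a b := intg a b c hab.le hcne
  have heval := intervalIntegral.integral_eq_sub_of_hasDeriv_right_of_le hab.le hFcont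
    (fun x hx => (hderiv x hx).hasDerivWithinAt) hint
  rw [heval]
  have hFa : F a = (s - c) * (-(Real.pi/2)) + σ * d * (Real.pi/2) := by
    simp only [hFdef]
    rw [show (a - a) * (b - a) = 0 by ring, Real.sqrt_zero,
      show (a - s)/r = -1 by rw [div_eq_iff hr.ne']; simp only [hsdef, hrdef]; ring,
      show D / (r * (a - c)) - (s - c) / r = 1 by
        rw [div_sub_div _ _ (mul_ne_zero hr.ne' hane) hr.ne', div_eq_one_iff_eq
          (mul_ne_zero (mul_ne_zero hr.ne' hane) hr.ne')]
        simp only [hDdef, hsdef, hrdef]; ring,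
      Real.arcsin_neg_one, Real.arcsin_one]
    ring
  have hFb : F b = (s - c) * (Real.pi/2) + σ * d * (-(Real.pi/2)) := by
    simp only [hFdef]
    rw [show (b - a) * (b - b) = 0 by ring, Real.sqrt_zero,
      show (b - s)/r = 1 by rw [div_eq_iff hr.ne']; simp only [hsdef, hrdef]; ring,
      show D / (r * (b - c)) - (s - c) / r = -1 by
        rw [div_sub_div _ _ (mul_ne_zero hr.ne' hbne) hr.ne', div_eq_iff
          (mul_ne_zero (mul_ne_zero hr.ne' hbne) hr.ne')]
        simp only [hDdef, hsdef, hrdef]; ring,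
      Real.arcsin_neg_one, Real.arcsin_one]
    ring
  rw [hFa, hFb]
  ring

/-- **integral 𝓘₂.** For `0 < u₁ < u₂` with either `2 < u₁` or `u₂ < 2`,
`∫_{u₁}^{u₂} (u − 1)√((u − u₁)(u₂ − u))/(u(u − 2)) du` equals
`(π/2)(u₁ + u₂ − √(u₁u₂) − √((u₁ − 2)(u₂ − 2)) − 2)` when `2 < u₁`, and
`(π/2)(u₁ + u₂ − √(u₁u₂) + √((u₁ − 2)(u₂ − 2)) − 2)` when `u₂ < 2`. -/
theorem stmt_8 (u₁ u₂ : ℝ) (h0 : 0 < u₁) (h12 : u₁ < u₂) :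
    (2 < u₁ →
      ∫ u in u₁..u₂, (u - 1) * Real.sqrt ((u - u₁) * (u₂ - u)) / (u * (u - 2))
        = (Real.pi / 2) *
            (u₁ + u₂ - Real.sqrt (u₁ * u₂) - Real.sqrt ((u₁ - 2) * (u₂ - 2)) - 2)) ∧
    (u₂ < 2 →
      ∫ u in u₁..u₂, (u - 1) * Real.sqrt ((u - u₁) * (u₂ - u)) / (u * (u - 2))
        = (Real.pi / 2) *
            (u₁ + u₂ - Real.sqrt (u₁ * u₂) + Real.sqrt ((u₁ - 2) * (u₂ - 2)) - 2)) := by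
  have hi0 : IntervalIntegrable (fun u => Real.sqrt ((u - u₁) * (u₂ - u)) / (u - 0))
      MeasureTheory.volume u₁ u₂ :=
    intg u₁ u₂ 0 h12.le (fun u hu => by have := hu.1; intro h; simp at h; linarith)
  have key0 := key u₁ u₂ 0 1 h12 (Or.inl ⟨rfl, h0⟩)
  constructor
  · intro h2
    have key2 := key u₁ u₂ 2 1 h12 (Or.inl ⟨rfl, h2⟩)
    have hi2 : IntervalIntegrable (fun u => Real.sqrt ((u - u₁) * (u₂ - u)) / (u - 2))
        MeasureTheory.volume u₁ u₂ :=
      intg u₁ u₂ 2 h12.le (fun u hu h => by have h' := sub_eq_zero.mp h; linarith [hu.1])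
    have hcg : (∫ u in u₁..u₂, (u - 1) * Real.sqrt ((u - u₁) * (u₂ - u)) / (u * (u - 2)))
        = ∫ u in u₁..u₂, (1/2) * (Real.sqrt ((u - u₁) * (u₂ - u)) / (u - 0)
            + Real.sqrt ((u - u₁) * (u₂ - u)) / (u - 2)) := by
      apply intervalIntegral.integral_congr
      intro u hu
      rw [Set.uIcc_of_le h12.le] at hu
      obtain ⟨hu1, hu2⟩ := hu
      have h0u : u ≠ 0 := by intro h; rw [h] at hu1; linarith
      have h2u : u - 2 ≠ 0 := by intro h; have := sub_eq_zero.mp h; linarith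
      dsimp only
      rw [sub_zero]
      field_simp
      ring
    rw [hcg, intervalIntegral.integral_const_mul, intervalIntegral.integral_add hi0 hi2,
      key0, key2, show (0 - u₁) * (0 - u₂) = u₁ * u₂ by ring,
      show (2 - u₁) * (2 - u₂) = (u₁ - 2) * (u₂ - 2) by ring]
    ring
  · intro h2
    have key2 := key u₁ u₂ 2 (-1) h12 (Or.inr ⟨rfl, h2⟩)
    have hi2 : IntervalIntegrable (fun u => Real.sqrt ((u - u₁) * (u₂ - u)) / (u - 2))
        MeasureTheory.volume u₁ u₂ :=
      intg u₁ u₂ 2 h12.le (fun u hu h => by have h' := sub_eq_zero.mp h; linarith [hu.2])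
    have hcg : (∫ u in u₁..u₂, (u - 1) * Real.sqrt ((u - u₁) * (u₂ - u)) / (u * (u - 2)))
        = ∫ u in u₁..u₂, (1/2) * (Real.sqrt ((u - u₁) * (u₂ - u)) / (u - 0)
            + Real.sqrt ((u - u₁) * (u₂ - u)) / (u - 2)) := by
      apply intervalIntegral.integral_congr
      intro u hu
      rw [Set.uIcc_of_le h12.le] at hu
      obtain ⟨hu1, hu2⟩ := hu
      have h0u : u ≠ 0 := by intro h; rw [h] at hu1; linarith
      have h2u : u - 2 ≠ 0 := by intro h; have := sub_eq_zero.mp h; linarith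
      dsimp only
      rw [sub_zero]
      field_simp
      ring
    rw [hcg, intervalIntegral.integral_const_mul, intervalIntegral.integral_add hi0 hi2,
      key0, key2, show (0 - u₁) * (0 - u₂) = u₁ * u₂ by ring,
      show (2 - u₁) * (2 - u₂) = (u₁ - 2) * (u₂ - 2) by ring]
    ring
end

section
/- Let ω > 0, Λ > 0 and ξ > ωΛ be real numbers, and let 0 < r_p < r_a be the positive reals whose squares are the two roots of ω²u² − 2ξu + Λ² = 0 (so r_p² + r_a² = 2ξ/ω² and r_p²·r_a² = Λ²/ω²). Then the harmonic radial action satisfies (1/π)·∫_{r_p}^{r_a} √(2ξ − ω²r² − Λ²/r²) dr = ξ/(2ω) − Λ/2. -/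
open intervalIntegral

set_option maxHeartbeats 1000000

/-- **harmonic radial action.** For `ω > 0`, `Λ > 0`, `ξ > ωΛ`, and
`0 < r_p < r_a` the positive reals whose squares are the two roots of
`ω²u² − 2ξu + Λ² = 0`, the harmonic radial action satisfies
`(1/π) ∫_{r_p}^{r_a} √(2ξ − ω²r² − Λ²/r²) dr = ξ/(2ω) − Λ/2`. -/
theorem stmt_11 (ω Λ ξ : ℝ) (hω : 0 < ω) (hΛ : 0 < Λ) (hξ : ω * Λ < ξ)
    (rp ra : ℝ) (hrp : 0 < rp) (hlt : rp < ra)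
    (hroot_p : ω ^ 2 * (rp ^ 2) ^ 2 - 2 * ξ * rp ^ 2 + Λ ^ 2 = 0)
    (hroot_a : ω ^ 2 * (ra ^ 2) ^ 2 - 2 * ξ * ra ^ 2 + Λ ^ 2 = 0) :
    (1 / Real.pi) * ∫ r in rp..ra, Real.sqrt (2 * ξ - ω ^ 2 * r ^ 2 - Λ ^ 2 / r ^ 2)
      = ξ / (2 * ω) - Λ / 2 := by
  have hra : 0 < ra := hrp.trans hlt
  have hBA : rp ^ 2 < ra ^ 2 := by nlinarith
  have hd : (0:ℝ) < ra ^ 2 - rp ^ 2 := by linarith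
  have hdne : ra ^ 2 - rp ^ 2 ≠ 0 := ne_of_gt hd
  have hsum : ω ^ 2 * (rp ^ 2 + ra ^ 2) = 2 * ξ := by
    have h : (ra ^ 2 - rp ^ 2) * (ω ^ 2 * (rp ^ 2 + ra ^ 2) - 2 * ξ) = 0 := by
      linear_combination hroot_a - hroot_p
    rcases mul_eq_zero.1 h with h1 | h1
    · exact absurd h1 hdne
    · linarith
  have hprod : ω ^ 2 * (rp ^ 2 * ra ^ 2) = Λ ^ 2 := by
    linear_combination ra ^ 2 * hsum - hroot_a
  set F : ℝ → ℝ := fun r => ω / 2 * (Real.sqrt ((ra ^ 2 - r ^ 2) * (r ^ 2 - rp ^ 2))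
      - Λ / ω * Real.arcsin (((ra ^ 2 + rp ^ 2) * r ^ 2 - 2 * (rp ^ 2 * ra ^ 2)) / (r ^ 2 * (ra ^ 2 - rp ^ 2)))
      + (ra ^ 2 + rp ^ 2) / 2 * Real.arcsin ((2 * r ^ 2 - ra ^ 2 - rp ^ 2) / (ra ^ 2 - rp ^ 2))) with hF
  have key : (∫ r in rp..ra, Real.sqrt (2 * ξ - ω ^ 2 * r ^ 2 - Λ ^ 2 / r ^ 2))
      = F ra - F rp := by
    apply integral_eq_sub_of_hasDerivAt_of_le hlt.le
    · -- continuity of F on Icc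
      apply ContinuousOn.mul continuousOn_const
      apply ContinuousOn.add
      apply ContinuousOn.sub
      · exact (((continuousOn_const.sub (continuousOn_pow 2)).mul
          ((continuousOn_pow 2).sub continuousOn_const)).sqrt)
      · apply ContinuousOn.mul continuousOn_const
        apply Real.continuous_arcsin.comp_continuousOn
        apply ContinuousOn.div
        · fun_prop
        · fun_prop
        · intro x hx
          have hx1 : rp ≤ x := hx.1
          have : 0 < x := lt_of_lt_of_le hrp hx1
          positivity
      · apply ContinuousOn.mul continuousOn_const
        apply Real.continuous_arcsin.comp_continuousOn
        fun_prop
    · -- derivative on Ioo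
      intro x hx
      obtain ⟨hx1, hx2⟩ := hx
      have hx0 : 0 < x := hrp.trans hx1
      have hxB : rp ^ 2 < x ^ 2 := by nlinarith
      have hxA : x ^ 2 < ra ^ 2 := by nlinarith
      have hP : 0 < (ra ^ 2 - x ^ 2) * (x ^ 2 - rp ^ 2) := by nlinarith
      set s := Real.sqrt ((ra ^ 2 - x ^ 2) * (x ^ 2 - rp ^ 2)) with hs
      have hs0 : 0 < s := Real.sqrt_pos.2 hP
      have hs2 : s ^ 2 = (ra ^ 2 - x ^ 2) * (x ^ 2 - rp ^ 2) := Real.sq_sqrt hP.le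
      -- derivative of the sqrt part
      have h1 : HasDerivAt (fun r : ℝ => ra ^ 2 - r ^ 2) (-(2 * x)) x := by
        simpa using (hasDerivAt_pow 2 x).const_sub (ra ^ 2)
      have h2 : HasDerivAt (fun r : ℝ => r ^ 2 - rp ^ 2) (2 * x) x := by
        simpa using (hasDerivAt_pow 2 x).sub_const (rp ^ 2)
      have hsqrt : HasDerivAt (fun r : ℝ => Real.sqrt ((ra ^ 2 - r ^ 2) * (r ^ 2 - rp ^ 2)))
          ((-(2 * x) * (x ^ 2 - rp ^ 2) + (ra ^ 2 - x ^ 2) * (2 * x)) / (2 * s)) x :=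
        (h1.mul h2).sqrt hP.ne'
      -- first arcsin argument
      set g1 : ℝ → ℝ := fun r => ((ra ^ 2 + rp ^ 2) * r ^ 2 - 2 * (rp ^ 2 * ra ^ 2)) / (r ^ 2 * (ra ^ 2 - rp ^ 2)) with hg1
      have hg1num : HasDerivAt (fun r : ℝ => (ra ^ 2 + rp ^ 2) * r ^ 2 - 2 * (rp ^ 2 * ra ^ 2))
          ((ra ^ 2 + rp ^ 2) * (2 * x)) x := by
        simpa using ((hasDerivAt_pow 2 x).const_mul (ra ^ 2 + rp ^ 2)).sub_const (2 * (rp ^ 2 * ra ^ 2))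
      have hg1den : HasDerivAt (fun r : ℝ => r ^ 2 * (ra ^ 2 - rp ^ 2)) (2 * x * (ra ^ 2 - rp ^ 2)) x := by
        simpa using (hasDerivAt_pow 2 x).mul_const (ra ^ 2 - rp ^ 2)
      have hg1d : HasDerivAt g1
          (((ra ^ 2 + rp ^ 2) * (2 * x) * (x ^ 2 * (ra ^ 2 - rp ^ 2)) -
            ((ra ^ 2 + rp ^ 2) * x ^ 2 - 2 * (rp ^ 2 * ra ^ 2)) * (2 * x * (ra ^ 2 - rp ^ 2))) / (x ^ 2 * (ra ^ 2 - rp ^ 2)) ^ 2) x :=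
        hg1num.div hg1den (by positivity)
      have hg1lt : g1 x < 1 := by
        rw [hg1, div_lt_one (by positivity)]
        nlinarith [mul_pos (show (0:ℝ) < rp ^ 2 by positivity) (sub_pos.2 hxA)]
      have hg1gt : -1 < g1 x := by
        rw [hg1, lt_div_iff₀ (by positivity)]
        nlinarith [mul_pos (show (0:ℝ) < ra ^ 2 by positivity) (sub_pos.2 hxB)]
      have harc1 : HasDerivAt (fun r => Real.arcsin (g1 r))
          (1 / Real.sqrt (1 - g1 x ^ 2) *
            (((ra ^ 2 + rp ^ 2) * (2 * x) * (x ^ 2 * (ra ^ 2 - rp ^ 2)) -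
            ((ra ^ 2 + rp ^ 2) * x ^ 2 - 2 * (rp ^ 2 * ra ^ 2)) * (2 * x * (ra ^ 2 - rp ^ 2))) / (x ^ 2 * (ra ^ 2 - rp ^ 2)) ^ 2)) x :=
        (Real.hasDerivAt_arcsin (ne_of_gt hg1gt) (ne_of_lt hg1lt)).comp x hg1d
      -- second arcsin argument
      set g2 : ℝ → ℝ := fun r => (2 * r ^ 2 - ra ^ 2 - rp ^ 2) / (ra ^ 2 - rp ^ 2) with hg2
      have hg2d : HasDerivAt g2 (2 * (2 * x) / (ra ^ 2 - rp ^ 2)) x := by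
        apply HasDerivAt.div_const
        simpa using (((hasDerivAt_pow 2 x).const_mul 2).sub_const (ra ^ 2)).sub_const (rp ^ 2)
      have hg2lt : g2 x < 1 := by
        rw [hg2, div_lt_one hd]
        linarith
      have hg2gt : -1 < g2 x := by
        rw [hg2, lt_div_iff₀ hd]
        linarith
      have harc2 : HasDerivAt (fun r => Real.arcsin (g2 r))
          (1 / Real.sqrt (1 - g2 x ^ 2) * (2 * (2 * x) / (ra ^ 2 - rp ^ 2))) x :=
        (Real.hasDerivAt_arcsin (ne_of_gt hg2gt) (ne_of_lt hg2lt)).comp x hg2d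
      -- assemble
      have hFder : HasDerivAt F
          (ω / 2 * ((-(2 * x) * (x ^ 2 - rp ^ 2) + (ra ^ 2 - x ^ 2) * (2 * x)) / (2 * s)
            - Λ / ω * (1 / Real.sqrt (1 - g1 x ^ 2) *
              (((ra ^ 2 + rp ^ 2) * (2 * x) * (x ^ 2 * (ra ^ 2 - rp ^ 2)) -
              ((ra ^ 2 + rp ^ 2) * x ^ 2 - 2 * (rp ^ 2 * ra ^ 2)) * (2 * x * (ra ^ 2 - rp ^ 2))) / (x ^ 2 * (ra ^ 2 - rp ^ 2)) ^ 2))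
            + (ra ^ 2 + rp ^ 2) / 2 * (1 / Real.sqrt (1 - g2 x ^ 2) * (2 * (2 * x) / (ra ^ 2 - rp ^ 2))))) x := by
        exact ((hsqrt.sub (harc1.const_mul (Λ / ω))).add (harc2.const_mul ((ra ^ 2 + rp ^ 2) / 2))).const_mul (ω / 2)
      convert hFder using 1
      case e'_4 => rfl
      case e'_5 => rfl
      -- now prove the integrand equals this derivative
      have e2 : Real.sqrt (1 - g2 x ^ 2) = 2 * s / (ra ^ 2 - rp ^ 2) := by
        have h : 1 - g2 x ^ 2 = (2 * s / (ra ^ 2 - rp ^ 2)) ^ 2 := by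
          have h' : (2 * s / (ra ^ 2 - rp ^ 2)) ^ 2 = 4 * ((ra ^ 2 - x ^ 2) * (x ^ 2 - rp ^ 2)) / (ra ^ 2 - rp ^ 2) ^ 2 := by
            rw [div_pow, mul_pow, hs2]; ring
          rw [h', hg2]
          field_simp
          ring
        rw [h, Real.sqrt_sq (by positivity)]
      have e1 : Real.sqrt (1 - g1 x ^ 2) = 2 * (Λ / ω) * s / (x ^ 2 * (ra ^ 2 - rp ^ 2)) := by
        have h : 1 - g1 x ^ 2 = (2 * (Λ / ω) * s / (x ^ 2 * (ra ^ 2 - rp ^ 2))) ^ 2 := by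
          have hΛω : (Λ / ω) ^ 2 = rp ^ 2 * ra ^ 2 := by
            rw [div_pow, div_eq_iff (by positivity)]
            linear_combination -hprod
          have h' : (2 * (Λ / ω) * s / (x ^ 2 * (ra ^ 2 - rp ^ 2))) ^ 2
              = 4 * (rp ^ 2 * ra ^ 2) * ((ra ^ 2 - x ^ 2) * (x ^ 2 - rp ^ 2)) / (x ^ 2 * (ra ^ 2 - rp ^ 2)) ^ 2 := by
            rw [div_pow, mul_pow, mul_pow, hs2, hΛω]; ring
          rw [h', hg1]
          field_simp
          ring
        rw [h, Real.sqrt_sq (by positivity)]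
      have eQ : Real.sqrt (2 * ξ - ω ^ 2 * x ^ 2 - Λ ^ 2 / x ^ 2) = ω / x * s := by
        have h : 2 * ξ - ω ^ 2 * x ^ 2 - Λ ^ 2 / x ^ 2
            = (ω / x) ^ 2 * ((ra ^ 2 - x ^ 2) * (x ^ 2 - rp ^ 2)) := by
          field_simp
          linear_combination (-(x^2))*hsum + hprod
        rw [h, Real.sqrt_mul (by positivity), Real.sqrt_sq (by positivity), hs]
      rw [eQ, e1, e2]
      have hxne : x ≠ 0 := ne_of_gt hx0
      have hsne : s ≠ 0 := ne_of_gt hs0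
      have hωne : ω ≠ 0 := ne_of_gt hω
      have hstep : ω / x * s = ω * ((ra ^ 2 - x ^ 2) * (x ^ 2 - rp ^ 2)) / (s * x) := by
        rw [← hs2]
        field_simp
      rw [hstep]
      field_simp
      ring
    · -- interval integrability
      apply ContinuousOn.intervalIntegrable
      apply ContinuousOn.sqrt
      apply ContinuousOn.sub
      · fun_prop
      · apply ContinuousOn.div continuousOn_const (by fun_prop)
        intro x hx
        rw [Set.uIcc_of_le hlt.le] at hx
        have : 0 < x := lt_of_lt_of_le hrp hx.1
        positivity
  rw [key]
  -- evaluate F at endpoints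
  have hπ : (0:ℝ) < Real.pi := Real.pi_pos
  have hFa : F ra = ω / 2 * (-(Λ / ω) * (Real.pi / 2) + (ra ^ 2 + rp ^ 2) / 2 * (Real.pi / 2)) := by
    simp only [hF]
    have h0 : (ra ^ 2 - ra ^ 2) * (ra ^ 2 - rp ^ 2) = 0 := by ring
    have hg1a : ((ra ^ 2 + rp ^ 2) * ra ^ 2 - 2 * (rp ^ 2 * ra ^ 2)) / (ra ^ 2 * (ra ^ 2 - rp ^ 2)) = 1 := by
      rw [div_eq_one_iff_eq (by positivity)]
      ring
    have hg2a : (2 * ra ^ 2 - ra ^ 2 - rp ^ 2) / (ra ^ 2 - rp ^ 2) = 1 := by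
      rw [div_eq_one_iff_eq hdne]; ring
    rw [h0, hg1a, hg2a, Real.sqrt_zero, Real.arcsin_one]
    ring
  have hFp : F rp = ω / 2 * (-(Λ / ω) * (-(Real.pi / 2)) + (ra ^ 2 + rp ^ 2) / 2 * (-(Real.pi / 2))) := by
    simp only [hF]
    have h0 : (ra ^ 2 - rp ^ 2) * (rp ^ 2 - rp ^ 2) = 0 := by ring
    have hg1p : ((ra ^ 2 + rp ^ 2) * rp ^ 2 - 2 * (rp ^ 2 * ra ^ 2)) / (rp ^ 2 * (ra ^ 2 - rp ^ 2)) = -1 := by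
      rw [div_eq_iff (by positivity)]; ring
    have hg2p : (2 * rp ^ 2 - ra ^ 2 - rp ^ 2) / (ra ^ 2 - rp ^ 2) = -1 := by
      rw [div_eq_iff hdne]; ring
    rw [h0, hg1p, hg2p, Real.sqrt_zero, Real.arcsin_neg_one]
    ring
  rw [hFa, hFp]
  have hωne : ω ≠ 0 := ne_of_gt hω
  field_simp
  linear_combination 2*hsum
end

section
/- Let μ > 0, b > 0, Λ > 0 and ξ < 0 be real numbers, and set ψ_he(r) = −μ/(b + √(b² + r²)). Suppose 0 < r_p < r_a are such that the radicand W(r) = 2(ξ − ψ_he(r)) − Λ²/r² satisfies W(r_p) = W(r_a) = 0 and W(r) > 0 for all r ∈ (r_p, r_a). Then the Hénon radial action satisfies (1/π)·∫_{r_p}^{r_a} √(W(r)) dr = μ/√(−2ξ) − (1/2)·(Λ + √(Λ² + 4bμ)). -/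
open intervalIntegral

open Real Set intervalIntegral

lemma key_int (α β : ℝ) (hα : 0 < α) (hαβ : α < β) :
    ∫ s in α..β, Real.sqrt ((s - α) * (β - s)) / s
      = Real.pi * ((α + β) / 2 - Real.sqrt (α * β)) := by
  have hβ : 0 < β := hα.trans hαβ
  have hd : 0 < β - α := by linarith
  set F : ℝ → ℝ := fun s =>
    Real.sqrt ((s - α) * (β - s))
      + ((α + β) / 2) * Real.arcsin ((2 * s - α - β) / (β - α))
      - Real.sqrt (α * β) * Real.arcsin (((α + β) * s - 2 * (α * β)) / ((β - α) * s))
    with hF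
  have hcont : ContinuousOn F (Icc α β) := by
    apply ContinuousOn.sub
    · apply ContinuousOn.add
      · exact (Real.continuous_sqrt.comp (by continuity)).continuousOn
      · apply ContinuousOn.mul continuousOn_const
        exact Real.continuous_arcsin.comp_continuousOn (by fun_prop)
    · apply ContinuousOn.mul continuousOn_const
      apply Real.continuous_arcsin.comp_continuousOn
      apply ContinuousOn.div (by fun_prop) (by fun_prop)
      intro x hx
      have : 0 < x := lt_of_lt_of_le hα hx.1
      positivity
  have hderiv : ∀ x ∈ Ioo α β, HasDerivAt F (Real.sqrt ((x - α) * (β - x)) / x) x := by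
    intro x hx
    obtain ⟨hx1, hx2⟩ := hx
    have hx0 : 0 < x := hα.trans hx1
    have hP : 0 < (x - α) * (β - x) := by nlinarith
    set p := Real.sqrt ((x - α) * (β - x)) with hp
    have hp0 : 0 < p := Real.sqrt_pos.mpr hP
    have hp2 : p ^ 2 = (x - α) * (β - x) := Real.sq_sqrt hP.le
    have hab : Real.sqrt (α * β) ^ 2 = α * β := Real.sq_sqrt (by positivity)
    have hab0 : 0 < Real.sqrt (α * β) := Real.sqrt_pos.mpr (by positivity)
    clear_value p
    -- term 1
    have h1 : HasDerivAt (fun s : ℝ => Real.sqrt ((s - α) * (β - s)))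
        ((α + β - 2 * x) / (2 * p)) x := by
      have hinner : HasDerivAt (fun s : ℝ => (s - α) * (β - s)) (α + β - 2 * x) x := by
        have := ((hasDerivAt_id x).sub_const α).mul ((hasDerivAt_const x β).sub (hasDerivAt_id x))
        refine this.congr_deriv ?_
        simp only [id_eq, Pi.sub_apply]; ring
      have := (Real.hasDerivAt_sqrt hP.ne').comp x hinner
      refine this.congr_deriv ?_
      rw [hp]
      have hpne : Real.sqrt ((x - α) * (β - x)) ≠ 0 := by rw [← hp]; exact hp0.ne'
      field_simp
    -- term 2
    have hu : ((2 * x - α - β) / (β - α)) ∈ Ioo (-1 : ℝ) 1 := by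
      constructor
      · rw [lt_div_iff₀ hd]; nlinarith
      · rw [div_lt_one hd]; nlinarith
    have hsq1 : Real.sqrt (1 - ((2 * x - α - β) / (β - α)) ^ 2) = 2 * p / (β - α) := by
      have hr : (2 * p / (β - α)) ^ 2 = 4 * ((x - α) * (β - x)) / (β - α) ^ 2 := by
        rw [div_pow, mul_pow, hp2]; ring_nf
      have h1 : 1 - ((2 * x - α - β) / (β - α)) ^ 2 = (2 * p / (β - α)) ^ 2 := by
        rw [hr]; field_simp; ring
      rw [h1, Real.sqrt_sq (by positivity)]
    have h2 : HasDerivAt (fun s : ℝ => ((α + β) / 2) *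
        Real.arcsin ((2 * s - α - β) / (β - α))) ((α + β) / (2 * p)) x := by
      have hlin : HasDerivAt (fun s : ℝ => 2 * s - α - β) 2 x := by
        have := (((hasDerivAt_id x).const_mul (2:ℝ)).sub_const α).sub_const β
        simpa using this
      have hinner : HasDerivAt (fun s : ℝ => (2 * s - α - β) / (β - α)) (2 / (β - α)) x :=
        hlin.div_const (β - α)
      have harc := (Real.hasDerivAt_arcsin (ne_of_gt hu.1) (ne_of_lt hu.2)).comp x hinner
      have := harc.const_mul ((α + β) / 2)
      refine this.congr_deriv ?_
      rw [hsq1]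
      field_simp
    -- term 3
    have hvlt : ((α + β) * x - 2 * (α * β)) / ((β - α) * x) < 1 := by
      rw [div_lt_one (by positivity)]; nlinarith
    have hvgt : (-1 : ℝ) < ((α + β) * x - 2 * (α * β)) / ((β - α) * x) := by
      rw [lt_div_iff₀ (by positivity)]; nlinarith
    have hsq2 : Real.sqrt (1 - (((α + β) * x - 2 * (α * β)) / ((β - α) * x)) ^ 2)
        = 2 * Real.sqrt (α * β) * p / ((β - α) * x) := by
      have hr : (2 * Real.sqrt (α * β) * p / ((β - α) * x)) ^ 2
          = 4 * (α * β) * ((x - α) * (β - x)) / ((β - α) * x) ^ 2 := by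
        rw [div_pow, mul_pow, mul_pow, hab, hp2]; ring_nf
      have h1 : 1 - (((α + β) * x - 2 * (α * β)) / ((β - α) * x)) ^ 2
          = (2 * Real.sqrt (α * β) * p / ((β - α) * x)) ^ 2 := by
        rw [hr]; field_simp; ring
      rw [h1, Real.sqrt_sq (by positivity)]
    have h3 : HasDerivAt (fun s : ℝ => Real.sqrt (α * β) *
        Real.arcsin (((α + β) * s - 2 * (α * β)) / ((β - α) * s))) (α * β / (x * p)) x := by
      have hnum : HasDerivAt (fun s : ℝ => (α + β) * s - 2 * (α * β)) (α + β) x := by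
        have := ((hasDerivAt_id x).const_mul (α + β)).sub_const (2 * (α * β))
        simpa using this
      have hden : HasDerivAt (fun s : ℝ => (β - α) * s) (β - α) x := by
        have := (hasDerivAt_id x).const_mul (β - α)
        simpa using this
      have hden0 : (β - α) * x ≠ 0 := by positivity
      have hinner := hnum.div hden hden0
      have harc := (Real.hasDerivAt_arcsin (ne_of_gt hvgt) (ne_of_lt hvlt)).comp x hinner
      have := harc.const_mul (Real.sqrt (α * β))
      refine this.congr_deriv ?_
      rw [hsq2]
      field_simp
      nlinarith [hab, hp0, hx0, hd, hab0]
    have htot : HasDerivAt F ((α + β - 2 * x) / (2 * p) + (α + β) / (2 * p) - α * β / (x * p)) x :=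
      (h1.add h2).sub h3
    convert htot using 1
    field_simp
    linear_combination 2 * hp2
  have hint : IntervalIntegrable (fun s => Real.sqrt ((s - α) * (β - s)) / s)
      MeasureTheory.volume α β := by
    apply ContinuousOn.intervalIntegrable
    rw [uIcc_of_le hαβ.le]
    apply ContinuousOn.div (by fun_prop) (by fun_prop)
    intro x hx; exact (lt_of_lt_of_le hα hx.1).ne'
  have := intervalIntegral.integral_eq_sub_of_hasDeriv_right_of_le hαβ.le hcont
    (fun x hx => (hderiv x hx).hasDerivWithinAt) hint
  rw [this]
  have hFα : F α = -((α + β) / 2) * (Real.pi / 2) + Real.sqrt (α * β) * (Real.pi / 2) := by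
    have e1 : (α - α) * (β - α) = 0 := by ring
    have e2 : (2 * α - α - β) / (β - α) = -1 := by
      rw [div_eq_iff hd.ne']; ring
    have e3 : ((α + β) * α - 2 * (α * β)) / ((β - α) * α) = -1 := by
      rw [div_eq_iff (by positivity)]; ring
    simp only [hF, e1, e2, e3, Real.sqrt_zero, Real.arcsin_neg_one]
    ring
  have hFβ : F β = ((α + β) / 2) * (Real.pi / 2) - Real.sqrt (α * β) * (Real.pi / 2) := by
    have e1 : (β - α) * (β - β) = 0 := by ring
    have e2 : (2 * β - α - β) / (β - α) = 1 := by
      rw [div_eq_iff hd.ne']; ring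
    have e3 : ((α + β) * β - 2 * (α * β)) / ((β - α) * β) = 1 := by
      rw [div_eq_iff (by positivity)]; ring
    simp only [hF, e1, e2, e3, Real.sqrt_zero, Real.arcsin_one]
    ring
  rw [hFα, hFβ]
  ring

lemma key_int' (α β c : ℝ) (hc : c < α) (hαβ : α < β) :
    ∫ s in α..β, Real.sqrt ((s - α) * (β - s)) / (s - c)
      = Real.pi * ((α + β) / 2 - c - Real.sqrt ((α - c) * (β - c))) := by
  have h := key_int (α - c) (β - c) (by linarith) (by linarith)
  have heq : ∫ s in α..β, Real.sqrt ((s - α) * (β - s)) / (s - c)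
      = ∫ x in α - c..β - c, Real.sqrt ((x - (α - c)) * ((β - c) - x)) / x := by
    rw [← intervalIntegral.integral_comp_sub_right
      (fun x => Real.sqrt ((x - (α - c)) * ((β - c) - x)) / x) c]
    apply intervalIntegral.integral_congr
    intro x _
    have e1 : x - c - (α - c) = x - α := by ring
    have e2 : β - c - (x - c) = β - x := by ring
    simp only [e1, e2]
  rw [heq, h]
  ring


set_option maxHeartbeats 1000000 in
/-- **Hénon radial action.** For the Hénon isochrone potential
`ψ_he(r) = −μ/(b + √(b² + r²))` with `μ, b > 0`, an orbit of energy `ξ < 0` and angular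
momentum `Λ > 0` with periastron `r_p` and apoastron `r_a` (zeros of the radicand
`W(r) = 2(ξ − ψ_he(r)) − Λ²/r²`, positive in between) has radial action
`(1/π) ∫_{r_p}^{r_a} √(W(r)) dr = μ/√(−2ξ) − (1/2)(Λ + √(Λ² + 4bμ))`. -/
theorem stmt_12 (μ b Λ ξ : ℝ) (hμ : 0 < μ) (hb : 0 < b) (hΛ : 0 < Λ) (hξ : ξ < 0)
    (rp ra : ℝ) (hrp : 0 < rp) (hlt : rp < ra)
    (W : ℝ → ℝ)
    (hW : ∀ r : ℝ, W r = 2 * (ξ - (-μ / (b + Real.sqrt (b ^ 2 + r ^ 2)))) - Λ ^ 2 / r ^ 2)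
    (hWp : W rp = 0) (hWa : W ra = 0)
    (hWpos : ∀ r ∈ Set.Ioo rp ra, 0 < W r) :
    (1 / Real.pi) * ∫ r in rp..ra, Real.sqrt (W r)
      = μ / Real.sqrt (-2 * ξ) - (1 / 2) * (Λ + Real.sqrt (Λ ^ 2 + 4 * b * μ)) := by
  have hra : 0 < ra := hrp.trans hlt
  set g : ℝ → ℝ := fun r => b + Real.sqrt (b ^ 2 + r ^ 2) with hg
  -- basic facts about g
  have hq2 : ∀ r : ℝ, Real.sqrt (b ^ 2 + r ^ 2) ^ 2 = b ^ 2 + r ^ 2 :=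
    fun r => Real.sq_sqrt (by positivity)
  have hqb : ∀ r : ℝ, 0 < r → b < Real.sqrt (b ^ 2 + r ^ 2) := by
    intro r hr
    have : b = Real.sqrt (b ^ 2) := by rw [Real.sqrt_sq hb.le]
    rw [this]
    apply Real.sqrt_lt_sqrt (by positivity)
    nlinarith
  have hg2b : ∀ r : ℝ, 0 < r → 2 * b < g r := by
    intro r hr; have := hqb r hr; simp only [hg]; linarith
  have hgr2 : ∀ r : ℝ, g r * (g r - 2 * b) = r ^ 2 := by
    intro r
    have := hq2 r
    simp only [hg]
    nlinarith
  have hgmono : ∀ x y : ℝ, 0 ≤ x → x ≤ y → g x ≤ g y := by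
    intro x y hx hxy
    simp only [hg]
    have : Real.sqrt (b ^ 2 + x ^ 2) ≤ Real.sqrt (b ^ 2 + y ^ 2) :=
      Real.sqrt_le_sqrt (by nlinarith)
    linarith
  have hgsmono : ∀ x y : ℝ, 0 ≤ x → x < y → g x < g y := by
    intro x y hx hxy
    simp only [hg]
    have : Real.sqrt (b ^ 2 + x ^ 2) < Real.sqrt (b ^ 2 + y ^ 2) :=
      Real.sqrt_lt_sqrt (by positivity) (by nlinarith)
    linarith
  set sp := g rp with hsp
  set sa := g ra with hsa
  have hsp2b : 2 * b < sp := hg2b rp hrp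
  have hsp0 : 0 < sp := by linarith
  have hspsa : sp < sa := hgsmono rp ra hrp.le hlt
  -- quadratic identity : W r * r ^ 2 = Qexp (g r)
  have hQ : ∀ r : ℝ, 0 < r →
      W r * r ^ 2 = 2 * ξ * (g r) ^ 2 + (2 * μ - 4 * b * ξ) * (g r) - (Λ ^ 2 + 4 * b * μ) := by
    intro r hr
    have hqr := hq2 r
    rw [hW r]
    simp only [hg]
    set q := Real.sqrt (b ^ 2 + r ^ 2) with hqdef
    have hq0 : 0 < q := by rw [hqdef]; positivity
    clear_value q
    have hbq : (0:ℝ) < b + q := by linarith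
    have hdiv : r ^ 2 / (b + q) = q - b := by
      rw [div_eq_iff hbq.ne']
      linear_combination -hqr
    have step : (2 * (ξ - (-μ / (b + q))) - Λ ^ 2 / r ^ 2) * r ^ 2
        = 2 * ξ * r ^ 2 + 2 * μ * (r ^ 2 / (b + q)) - Λ ^ 2 := by
      field_simp
      ring
    rw [step, hdiv]
    linear_combination (-2 * ξ) * hqr
  have hQp : 2 * ξ * sp ^ 2 + (2 * μ - 4 * b * ξ) * sp - (Λ ^ 2 + 4 * b * μ) = 0 := by
    have := hQ rp hrp; rw [hWp] at this; linarith [this]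
  have hQa : 2 * ξ * sa ^ 2 + (2 * μ - 4 * b * ξ) * sa - (Λ ^ 2 + 4 * b * μ) = 0 := by
    have := hQ ra hra; rw [hWa] at this; linarith [this]
  -- root relations
  have hsum : 2 * ξ * (sp + sa) = 4 * b * ξ - 2 * μ := by
    have hne : sp - sa ≠ 0 := by linarith
    have h : (sp - sa) * (2 * ξ * (sp + sa) - (4 * b * ξ - 2 * μ)) = 0 := by
      linear_combination hQp - hQa
    rcases mul_eq_zero.mp h with h' | h'
    · exact absurd h' hne
    · linarith
  have hprod : -2 * ξ * (sp * sa) = Λ ^ 2 + 4 * b * μ := by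
    linear_combination hQp - sp * hsum
  -- factored form
  have hfact : ∀ r : ℝ, 0 < r →
      W r * r ^ 2 = (-2 * ξ) * ((g r - sp) * (sa - g r)) := by
    intro r hr
    rw [hQ r hr]
    linear_combination (g r) * hsum + hprod
  -- sqrt formula on the interval
  have hsqrtW : ∀ r ∈ Set.uIcc rp ra,
      Real.sqrt (W r) = (r / Real.sqrt (b ^ 2 + r ^ 2)) •
        (Real.sqrt (-2 * ξ) * Real.sqrt ((g r - sp) * (sa - g r)) * (g r - b)
          / (g r * (g r - 2 * b))) := by
    intro r hr
    rw [Set.uIcc_of_le hlt.le] at hr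
    have hr0 : 0 < r := lt_of_lt_of_le hrp hr.1
    have hg0 : 2 * b < g r := hg2b r hr0
    have hfac : 0 ≤ (g r - sp) * (sa - g r) :=
      mul_nonneg (by linarith [hgmono rp r hrp.le hr.1]) (by linarith [hgmono r ra hr0.le hr.2])
    have hWr : W r = (-2 * ξ) * ((g r - sp) * (sa - g r)) / r ^ 2 := by
      have := hfact r hr0
      field_simp
      linarith [this]
    have hξ2 : (0:ℝ) ≤ -2 * ξ := by linarith
    have hgb : g r - b = Real.sqrt (b ^ 2 + r ^ 2) := by simp only [hg]; ring
    have hqpos : 0 < Real.sqrt (b ^ 2 + r ^ 2) := Real.sqrt_pos.mpr (by positivity)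
    have hynn : 0 ≤ Real.sqrt (-2 * ξ) * Real.sqrt ((g r - sp) * (sa - g r)) / r := by positivity
    have hWeq : W r = (Real.sqrt (-2 * ξ) * Real.sqrt ((g r - sp) * (sa - g r)) / r) ^ 2 := by
      rw [div_pow, mul_pow, Real.sq_sqrt hξ2, Real.sq_sqrt hfac]
      rw [eq_div_iff (by positivity)]
      exact hfact r hr0
    rw [hWeq, Real.sqrt_sq hynn]
    rw [smul_eq_mul, hgr2 r, hgb]
    field_simp
  -- substitution
  set f : ℝ → ℝ := fun u =>
    Real.sqrt (-2 * ξ) * Real.sqrt ((u - sp) * (sa - u)) * (u - b) / (u * (u - 2 * b)) with hf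
  have hderivg : ∀ x ∈ Set.uIcc rp ra, HasDerivAt g (x / Real.sqrt (b ^ 2 + x ^ 2)) x := by
    intro x _
    have hpos : (0:ℝ) < b ^ 2 + x ^ 2 := by positivity
    have hinner : HasDerivAt (fun y : ℝ => b ^ 2 + y ^ 2) (2 * x) x := by
      have := (hasDerivAt_pow 2 x).const_add (b ^ 2)
      simpa using this
    have hs := (Real.hasDerivAt_sqrt hpos.ne').comp x hinner
    have := hs.const_add b
    refine this.congr_deriv ?_
    have h0 : Real.sqrt (b ^ 2 + x ^ 2) ≠ 0 := by positivity
    field_simp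
  have hcontg' : ContinuousOn (fun x : ℝ => x / Real.sqrt (b ^ 2 + x ^ 2)) (Set.uIcc rp ra) := by
    apply Continuous.continuousOn
    apply Continuous.div continuous_id (by fun_prop)
    intro x
    have : (0:ℝ) < b ^ 2 + x ^ 2 := by positivity
    positivity
  have himg : g '' Set.uIcc rp ra ⊆ Set.Icc sp sa := by
    rintro _ ⟨x, hx, rfl⟩
    rw [Set.uIcc_of_le hlt.le] at hx
    exact ⟨hgmono rp x hrp.le hx.1, hgmono x ra (hrp.le.trans hx.1) hx.2⟩
  have hcontf : ContinuousOn f (g '' Set.uIcc rp ra) := by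
    apply ContinuousOn.mono _ himg
    apply ContinuousOn.div (by fun_prop)
    · fun_prop
    · intro u hu
      have h1 : 0 < u := by have := hu.1; linarith
      have h2 : 0 < u - 2 * b := by have := hu.1; linarith
      positivity
  have hsub : (∫ r in rp..ra, (r / Real.sqrt (b ^ 2 + r ^ 2)) • f (g r))
      = ∫ u in sp..sa, f u := by
    have := intervalIntegral.integral_comp_smul_deriv' hderivg hcontg' hcontf
    simpa [Function.comp] using this
  have hLHS : (∫ r in rp..ra, Real.sqrt (W r)) = ∫ u in sp..sa, f u := by
    rw [← hsub]
    apply intervalIntegral.integral_congr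
    intro r hr
    exact hsqrtW r hr
  -- split the integral
  have hint1 : IntervalIntegrable (fun u => Real.sqrt ((u - sp) * (sa - u)) / u)
      MeasureTheory.volume sp sa := by
    apply ContinuousOn.intervalIntegrable
    rw [Set.uIcc_of_le hspsa.le]
    apply ContinuousOn.div (by fun_prop) (by fun_prop)
    intro u hu; have := hu.1; intro h; rw [h] at this; linarith
  have hint2 : IntervalIntegrable (fun u => Real.sqrt ((u - sp) * (sa - u)) / (u - 2 * b))
      MeasureTheory.volume sp sa := by
    apply ContinuousOn.intervalIntegrable
    rw [Set.uIcc_of_le hspsa.le]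
    apply ContinuousOn.div (by fun_prop) (by fun_prop)
    intro u hu; have := hu.1; intro h; have : u = 2 * b := by linarith
    linarith [hu.1]
  have hsplit : (∫ u in sp..sa, f u)
      = Real.sqrt (-2 * ξ) * (1 / 2) *
        ((∫ u in sp..sa, Real.sqrt ((u - sp) * (sa - u)) / u)
          + ∫ u in sp..sa, Real.sqrt ((u - sp) * (sa - u)) / (u - 2 * b)) := by
    rw [← intervalIntegral.integral_add hint1 hint2, ← intervalIntegral.integral_const_mul]
    apply intervalIntegral.integral_congr
    intro u hu
    rw [Set.uIcc_of_le hspsa.le] at hu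
    have h1 : 0 < u := by have := hu.1; linarith
    have h2 : 0 < u - 2 * b := by have := hu.1; linarith
    simp only [hf]
    field_simp
    ring
  -- evaluate the two integrals
  have hI1 := key_int sp sa hsp0 hspsa
  have hI2 := key_int' sp sa (2 * b) hsp2b hspsa
  -- sqrt values
  have hT0 : 0 < Real.sqrt (-2 * ξ) := Real.sqrt_pos.mpr (by linarith)
  have hT2 : Real.sqrt (-2 * ξ) ^ 2 = -2 * ξ := Real.sq_sqrt (by linarith)
  have hv1 : Real.sqrt (sp * sa) = Real.sqrt (Λ ^ 2 + 4 * b * μ) / Real.sqrt (-2 * ξ) := by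
    have h : sp * sa = (Λ ^ 2 + 4 * b * μ) / (-2 * ξ) := by
      rw [eq_div_iff (by linarith : (-2 : ℝ) * ξ ≠ 0)]
      linarith [hprod]
    rw [h, Real.sqrt_div (by positivity)]
  have hv2 : Real.sqrt ((sp - 2 * b) * (sa - 2 * b)) = Λ / Real.sqrt (-2 * ξ) := by
    have h : (sp - 2 * b) * (sa - 2 * b) = Λ ^ 2 / (-2 * ξ) := by
      rw [eq_div_iff (by linarith : (-2 : ℝ) * ξ ≠ 0)]
      linear_combination hprod + 2 * b * hsum
    rw [h, Real.sqrt_div (by positivity), Real.sqrt_sq hΛ.le]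
  -- finish
  have hξne : ξ ≠ 0 := hξ.ne
  have hA : sp + sa = 2 * b - μ / ξ := by
    field_simp
    linear_combination hsum / 2
  rw [hLHS, hsplit, hI1, hI2, hv1, hv2, hA]
  have hπ : Real.pi ≠ 0 := Real.pi_ne_zero
  clear_value sp sa
  field_simp [hT0.ne']
  have hTne : Real.sqrt (-(2 * ξ)) ≠ 0 := by
    rw [show -(2 * ξ) = -2 * ξ by ring]; exact hT0.ne'
  have hT2' : Real.sqrt (-(2 * ξ)) ^ 2 = -(2 * ξ) := Real.sq_sqrt (by linarith)
  field_simp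
  linear_combination (-2 * μ) * hT2'
end

section
/- Let μ > 0, b > 0, Λ > 0 and ξ be real numbers, and set ψ_bo(r) = μ/(b + √(b² − r²)) for 0 < r < b. Suppose 0 < r_p < r_a < b are such that the radicand W(r) = 2(ξ − ψ_bo(r)) − Λ²/r² satisfies W(r_p) = W(r_a) = 0 and W(r) > 0 for all r ∈ (r_p, r_a) (this forces ξ > 0). Then the radial action of the bounded isochrone satisfies (1/π)·∫_{r_p}^{r_a} √(W(r)) dr = −μ/√(2ξ) + (1/2)·(√(Λ² + 4bμ) − Λ). -/
open intervalIntegral Real Set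

noncomputable def Phi (α β x : ℝ) : ℝ :=
  Real.sqrt ((x - α) * (β - x))
    + ((α + β) / 2) * Real.arcsin ((2 * x - α - β) / (β - α))
    - Real.sqrt (α * β) * Real.arcsin (((α + β) * x - 2 * α * β) / (x * (β - α)))

lemma hasDerivAt_Phi {α β x : ℝ} (hα : 0 < α) (hαβ : α < β) (hx : x ∈ Set.Ioo α β) :
    HasDerivAt (Phi α β) (Real.sqrt ((x - α) * (β - x)) / x) x := by
  obtain ⟨hx1, hx2⟩ := hx
  have hx0 : 0 < x := hα.trans hx1
  have hβ : 0 < β := hα.trans hαβ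
  have hP : 0 < (x - α) * (β - x) := by nlinarith
  have hba : 0 < β - α := by linarith
  have hsP : 0 < Real.sqrt ((x - α) * (β - x)) := Real.sqrt_pos.mpr hP
  have hsab : 0 < Real.sqrt (α * β) := Real.sqrt_pos.mpr (by positivity)
  have hq2 : Real.sqrt ((x - α) * (β - x)) ^ 2 = (x - α) * (β - x) := Real.sq_sqrt hP.le
  have hab2 : Real.sqrt (α * β) ^ 2 = α * β := Real.sq_sqrt (by positivity)
  -- sqrt part
  have h1 : HasDerivAt (fun y : ℝ => (y - α) * (β - y)) (α + β - 2 * x) x := by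
    have := ((hasDerivAt_id x).sub_const α).mul ((hasDerivAt_const x β).sub (hasDerivAt_id x))
    refine this.congr_deriv ?_; show (1:ℝ) * (β - x) + (x - α) * (0 - 1) = _; ring
  have hsqrt : HasDerivAt (fun y => Real.sqrt ((y - α) * (β - y)))
      ((α + β - 2 * x) / (2 * Real.sqrt ((x - α) * (β - x)))) x := h1.sqrt hP.ne'
  -- first arcsin
  have hw1 : HasDerivAt (fun y : ℝ => (2 * y - α - β) / (β - α)) (2 / (β - α)) x := by
    have := ((((hasDerivAt_id x).const_mul 2).sub_const α).sub_const β).div_const (β - α)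
    refine this.congr_deriv ?_; ring
  have hw1lt : (2 * x - α - β) / (β - α) < 1 := by
    rw [div_lt_one hba]; linarith
  have hw1gt : (-1 : ℝ) < (2 * x - α - β) / (β - α) := by
    rw [lt_div_iff₀ hba]; linarith
  have harc1 : HasDerivAt (fun y => Real.arcsin ((2 * y - α - β) / (β - α)))
      (1 / Real.sqrt (1 - ((2 * x - α - β) / (β - α)) ^ 2) * (2 / (β - α))) x :=
    (Real.hasDerivAt_arcsin (by linarith) (by linarith)).comp x hw1
  have e1 : Real.sqrt (1 - ((2 * x - α - β) / (β - α)) ^ 2)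
      = 2 * Real.sqrt ((x - α) * (β - x)) / (β - α) := by
    have r1 : (2 * Real.sqrt ((x - α) * (β - x)) / (β - α)) ^ 2
        = 4 * ((x - α) * (β - x)) / (β - α) ^ 2 := by
      rw [div_pow, mul_pow, hq2]; ring
    rw [show 1 - ((2 * x - α - β) / (β - α)) ^ 2
        = (2 * Real.sqrt ((x - α) * (β - x)) / (β - α)) ^ 2 by
      rw [r1]; field_simp; ring]
    exact Real.sqrt_sq (by positivity)
  -- second arcsin
  have hw2 : HasDerivAt (fun y : ℝ => ((α + β) * y - 2 * α * β) / (y * (β - α)))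
      (2 * α * β / (x ^ 2 * (β - α))) x := by
    have hnum : HasDerivAt (fun y : ℝ => (α + β) * y - 2 * α * β) (α + β) x := by
      have := ((hasDerivAt_id x).const_mul (α + β)).sub_const (2 * α * β)
      refine this.congr_deriv ?_; ring
    have hden : HasDerivAt (fun y : ℝ => y * (β - α)) (β - α) x := by
      have := (hasDerivAt_id x).mul_const (β - α)
      refine this.congr_deriv ?_; ring
    have := hnum.div hden (by positivity)
    refine this.congr_deriv ?_
    field_simp; ring
  have hw2lt : ((α + β) * x - 2 * α * β) / (x * (β - α)) < 1 := by
    rw [div_lt_one (by positivity)]; nlinarith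
  have hw2gt : (-1 : ℝ) < ((α + β) * x - 2 * α * β) / (x * (β - α)) := by
    rw [lt_div_iff₀ (by positivity)]; nlinarith
  have harc2 : HasDerivAt (fun y => Real.arcsin (((α + β) * y - 2 * α * β) / (y * (β - α))))
      (1 / Real.sqrt (1 - (((α + β) * x - 2 * α * β) / (x * (β - α))) ^ 2)
        * (2 * α * β / (x ^ 2 * (β - α)))) x :=
    (Real.hasDerivAt_arcsin (by linarith) (by linarith)).comp x hw2
  have e2 : Real.sqrt (1 - (((α + β) * x - 2 * α * β) / (x * (β - α))) ^ 2)
      = 2 * Real.sqrt (α * β) * Real.sqrt ((x - α) * (β - x)) / (x * (β - α)) := by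
    have r2 : (2 * Real.sqrt (α * β) * Real.sqrt ((x - α) * (β - x)) / (x * (β - α))) ^ 2
        = 4 * (α * β) * ((x - α) * (β - x)) / (x * (β - α)) ^ 2 := by
      rw [div_pow, mul_pow, mul_pow, hq2, hab2]; ring
    rw [show 1 - (((α + β) * x - 2 * α * β) / (x * (β - α))) ^ 2
        = (2 * Real.sqrt (α * β) * Real.sqrt ((x - α) * (β - x)) / (x * (β - α))) ^ 2 by
      rw [r2]; field_simp; ring]
    exact Real.sqrt_sq (by positivity)
  have total := (hsqrt.add (harc1.const_mul ((α + β) / 2))).sub (harc2.const_mul (Real.sqrt (α * β)))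
  refine total.congr_deriv ?_
  rw [e1, e2, one_div_div, one_div_div]
  set q := Real.sqrt ((x - α) * (β - x)) with hqdef
  set m := Real.sqrt (α * β) with hmdef
  field_simp
  ring_nf
  linear_combination (-2) * hq2

lemma Phi_right {α β : ℝ} (hα : 0 < α) (hαβ : α < β) :
    Phi α β β = Real.pi / 2 * ((α + β) / 2 - Real.sqrt (α * β)) := by
  have hβ : 0 < β := hα.trans hαβ
  have hba : (0:ℝ) < β - α := by linarith
  unfold Phi
  rw [show (2 * β - α - β) / (β - α) = 1 by rw [div_eq_one_iff_eq hba.ne']; ring]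
  rw [show ((α + β) * β - 2 * α * β) / (β * (β - α)) = 1 by
    rw [div_eq_one_iff_eq (by positivity)]; ring]
  rw [Real.arcsin_one, show β - β = 0 by ring, mul_zero, Real.sqrt_zero]
  ring

lemma Phi_left {α β : ℝ} (hα : 0 < α) (hαβ : α < β) :
    Phi α β α = -(Real.pi / 2) * ((α + β) / 2 - Real.sqrt (α * β)) := by
  have hba : (0:ℝ) < β - α := by linarith
  unfold Phi
  rw [show (2 * α - α - β) / (β - α) = -1 by rw [div_eq_iff hba.ne']; ring]
  rw [show ((α + β) * α - 2 * α * β) / (α * (β - α)) = -1 by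
    rw [div_eq_iff (by positivity : α * (β - α) ≠ 0)]; ring]
  rw [Real.arcsin_neg_one, show α - α = 0 by ring, zero_mul, Real.sqrt_zero]
  ring

lemma continuousOn_Phi {α β : ℝ} (hαβ : α < β) : ContinuousOn (Phi α β) (Set.Ioi 0) := by
  have hba : β - α ≠ 0 := sub_ne_zero.mpr hαβ.ne'
  unfold Phi
  apply ContinuousOn.sub
  · apply ContinuousOn.add
    · exact (Real.continuous_sqrt.comp (by fun_prop)).continuousOn
    · exact (continuous_const.mul (Real.continuous_arcsin.comp (by fun_prop))).continuousOn
  · apply ContinuousOn.mul continuousOn_const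
    apply Real.continuous_arcsin.comp_continuousOn
    apply ContinuousOn.div (by fun_prop) (by fun_prop)
    intro x hx
    exact mul_ne_zero (ne_of_gt hx) hba

set_option maxHeartbeats 1000000 in

/-- **bounded isochrone radial action.** For the bounded isochrone potential
`ψ_bo(r) = μ/(b + √(b² − r²))` on `(0,b)` with `μ, b > 0`, an orbit of energy `ξ` and
angular momentum `Λ > 0` with periastron `r_p` and apoastron `r_a`, `0 < r_p < r_a < b`,
(zeros of the radicand `W(r) = 2(ξ − ψ_bo(r)) − Λ²/r²`, positive in between — which
forces `ξ > 0`) has radial action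
`(1/π) ∫_{r_p}^{r_a} √(W(r)) dr = −μ/√(2ξ) + (1/2)(√(Λ² + 4bμ) − Λ)`. -/
theorem stmt_13 (μ b Λ ξ : ℝ) (hμ : 0 < μ) (hb : 0 < b) (hΛ : 0 < Λ)
    (rp ra : ℝ) (hrp : 0 < rp) (hlt : rp < ra) (hra : ra < b)
    (W : ℝ → ℝ)
    (hW : ∀ r : ℝ, W r = 2 * (ξ - μ / (b + Real.sqrt (b ^ 2 - r ^ 2))) - Λ ^ 2 / r ^ 2)
    (hWp : W rp = 0) (hWa : W ra = 0)
    (hWpos : ∀ r ∈ Set.Ioo rp ra, 0 < W r) :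
    (1 / Real.pi) * ∫ r in rp..ra, Real.sqrt (W r)
      = -μ / Real.sqrt (2 * ξ) + (1 / 2) * (Real.sqrt (Λ ^ 2 + 4 * b * μ) - Λ) := by
  have hrap : 0 < ra := hrp.trans hlt
  have hξ : 0 < ξ := by
    have h0 := hWpos ((rp + ra) / 2) ⟨by linarith, by linarith⟩
    rw [hW] at h0
    have hr0 : 0 < (rp + ra) / 2 := by linarith
    have hs0 : 0 < b + Real.sqrt (b ^ 2 - ((rp + ra) / 2) ^ 2) := by positivity
    have h2 : 0 < μ / (b + Real.sqrt (b ^ 2 - ((rp + ra) / 2) ^ 2)) := div_pos hμ hs0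
    have h3 : 0 < Λ ^ 2 / ((rp + ra) / 2) ^ 2 := by positivity
    linarith
  set c := Real.sqrt (2 * ξ) with hcdef
  have hc : 0 < c := Real.sqrt_pos.mpr (by linarith)
  have hc2 : c ^ 2 = 2 * ξ := Real.sq_sqrt (by linarith)
  set up := Real.sqrt (b ^ 2 - rp ^ 2) with hupdef
  set ua := Real.sqrt (b ^ 2 - ra ^ 2) with huadef
  have hup2 : up ^ 2 = b ^ 2 - rp ^ 2 := Real.sq_sqrt (by nlinarith)
  have hua2 : ua ^ 2 = b ^ 2 - ra ^ 2 := Real.sq_sqrt (by nlinarith)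
  have hupp : 0 < up := Real.sqrt_pos.mpr (by nlinarith)
  have huap : 0 < ua := Real.sqrt_pos.mpr (by nlinarith)
  have hupb : up < b := by nlinarith
  have huab : ua < b := by nlinarith
  have huau : ua < up := by nlinarith
  set sp := b + up with hspdef
  set sa := b + ua with hsadef
  clear_value c up ua
  clear_value sp sa
  have hsa0 : 0 < sa := by simp only [hsadef]; linarith
  have hsasp : sa < sp := by simp only [hsadef, hspdef]; linarith
  have hsp2b : sp < 2 * b := by simp only [hspdef]; linarith
  have hbsa : b < sa := by simp only [hsadef]; linarith
  have hrp2 : rp ^ 2 = sp * (2 * b - sp) := by simp only [hspdef]; linear_combination hup2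
  have hra2 : ra ^ 2 = sa * (2 * b - sa) := by simp only [hsadef]; linear_combination hua2
  -- root equations
  have hWp' := hWp; rw [hW, ← hupdef, ← hspdef] at hWp'
  have hWa' := hWa; rw [hW, ← huadef, ← hsadef] at hWa'
  have hQp : 2 * ξ * sp * (2 * b - sp) - 2 * μ * (2 * b - sp) - Λ ^ 2 = 0 := by
    have hsp0 : sp ≠ 0 := by simp only [hspdef]; positivity
    have h2b : (2:ℝ) * b - sp ≠ 0 := by linarith [hsp2b]
    have h2 := hWp'
    rw [hrp2] at h2
    rw [sub_eq_zero] at h2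
    field_simp at h2
    have h3 : sp * (2 * ξ * sp * (2 * b - sp) - 2 * μ * (2 * b - sp) - Λ ^ 2) = 0 := by
      linear_combination sp * h2
    rcases mul_eq_zero.mp h3 with h | h
    · exact absurd h hsp0
    · exact h
  have hQa : 2 * ξ * sa * (2 * b - sa) - 2 * μ * (2 * b - sa) - Λ ^ 2 = 0 := by
    have hsa0' : sa ≠ 0 := ne_of_gt hsa0
    have h2b : (2:ℝ) * b - sa ≠ 0 := by nlinarith [hsasp, hsp2b]
    have h2 := hWa'
    rw [hra2] at h2
    rw [sub_eq_zero] at h2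
    field_simp at h2
    have h3 : sa * (2 * ξ * sa * (2 * b - sa) - 2 * μ * (2 * b - sa) - Λ ^ 2) = 0 := by
      linear_combination sa * h2
    rcases mul_eq_zero.mp h3 with h | h
    · exact absurd h hsa0'
    · exact h
  have hμeq : μ = ξ * (sp + sa - 2 * b) := by
    have key : (sp - sa) * (2 * μ - 2 * ξ * (sp + sa - 2 * b)) = 0 := by
      linear_combination hQp - hQa
    rcases mul_eq_zero.mp key with h | h
    · exfalso; have := hsasp; linarith [sub_ne_zero.mpr (ne_of_gt hsasp)]
    · linarith
  have hΛeq : Λ ^ 2 = 2 * ξ * (2 * b - sp) * (2 * b - sa) := by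
    linear_combination -hQp - 2 * (2 * b - sp) * hμeq
  -- W formula
  have hWform : ∀ r, rp ≤ r → r ≤ ra →
      W r = 2 * ξ * ((b + Real.sqrt (b ^ 2 - r ^ 2)) - sa) * (sp - (b + Real.sqrt (b ^ 2 - r ^ 2))) / r ^ 2 := by
    intro r h1 h2
    have hr0 : 0 < r := lt_of_lt_of_le hrp h1
    have hu2 : Real.sqrt (b ^ 2 - r ^ 2) ^ 2 = b ^ 2 - r ^ 2 := Real.sq_sqrt (by nlinarith)
    rw [hW]
    set u := Real.sqrt (b ^ 2 - r ^ 2) with hudef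
    have hbu : (0:ℝ) < b + u := by positivity
    field_simp
    linear_combination (-2*r^2) * hμeq + (-(b+u)) * hΛeq + (2*ξ*(3*b+u-sp-sa)) * hu2
  -- the antiderivative
  set F : ℝ → ℝ := fun r => c / 2 * (Phi sa sp (b + Real.sqrt (b ^ 2 - r ^ 2))
      + Phi (2 * b - sp) (2 * b - sa) (b - Real.sqrt (b ^ 2 - r ^ 2))) with hFdef
  have hsp2b' : sp < 2 * b := hsp2b
  have h2bsp : 0 < 2 * b - sp := by linarith
  have h2bsa : 2 * b - sp < 2 * b - sa := by linarith
  have h2bsa0 : 0 < 2 * b - sa := by linarith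
  have hderiv : ∀ r ∈ Set.Ioo rp ra, HasDerivAt F (Real.sqrt (W r)) r := by
    intro r hr
    obtain ⟨h1, h2⟩ := hr
    have hr0 : 0 < r := hrp.trans h1
    have hrb : r < b := h2.trans hra
    have hbr2 : 0 < b ^ 2 - r ^ 2 := by
      have h' : 0 < (b - r) * (b + r) := mul_pos (by linarith) (by linarith)
      have h'' : (b - r) * (b + r) = b ^ 2 - r ^ 2 := by ring
      linarith
    have hu2 : Real.sqrt (b ^ 2 - r ^ 2) ^ 2 = b ^ 2 - r ^ 2 := Real.sq_sqrt hbr2.le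
    have hu0 : 0 < Real.sqrt (b ^ 2 - r ^ 2) := Real.sqrt_pos.mpr hbr2
    have hra2' : 0 ≤ b ^ 2 - ra ^ 2 := by
      have h' : 0 ≤ (b - ra) * (b + ra) := mul_nonneg (by linarith) (by linarith)
      have h'' : (b - ra) * (b + ra) = b ^ 2 - ra ^ 2 := by ring
      linarith
    have hr2' : 0 ≤ b ^ 2 - r ^ 2 := hbr2.le
    have huu1 : ua < Real.sqrt (b ^ 2 - r ^ 2) := by
      rw [huadef]
      apply Real.sqrt_lt_sqrt hra2'
      have h' : 0 < (ra - r) * (ra + r) := mul_pos (by linarith) (by linarith)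
      have h'' : (ra - r) * (ra + r) = (b ^ 2 - r ^ 2) - (b ^ 2 - ra ^ 2) := by ring
      linarith
    have huu2 : Real.sqrt (b ^ 2 - r ^ 2) < up := by
      rw [hupdef]
      apply Real.sqrt_lt_sqrt hr2'
      have h' : 0 < (r - rp) * (r + rp) := mul_pos (by linarith) (by linarith)
      have h'' : (r - rp) * (r + rp) = (b ^ 2 - rp ^ 2) - (b ^ 2 - r ^ 2) := by ring
      linarith
    set u := Real.sqrt (b ^ 2 - r ^ 2) with hudef
    have hub : u < b := by
      have h' : u ^ 2 < b ^ 2 := by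
        have := pow_pos hr0 2
        linarith [hu2]
      exact lt_of_pow_lt_pow_left₀ 2 hb.le h'
    have hin : HasDerivAt (fun y : ℝ => b ^ 2 - y ^ 2) (-(2 * r)) r := by
      have := (hasDerivAt_const r (b ^ 2)).sub (hasDerivAt_pow 2 r)
      refine this.congr_deriv ?_
      simp
    have hs1 : HasDerivAt (fun y : ℝ => b + Real.sqrt (b ^ 2 - y ^ 2)) (-r / u) r := by
      have := (hin.sqrt hbr2.ne').const_add b
      refine this.congr_deriv ?_
      rw [← hudef]
      field_simp
    have hs2 : HasDerivAt (fun y : ℝ => b - Real.sqrt (b ^ 2 - y ^ 2)) (r / u) r := by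
      have := (hin.sqrt hbr2.ne').const_sub b
      refine this.congr_deriv ?_
      rw [← hudef]
      field_simp
    have hx1 : b + u ∈ Set.Ioo sa sp :=
      ⟨by simp only [hsadef]; linarith, by simp only [hspdef]; linarith⟩
    have hx2 : b - u ∈ Set.Ioo (2 * b - sp) (2 * b - sa) :=
      ⟨by simp only [hspdef]; linarith, by simp only [hsadef]; linarith⟩
    have hd1 := (hasDerivAt_Phi hsa0 hsasp hx1).comp r hs1
    have hd2 := (hasDerivAt_Phi h2bsp h2bsa hx2).comp r hs2
    have total := (hd1.add hd2).const_mul (c / 2)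
    have hP1 : 0 < (b + u - sa) * (sp - (b + u)) :=
      mul_pos (by simp only [hsadef]; linarith) (by simp only [hspdef]; linarith)
    have hval : Real.sqrt (W r)
        = c / 2 * (Real.sqrt ((b + u - sa) * (sp - (b + u))) / (b + u) * (-r / u)
          + Real.sqrt ((b - u - (2 * b - sp)) * (2 * b - sa - (b - u))) / (b - u) * (r / u)) := by
      rw [hWform r h1.le h2.le, ← hudef]
      have harg : (b - u - (2 * b - sp)) * (2 * b - sa - (b - u))
          = (b + u - sa) * (sp - (b + u)) := by ring
      rw [harg]
      have hsqrtW : Real.sqrt (2 * ξ * (b + u - sa) * (sp - (b + u)) / r ^ 2)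
          = c * Real.sqrt ((b + u - sa) * (sp - (b + u))) / r := by
        rw [show 2 * ξ * (b + u - sa) * (sp - (b + u)) / r ^ 2
            = (c * Real.sqrt ((b + u - sa) * (sp - (b + u))) / r) ^ 2 by
          rw [div_pow, mul_pow, hc2, Real.sq_sqrt hP1.le]; ring]
        exact Real.sqrt_sq (by positivity)
      rw [hsqrtW]
      set q := Real.sqrt ((b + u - sa) * (sp - (b + u))) with hqdef
      have hbu1 : (0:ℝ) < b + u := by linarith
      have hbu2 : (0:ℝ) < b - u := by linarith
      field_simp
      linear_combination (-2 * q * u) * hu2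
    rw [hval]
    exact total
  -- continuity of F and of √W
  have hWcont : ContinuousOn (fun r => Real.sqrt (W r)) (Set.Icc rp ra) := by
    refine ContinuousOn.congr ?_ (fun r _ => by rw [hW])
    apply Real.continuous_sqrt.comp_continuousOn
    apply ContinuousOn.sub
    · apply ContinuousOn.mul continuousOn_const
      apply ContinuousOn.sub continuousOn_const
      exact ContinuousOn.div continuousOn_const (by fun_prop)
        (fun r _ => by positivity)
    · exact ContinuousOn.div continuousOn_const (by fun_prop)
        (fun r hr => pow_ne_zero 2 (ne_of_gt (lt_of_lt_of_le hrp hr.1)))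
  have hintg : IntervalIntegrable (fun r => Real.sqrt (W r)) MeasureTheory.volume rp ra := by
    apply ContinuousOn.intervalIntegrable
    rwa [Set.uIcc_of_le hlt.le]
  have hg1 : Continuous (fun r : ℝ => b + Real.sqrt (b ^ 2 - r ^ 2)) := by fun_prop
  have hg2 : Continuous (fun r : ℝ => b - Real.sqrt (b ^ 2 - r ^ 2)) := by fun_prop
  have hFcont : ContinuousOn F (Set.Icc rp ra) := by
    simp only [hFdef]
    apply ContinuousOn.mul continuousOn_const
    apply ContinuousOn.add
    · exact (continuousOn_Phi hsasp).comp hg1.continuousOn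
        (fun r _ => by simp only [Set.mem_Ioi]; positivity)
    · refine (continuousOn_Phi h2bsa).comp hg2.continuousOn (fun r hr => ?_)
      simp only [Set.mem_Ioi, sub_pos]
      have hr0 : 0 < r := lt_of_lt_of_le hrp hr.1
      refine (Real.sqrt_lt' hb).mpr ?_
      have := pow_pos hr0 2
      linarith
  have key := intervalIntegral.integral_eq_sub_of_hasDeriv_right_of_le hlt.le hFcont
      (fun x hx => (hderiv x hx).hasDerivWithinAt) hintg
  -- endpoint values
  have hFrp : F rp = c / 2 * (Real.pi / 2 * ((sa + sp) / 2 - Real.sqrt (sa * sp))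
      + -(Real.pi / 2) * ((2 * b - sp + (2 * b - sa)) / 2
        - Real.sqrt ((2 * b - sp) * (2 * b - sa)))) := by
    simp only [hFdef]
    rw [hupdef.symm, show b + up = sp from hspdef.symm,
      show b - up = 2 * b - sp from by simp only [hspdef]; ring]
    rw [Phi_right hsa0 hsasp, Phi_left h2bsp h2bsa]
  have hFra : F ra = c / 2 * (-(Real.pi / 2) * ((sa + sp) / 2 - Real.sqrt (sa * sp))
      + Real.pi / 2 * ((2 * b - sp + (2 * b - sa)) / 2
        - Real.sqrt ((2 * b - sp) * (2 * b - sa)))) := by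
    simp only [hFdef]
    rw [huadef.symm, show b + ua = sa from hsadef.symm,
      show b - ua = 2 * b - sa from by simp only [hsadef]; ring]
    rw [Phi_left hsa0 hsasp, Phi_right h2bsp h2bsa]
  rw [key, hFrp, hFra]
  -- final algebra
  have hpi : Real.pi ≠ 0 := Real.pi_ne_zero
  have hm1 : Real.sqrt (Λ ^ 2 + 4 * b * μ) = c * Real.sqrt (sa * sp) := by
    rw [show Λ ^ 2 + 4 * b * μ = (c * Real.sqrt (sa * sp)) ^ 2 by
      rw [mul_pow, hc2, Real.sq_sqrt (mul_pos hsa0 (hsa0.trans hsasp)).le]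
      linear_combination hΛeq + 4 * b * hμeq]
    exact Real.sqrt_sq (by positivity)
  have hm2 : Λ = c * Real.sqrt ((2 * b - sp) * (2 * b - sa)) := by
    have h8 : (Λ - c * Real.sqrt ((2 * b - sp) * (2 * b - sa)))
        * (Λ + c * Real.sqrt ((2 * b - sp) * (2 * b - sa))) = 0 := by
      have h9 : (c * Real.sqrt ((2 * b - sp) * (2 * b - sa))) ^ 2
          = 2 * ξ * (2 * b - sp) * (2 * b - sa) := by
        rw [mul_pow, hc2, Real.sq_sqrt (mul_nonneg h2bsp.le h2bsa0.le)]; ring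
      linear_combination hΛeq - h9
    rcases mul_eq_zero.mp h8 with h | h
    · linarith
    · exfalso
      have h10 : 0 ≤ c * Real.sqrt ((2 * b - sp) * (2 * b - sa)) := by positivity
      linarith
  rw [hm1, hm2]
  field_simp
  linear_combination 8 * hμeq + (4 * (2 * b - sa - sp)) * hc2
end

section
/- Let μ > 0, b > 0, Λ > 0 and ξ < 0 be real numbers, and set ψ_he(r) = −μ/(b + √(b² + r²)). Suppose 0 < r_p < r_a are such that the radicand W(r) = 2(ξ − ψ_he(r)) − Λ²/r² satisfies W(r_p) = W(r_a) = 0 and W(r) > 0 for all r ∈ (r_p, r_a). Then the azimuthal increment satisfies (1/π)·∫_{r_p}^{r_a} (Λ/(r²·√(W(r)))) dr = 1/2 + Λ/(2·√(Λ² + 4bμ)); in particular it depends only on Λ and not on ξ, and it is strictly greater than 1/2. -/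
open intervalIntegral Real

namespace Stmt14

noncomputable def xf (b r : ℝ) : ℝ := Real.sqrt (b ^ 2 + r ^ 2)

lemma xf_sq (b r : ℝ) : xf b r ^ 2 = b ^ 2 + r ^ 2 := Real.sq_sqrt (by positivity)

lemma xf_nonneg (b r : ℝ) : 0 ≤ xf b r := Real.sqrt_nonneg _

lemma xf_lt_xf {b r s : ℝ} (h0 : 0 ≤ r) (h : r < s) : xf b r < xf b s := by
  apply Real.sqrt_lt_sqrt (by positivity)
  nlinarith

lemma xf_le_xf {b r s : ℝ} (h0 : 0 ≤ r) (h : r ≤ s) : xf b r ≤ xf b s := by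
  apply Real.sqrt_le_sqrt
  nlinarith

lemma hasDerivAt_xf (b : ℝ) {r : ℝ} (hr : 0 < r) :
    HasDerivAt (xf b) (r / xf b r) r := by
  have hne : b ^ 2 + r ^ 2 ≠ 0 := by positivity
  have h1 : HasDerivAt (fun t : ℝ => b ^ 2 + t ^ 2) (2 * r) r := by
    simpa using ((hasDerivAt_pow 2 r).const_add (b ^ 2))
  have := (Real.hasDerivAt_sqrt hne).comp r h1
  refine this.congr_deriv ?_
  have hx : (0:ℝ) < Real.sqrt (b ^ 2 + r ^ 2) := Real.sqrt_pos.2 (by positivity)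
  unfold xf
  field_simp

lemma continuous_xf (b : ℝ) : Continuous (xf b) := by
  exact Real.continuous_sqrt.comp (by continuity)

end Stmt14

namespace Stmt14

noncomputable def g (a x1 x2 d b : ℝ) (r : ℝ) : ℝ :=
  r / (xf b r * (xf b r - d) * Real.sqrt (a * (xf b r - x1) * (x2 - xf b r)))

lemma one_div_sqrt_integrable_left {c d : ℝ} (h : c < d) :
    IntervalIntegrable (fun r => ((r - c) ^ (-(2⁻¹:ℝ)) : ℝ)) MeasureTheory.volume c d := by
  have h0 : IntervalIntegrable (fun x : ℝ => x ^ (-(2⁻¹:ℝ))) MeasureTheory.volume 0 (d - c) :=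
    intervalIntegrable_rpow' (by norm_num)
  simpa using h0.comp_sub_right c

lemma one_div_sqrt_integrable_right {c d : ℝ} (h : c < d) :
    IntervalIntegrable (fun r => ((d - r) ^ (-(2⁻¹:ℝ)) : ℝ)) MeasureTheory.volume c d := by
  have h0 : IntervalIntegrable (fun x : ℝ => x ^ (-(2⁻¹:ℝ))) MeasureTheory.volume (d - c) 0 :=
    (intervalIntegrable_rpow' (by norm_num)).symm
  simpa using h0.comp_sub_left d

end Stmt14

namespace Stmt14

lemma g_measurable (a x1 x2 d b : ℝ) : Measurable (g a x1 x2 d b) := by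
  have hx : Measurable (xf b) := (continuous_xf b).measurable
  unfold g
  fun_prop

lemma g_nonneg (a x1 x2 d b : ℝ) {r : ℝ} (hr : 0 ≤ r) (hx : 0 ≤ xf b r - d) :
    0 ≤ g a x1 x2 d b r := by
  unfold g
  have := xf_nonneg b r
  positivity

set_option maxHeartbeats 1000000 in
lemma g_half_bound (a x1 x2 d b rp ra : ℝ) (ha : 0 < a) (hd : d < x1) (h12 : x1 < x2)
    (hrp : 0 < rp) (hlt : rp < ra) (hx1 : xf b rp = x1) (hx2 : xf b ra = x2)
    {r : ℝ} (hr1 : rp < r) (hr2 : r < ra) {δ : ℝ} (hδ : 0 < δ) (hδle : δ ≤ x2 - xf b r) :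
    g a x1 x2 d b r ≤
      (ra / (x1 * (x1 - d) * Real.sqrt (a * (rp / x2) * δ))) * (r - rp) ^ (-(2⁻¹:ℝ)) := by
  set x := xf b r with hx
  have hx1pos : 0 < x1 := by rw [← hx1]; exact Real.sqrt_pos.2 (by positivity)
  have hx2pos : 0 < x2 := hx1pos.trans h12
  have hxgt : x1 < x := by rw [← hx1]; exact xf_lt_xf hrp.le hr1
  have hxlt : x < x2 := by rw [← hx2]; exact xf_lt_xf (hrp.trans hr1).le hr2
  have hxsq : x ^ 2 = b ^ 2 + r ^ 2 := xf_sq b r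
  have hx1sq : x1 ^ 2 = b ^ 2 + rp ^ 2 := by rw [← hx1]; exact xf_sq b rp
  -- lower bound on x - x1
  have hkey : rp / x2 * (r - rp) ≤ x - x1 := by
    rw [div_mul_eq_mul_div, div_le_iff₀ hx2pos]
    nlinarith [hxgt, hxlt, h12, hrp, hr1]
  have hQ : a * (rp / x2) * δ * (r - rp) ≤ a * (x - x1) * (x2 - x) := by
    have h2 : rp / x2 * (r - rp) * δ ≤ (x - x1) * (x2 - x) :=
      mul_le_mul hkey hδle hδ.le (by linarith)
    nlinarith [mul_le_mul_of_nonneg_left h2 ha.le]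
  have hc0 : 0 < a * (rp / x2) * δ := by positivity
  have hrr : 0 < r - rp := by linarith
  have hsq : Real.sqrt (a * (rp / x2) * δ) * Real.sqrt (r - rp)
      ≤ Real.sqrt (a * (x - x1) * (x2 - x)) := by
    rw [← Real.sqrt_mul hc0.le]
    exact Real.sqrt_le_sqrt hQ
  have hden : x1 * (x1 - d) * (Real.sqrt (a * (rp / x2) * δ) * Real.sqrt (r - rp))
      ≤ x * (x - d) * Real.sqrt (a * (x - x1) * (x2 - x)) := by
    have h1 : x1 * (x1 - d) ≤ x * (x - d) := by nlinarith
    have h2 : 0 < x1 * (x1 - d) := by nlinarith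
    have h3 : 0 ≤ Real.sqrt (a * (rp / x2) * δ) * Real.sqrt (r - rp) := by positivity
    exact mul_le_mul h1 hsq h3 (by nlinarith)
  have hs : (0:ℝ) < Real.sqrt (r - rp) := Real.sqrt_pos.2 hrr
  have hs2 : (0:ℝ) < Real.sqrt (a * (rp / x2) * δ) := Real.sqrt_pos.2 hc0
  have hdenpos : 0 < x1 * (x1 - d) * (Real.sqrt (a * (rp / x2) * δ) * Real.sqrt (r - rp)) :=
    mul_pos (mul_pos hx1pos (sub_pos.2 hd)) (mul_pos hs2 hs)
  have hgle : g a x1 x2 d b r ≤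
      ra / (x1 * (x1 - d) * (Real.sqrt (a * (rp / x2) * δ) * Real.sqrt (r - rp))) := by
    unfold g
    rw [← hx]
    exact div_le_div₀ (by linarith) (by linarith) hdenpos hden
  refine hgle.trans (le_of_eq ?_)
  rw [Real.rpow_neg hrr.le, show (2⁻¹:ℝ) = 1/2 by norm_num, ← Real.sqrt_eq_rpow]
  field_simp

end Stmt14

namespace Stmt14

set_option maxHeartbeats 1000000 in
lemma g_half_bound2 (a x1 x2 d b rp ra : ℝ) (ha : 0 < a) (hd : d < x1) (h12 : x1 < x2)
    (hrp : 0 < rp) (hx1 : xf b rp = x1) (hx2 : xf b ra = x2)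
    {r : ℝ} (hr1 : rp < r) (hr2 : r < ra) {δ : ℝ} (hδ : 0 < δ) (hδle : δ ≤ xf b r - x1) :
    g a x1 x2 d b r ≤
      (ra / (x1 * (x1 - d) * Real.sqrt (a * (rp / x2) * δ))) * (ra - r) ^ (-(2⁻¹:ℝ)) := by
  set x := xf b r with hx
  have hx1pos : 0 < x1 := by rw [← hx1]; exact Real.sqrt_pos.2 (by positivity)
  have hx2pos : 0 < x2 := hx1pos.trans h12
  have hxgt : x1 < x := by rw [← hx1]; exact xf_lt_xf hrp.le hr1
  have hxlt : x < x2 := by rw [← hx2]; exact xf_lt_xf (hrp.trans hr1).le hr2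
  have hxsq : x ^ 2 = b ^ 2 + r ^ 2 := xf_sq b r
  have hx2sq : x2 ^ 2 = b ^ 2 + ra ^ 2 := by rw [← hx2]; exact xf_sq b ra
  have hkey : rp / x2 * (ra - r) ≤ x2 - x := by
    rw [div_mul_eq_mul_div, div_le_iff₀ hx2pos]
    nlinarith [hxgt, hxlt, h12, hrp, hr1]
  have hQ : a * (rp / x2) * δ * (ra - r) ≤ a * (x - x1) * (x2 - x) := by
    have h2 : δ * (rp / x2 * (ra - r)) ≤ (x - x1) * (x2 - x) :=
      mul_le_mul hδle hkey (mul_nonneg (by positivity) (by linarith)) (by linarith)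
    nlinarith [mul_le_mul_of_nonneg_left h2 ha.le]
  have hc0 : 0 < a * (rp / x2) * δ := by positivity
  have hrr : 0 < ra - r := by linarith
  have hsq : Real.sqrt (a * (rp / x2) * δ) * Real.sqrt (ra - r)
      ≤ Real.sqrt (a * (x - x1) * (x2 - x)) := by
    rw [← Real.sqrt_mul hc0.le]
    exact Real.sqrt_le_sqrt hQ
  have hs : (0:ℝ) < Real.sqrt (ra - r) := Real.sqrt_pos.2 hrr
  have hs2 : (0:ℝ) < Real.sqrt (a * (rp / x2) * δ) := Real.sqrt_pos.2 hc0
  have hden : x1 * (x1 - d) * (Real.sqrt (a * (rp / x2) * δ) * Real.sqrt (ra - r))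
      ≤ x * (x - d) * Real.sqrt (a * (x - x1) * (x2 - x)) := by
    have h1 : x1 * (x1 - d) ≤ x * (x - d) := by nlinarith
    have h2 : 0 < x1 * (x1 - d) := by nlinarith
    have h3 : 0 ≤ Real.sqrt (a * (rp / x2) * δ) * Real.sqrt (ra - r) := by positivity
    exact mul_le_mul h1 hsq h3 (by nlinarith)
  have hdenpos : 0 < x1 * (x1 - d) * (Real.sqrt (a * (rp / x2) * δ) * Real.sqrt (ra - r)) :=
    mul_pos (mul_pos hx1pos (sub_pos.2 hd)) (mul_pos hs2 hs)
  have hgle : g a x1 x2 d b r ≤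
      ra / (x1 * (x1 - d) * (Real.sqrt (a * (rp / x2) * δ) * Real.sqrt (ra - r))) := by
    unfold g
    rw [← hx]
    exact div_le_div₀ (by linarith) (by linarith) hdenpos hden
  refine hgle.trans (le_of_eq ?_)
  rw [Real.rpow_neg hrr.le, show (2⁻¹:ℝ) = 1/2 by norm_num, ← Real.sqrt_eq_rpow]
  field_simp

end Stmt14

namespace Stmt14

lemma g_integrable (a x1 x2 d b rp ra : ℝ) (ha : 0 < a) (hd : d < x1) (h12 : x1 < x2)
    (hrp : 0 < rp) (hlt : rp < ra) (hx1 : xf b rp = x1) (hx2 : xf b ra = x2) :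
    IntervalIntegrable (g a x1 x2 d b) MeasureTheory.volume rp ra := by
  set c := (rp + ra) / 2 with hc
  have hc1 : rp < c := by simp only [hc]; linarith
  have hc2 : c < ra := by simp only [hc]; linarith
  have hx1pos : 0 < x1 := by rw [← hx1]; exact Real.sqrt_pos.2 (by positivity)
  have hx2pos : 0 < x2 := hx1pos.trans h12
  have hmeas : ∀ u v : ℝ, MeasureTheory.AEStronglyMeasurable (g a x1 x2 d b)
      (MeasureTheory.volume.restrict (Set.uIoc u v)) :=
    fun u v => (g_measurable a x1 x2 d b).aestronglyMeasurable
  have hxc1 : x1 < xf b c := by rw [← hx1]; exact xf_lt_xf hrp.le hc1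
  have hxc2 : xf b c < x2 := by rw [← hx2]; exact xf_lt_xf (by linarith) hc2
  -- left half
  have hleft : IntervalIntegrable (g a x1 x2 d b) MeasureTheory.volume rp c := by
    set δ := x2 - xf b c with hδdef
    have hδ : 0 < δ := by simp only [hδdef]; linarith
    set C := ra / (x1 * (x1 - d) * Real.sqrt (a * (rp / x2) * δ)) with hC
    have hint : IntervalIntegrable (fun r => C * (r - rp) ^ (-(2⁻¹:ℝ)))
        MeasureTheory.volume rp c := (one_div_sqrt_integrable_left hc1).const_mul C
    refine hint.mono_fun (hmeas rp c) ?_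
    have : ∀ r ∈ Set.uIoc rp c, ‖g a x1 x2 d b r‖ ≤ ‖C * (r - rp) ^ (-(2⁻¹:ℝ))‖ := by
      intro r hr
      rw [Set.uIoc_of_le hc1.le] at hr
      obtain ⟨hr1, hr2⟩ := hr
      have hr2' : r < ra := lt_of_le_of_lt hr2 hc2
      have hδle : δ ≤ x2 - xf b r := by
        have : xf b r ≤ xf b c := xf_le_xf (by linarith) hr2
        simp only [hδdef]; linarith
      have hb1 := g_half_bound a x1 x2 d b rp ra ha hd h12 hrp hlt hx1 hx2 hr1 hr2' hδ hδle
      have hg0 : 0 ≤ g a x1 x2 d b r := by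
        apply g_nonneg _ _ _ _ _ (by linarith)
        have : x1 ≤ xf b r := by rw [← hx1]; exact xf_le_xf hrp.le hr1.le
        linarith
      rw [Real.norm_eq_abs, Real.norm_eq_abs, abs_of_nonneg hg0]
      exact hb1.trans (le_abs_self _)
    exact MeasureTheory.ae_restrict_of_forall_mem measurableSet_uIoc this
  -- right half
  have hright : IntervalIntegrable (g a x1 x2 d b) MeasureTheory.volume c ra := by
    set δ := xf b c - x1 with hδdef
    have hδ : 0 < δ := by simp only [hδdef]; linarith
    set C := ra / (x1 * (x1 - d) * Real.sqrt (a * (rp / x2) * δ)) with hC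
    have hint : IntervalIntegrable (fun r => C * (ra - r) ^ (-(2⁻¹:ℝ)))
        MeasureTheory.volume c ra := (one_div_sqrt_integrable_right hc2).const_mul C
    refine hint.mono_fun (hmeas c ra) ?_
    have : ∀ r ∈ Set.uIoc c ra, ‖g a x1 x2 d b r‖ ≤ ‖C * (ra - r) ^ (-(2⁻¹:ℝ))‖ := by
      intro r hr
      rw [Set.uIoc_of_le hc2.le] at hr
      obtain ⟨hr1, hr2⟩ := hr
      have hr1' : rp < r := hc1.trans hr1
      rcases eq_or_lt_of_le hr2 with rfl | hr2'
      · have h0 : g a x1 x2 d b r = 0 := by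
          unfold g
          rw [hx2]
          simp
        rw [h0]; simp
      · have hδle : δ ≤ xf b r - x1 := by
          have : xf b c ≤ xf b r := xf_le_xf (by linarith) hr1.le
          simp only [hδdef]; linarith
        have hb1 := g_half_bound2 a x1 x2 d b rp ra ha hd h12 hrp hx1 hx2 hr1' hr2' hδ hδle
        have hg0 : 0 ≤ g a x1 x2 d b r := by
          apply g_nonneg _ _ _ _ _ (by linarith)
          have : x1 ≤ xf b r := by rw [← hx1]; exact xf_le_xf hrp.le hr1'.le
          linarith
        rw [Real.norm_eq_abs, Real.norm_eq_abs, abs_of_nonneg hg0]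
        exact hb1.trans (le_abs_self _)
    exact MeasureTheory.ae_restrict_of_forall_mem measurableSet_uIoc this
  exact hleft.trans hright

end Stmt14

namespace Stmt14

set_option maxHeartbeats 2000000 in
lemma key_integral (a x1 x2 d b rp ra : ℝ) (ha : 0 < a) (hd : d < x1) (h12 : x1 < x2)
    (hrp : 0 < rp) (hlt : rp < ra) (hx1 : xf b rp = x1) (hx2 : xf b ra = x2) :
    ∫ r in rp..ra, g a x1 x2 d b r = Real.pi / Real.sqrt (a * (x1 - d) * (x2 - d)) := by
  have hx1pos : 0 < x1 := by rw [← hx1]; exact Real.sqrt_pos.2 (by positivity)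
  have hx2pos : 0 < x2 := hx1pos.trans h12
  obtain ⟨α, hα⟩ : ∃ t, t = x1 - d := ⟨_, rfl⟩
  obtain ⟨β, hβ⟩ : ∃ t, t = x2 - d := ⟨_, rfl⟩
  have hα0 : 0 < α := by rw [hα]; exact sub_pos.2 hd
  have hβ0 : 0 < β := by rw [hβ]; linarith
  have hαβ : α < β := by rw [hα, hβ]; linarith
  have hba : (0:ℝ) < β - α := sub_pos.2 hαβ
  have hK0 : 0 < α * β := mul_pos hα0 hβ0
  obtain ⟨m, hm⟩ : ∃ t, t = (α + β) / (2 * (α * β)) := ⟨_, rfl⟩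
  obtain ⟨R, hR⟩ : ∃ t, t = (β - α) / (2 * (α * β)) := ⟨_, rfl⟩
  have hR0 : 0 < R := by rw [hR]; positivity
  have haK : 0 < a * (α * β) := mul_pos ha hK0
  have hsaK : 0 < Real.sqrt (a * (α * β)) := Real.sqrt_pos.2 haK
  set u : ℝ → ℝ := fun r => ((xf b r - d)⁻¹ - m) / R with hu
  set F : ℝ → ℝ := fun r => -(Real.sqrt (a * (α * β)))⁻¹ * Real.arcsin (u r) with hF
  -- continuity of F on Icc
  have hxd_pos : ∀ r ∈ Set.Icc rp ra, 0 < xf b r - d := by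
    intro r hr
    have : x1 ≤ xf b r := by rw [← hx1]; exact xf_le_xf hrp.le hr.1
    linarith
  have hucont : ContinuousOn u (Set.Icc rp ra) := by
    apply ContinuousOn.div_const
    apply ContinuousOn.sub _ continuousOn_const
    exact ContinuousOn.inv₀ ((continuous_xf b).continuousOn.sub continuousOn_const)
      (fun r hr => ne_of_gt (hxd_pos r hr))
  have hFcont : ContinuousOn F (Set.Icc rp ra) :=
    continuousOn_const.mul (Real.continuous_arcsin.comp_continuousOn hucont)
  -- derivative
  have hderiv : ∀ r ∈ Set.Ioo rp ra, HasDerivAt F (g a x1 x2 d b r) r := by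
    intro r hr
    obtain ⟨hr1, hr2⟩ := hr
    have hr0 : 0 < r := hrp.trans hr1
    set x := xf b r with hx
    have hx1x : x1 < x := by rw [← hx1]; exact xf_lt_xf hrp.le hr1
    have hxx2 : x < x2 := by rw [← hx2]; exact xf_lt_xf hr0.le hr2
    have hx0 : 0 < x := hx1pos.trans hx1x
    have hxd : 0 < x - d := by linarith
    have hαxd : α < x - d := by rw [hα]; linarith
    have hxdβ : x - d < β := by rw [hβ]; linarith
    have hur : u r = ((x - d)⁻¹ - m) / R := rfl
    -- bounds on u r
    have humem : -1 < u r ∧ u r < 1 := by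
      constructor
      · rw [hur, lt_div_iff₀ hR0, hm, hR]
        have h1 : (x - d)⁻¹ > β⁻¹ := inv_strictAnti₀ hxd hxdβ
        have hβinv : β⁻¹ = (β - α) / (2 * (α * β)) * (-1) + (α + β) / (2 * (α * β)) := by
          field_simp
          ring
        nlinarith [h1]
      · rw [hur, div_lt_iff₀ hR0, hm, hR]
        have h1 : (x - d)⁻¹ < α⁻¹ := inv_strictAnti₀ hα0 hαxd
        have hαinv : α⁻¹ = (β - α) / (2 * (α * β)) * 1 + (α + β) / (2 * (α * β)) := by
          field_simp
          ring
        nlinarith [h1]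
    have hu1 : u r ≠ -1 := ne_of_gt humem.1
    have hu2 : u r ≠ 1 := ne_of_lt humem.2
    -- derivative of u
    have h1 : HasDerivAt (fun s => xf b s - d) (r / x) r := (hasDerivAt_xf b hr0).sub_const d
    have h2 : HasDerivAt (fun s => (xf b s - d)⁻¹) (-(r / x) / (x - d) ^ 2) r :=
      h1.inv (ne_of_gt hxd)
    have h3 : HasDerivAt u ((-(r / x) / (x - d) ^ 2) / R) r := (h2.sub_const m).div_const R
    have h4 : HasDerivAt Real.arcsin (1 / Real.sqrt (1 - (u r) ^ 2)) (u r) :=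
      Real.hasDerivAt_arcsin hu1 hu2
    have h5 : HasDerivAt F
        (-(Real.sqrt (a * (α * β)))⁻¹ *
          (1 / Real.sqrt (1 - (u r) ^ 2) * ((-(r / x) / (x - d) ^ 2) / R))) r :=
      (h4.comp r h3).const_mul _
    convert h5 using 1
    have hQpos : 0 < a * (x - x1) * (x2 - x) :=
      mul_pos (mul_pos ha (by linarith)) (by linarith)
    have hxx1 : x - x1 = (x - d) - α := by rw [hα]; ring
    have hx2x : x2 - x = β - (x - d) := by rw [hβ]; ring
    have hwne : x - d ≠ 0 := ne_of_gt hxd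
    have h1t : 1 - (u r) ^ 2
        = (a * (x - x1) * (x2 - x)) / ((x - d) ^ 2 * (a * (α * β)) * R ^ 2) := by
      rw [hur, hxx1, hx2x, hm, hR]
      field_simp
      ring
    have hdeneq : Real.sqrt ((x - d) ^ 2 * (a * (α * β)) * R ^ 2)
        = (x - d) * Real.sqrt (a * (α * β)) * R := by
      rw [Real.sqrt_mul (mul_nonneg (sq_nonneg _) haK.le),
        Real.sqrt_mul (sq_nonneg _), Real.sqrt_sq hxd.le, Real.sqrt_sq hR0.le]
    have hsqrt : Real.sqrt (1 - (u r) ^ 2)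
        = Real.sqrt (a * (x - x1) * (x2 - x)) / ((x - d) * Real.sqrt (a * (α * β)) * R) := by
      rw [h1t, Real.sqrt_div hQpos.le, hdeneq]
    have hsQ : 0 < Real.sqrt (a * (x - x1) * (x2 - x)) := Real.sqrt_pos.2 hQpos
    rw [hsqrt]
    unfold g
    rw [← hx]
    field_simp
  -- FTC
  have hint := g_integrable a x1 x2 d b rp ra ha hd h12 hrp hlt hx1 hx2
  have hftc := intervalIntegral.integral_eq_sub_of_hasDeriv_right_of_le hlt.le hFcont
    (fun r hr => (hderiv r hr).hasDerivWithinAt) hint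
  rw [hftc]
  -- endpoint values
  have hup : u rp = 1 := by
    have hrfl : u rp = ((xf b rp - d)⁻¹ - m) / R := rfl
    rw [hx1] at hrfl
    rw [hrfl, ← hα, hm, hR]
    rw [div_eq_one_iff_eq (by positivity)]
    field_simp
    ring
  have hua : u ra = -1 := by
    have hrfl : u ra = ((xf b ra - d)⁻¹ - m) / R := rfl
    rw [hx2] at hrfl
    rw [hrfl, ← hβ, hm, hR]
    rw [div_eq_iff (by positivity : (β - α) / (2 * (α * β)) ≠ 0)]
    field_simp
    ring
  have hKeq : a * (x1 - d) * (x2 - d) = a * (α * β) := by rw [← hα, ← hβ]; ring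
  rw [hKeq, hF]
  simp only [hup, hua, Real.arcsin_one, Real.arcsin_neg_one]
  field_simp
  ring

end Stmt14

open Stmt14 in
set_option maxHeartbeats 4000000 in
/-- **azimuthal increment in the Hénon potential.** For the Hénon isochrone
potential `ψ_he(r) = −μ/(b + √(b² + r²))` with `μ, b > 0`, an orbit of energy `ξ < 0` and
angular momentum `Λ > 0` with periastron `r_p` and apoastron `r_a` (zeros of the radicand
`W(r) = 2(ξ − ψ_he(r)) − Λ²/r²`, positive in between) has azimuthal increment
`n_φ = (1/π) ∫_{r_p}^{r_a} Λ/(r²√(W(r))) dr = 1/2 + Λ/(2√(Λ² + 4bμ))`; in particular it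
depends only on `Λ` (not on `ξ`) and is strictly greater than `1/2`. -/
theorem stmt_14 (μ b Λ ξ : ℝ) (hμ : 0 < μ) (hb : 0 < b) (hΛ : 0 < Λ) (hξ : ξ < 0)
    (rp ra : ℝ) (hrp : 0 < rp) (hlt : rp < ra)
    (W : ℝ → ℝ)
    (hW : ∀ r : ℝ, W r = 2 * (ξ - (-μ / (b + Real.sqrt (b ^ 2 + r ^ 2)))) - Λ ^ 2 / r ^ 2)
    (hWp : W rp = 0) (hWa : W ra = 0)
    (hWpos : ∀ r ∈ Set.Ioo rp ra, 0 < W r) :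
    (1 / Real.pi) * ∫ r in rp..ra, Λ / (r ^ 2 * Real.sqrt (W r))
      = 1 / 2 + Λ / (2 * Real.sqrt (Λ ^ 2 + 4 * b * μ)) ∧
    1 / 2 < (1 / Real.pi) * ∫ r in rp..ra, Λ / (r ^ 2 * Real.sqrt (W r)) := by
  obtain ⟨x1, hx1e⟩ : ∃ t, Real.sqrt (b ^ 2 + rp ^ 2) = t := ⟨_, rfl⟩
  obtain ⟨x2, hx2e⟩ : ∃ t, Real.sqrt (b ^ 2 + ra ^ 2) = t := ⟨_, rfl⟩
  have hx1f : xf b rp = x1 := hx1e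
  have hx2f : xf b ra = x2 := hx2e
  have hsq1 : x1 ^ 2 = b ^ 2 + rp ^ 2 := by rw [← hx1f]; exact xf_sq b rp
  have hsq2 : x2 ^ 2 = b ^ 2 + ra ^ 2 := by rw [← hx2f]; exact xf_sq b ra
  have hx1pos : 0 < x1 := by rw [← hx1e]; exact Real.sqrt_pos.2 (by positivity)
  have h12 : x1 < x2 := by rw [← hx1f, ← hx2f]; exact xf_lt_xf hrp.le hlt
  have hbx1 : b < x1 := by
    have h := Real.sqrt_lt_sqrt (sq_nonneg b) (show b ^ 2 < b ^ 2 + rp ^ 2 by nlinarith)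
    rwa [Real.sqrt_sq hb.le, hx1e] at h
  have hnbx1 : -b < x1 := by linarith
  set a : ℝ := -2 * ξ with haa
  have ha : 0 < a := by rw [haa]; linarith
  -- root equations
  have e1 : 2 * ξ * rp ^ 2 + 2 * μ * (x1 - b) - Λ ^ 2 = 0 := by
    have h := hWp
    rw [hW rp, hx1e] at h
    have hne1 : b + x1 ≠ 0 := ne_of_gt (by linarith)
    have hne2 : (rp : ℝ) ^ 2 ≠ 0 := pow_ne_zero 2 hrp.ne'
    field_simp at h
    nlinarith [h, hsq1]
  have e2 : 2 * ξ * ra ^ 2 + 2 * μ * (x2 - b) - Λ ^ 2 = 0 := by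
    have h := hWa
    rw [hW ra, hx2e] at h
    have hx2pos : 0 < x2 := hx1pos.trans h12
    have hne1 : b + x2 ≠ 0 := ne_of_gt (by linarith)
    have hne2 : (ra : ℝ) ^ 2 ≠ 0 := pow_ne_zero 2 (by linarith : (0:ℝ) < ra).ne'
    field_simp at h
    have h4 : (b + x2) * (2 * ξ * ra ^ 2 + 2 * μ * (x2 - b) - Λ ^ 2) = 0 := by
      have h3 : (b + x2) * Λ ^ 2 / ra ^ 2 * ra ^ 2 = (b + x2) * Λ ^ 2 := div_mul_cancel₀ _ hne2
      linear_combination ra ^ 2 * h + h3 + 2 * μ * hsq2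
    exact (mul_eq_zero.1 h4).resolve_left hne1
  have e1' : 2 * ξ * (x1 ^ 2 - b ^ 2) + 2 * μ * (x1 - b) - Λ ^ 2 = 0 := by
    linear_combination e1 + 2 * ξ * hsq1
  have e2' : 2 * ξ * (x2 ^ 2 - b ^ 2) + 2 * μ * (x2 - b) - Λ ^ 2 = 0 := by
    linear_combination e2 + 2 * ξ * hsq2
  have hsum : 2 * ξ * (x1 + x2) + 2 * μ = 0 := by
    have h0 : (x1 - x2) * (2 * ξ * (x1 + x2) + 2 * μ) = 0 := by linear_combination e1' - e2'
    rcases mul_eq_zero.1 h0 with h | h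
    · exact absurd h (by intro hc; nlinarith)
    · exact h
  have hfac : ∀ x : ℝ, 2 * ξ * (x ^ 2 - b ^ 2) + 2 * μ * (x - b) - Λ ^ 2
      = a * (x - x1) * (x2 - x) := by
    intro x
    rw [haa]
    linear_combination e1' + (x - x1) * hsum
  have hΛeq : a * (x1 - b) * (x2 - b) = Λ ^ 2 := by linear_combination hfac b
  have h4eq : a * (x1 + b) * (x2 + b) = Λ ^ 2 + 4 * b * μ := by linear_combination hfac (-b)
  -- rewrite the integrand
  have hEq : Set.EqOn (fun r => Λ / (r ^ 2 * Real.sqrt (W r)))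
      (fun r => (Λ / 2) * (g a x1 x2 b b r + g a x1 x2 (-b) b r)) (Set.uIcc rp ra) := by
    intro r hr
    rw [Set.uIcc_of_le hlt.le] at hr
    have hr0 : 0 < r := lt_of_lt_of_le hrp hr.1
    rcases eq_or_lt_of_le hr.1 with heq | h1
    · simp only [← heq]
      rw [hWp]
      unfold g
      rw [hx1f]
      simp
    rcases eq_or_lt_of_le hr.2 with heq | h2
    · simp only [heq]
      rw [hWa]
      unfold g
      rw [hx2f]
      simp
    -- interior
    obtain ⟨x, hxe⟩ : ∃ t, xf b r = t := ⟨_, rfl⟩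
    have hx1x : x1 < x := by rw [← hxe, ← hx1f]; exact xf_lt_xf hrp.le h1
    have hxx2 : x < x2 := by rw [← hxe, ← hx2f]; exact xf_lt_xf hr0.le h2
    have hxsq : x ^ 2 = b ^ 2 + r ^ 2 := by rw [← hxe]; exact xf_sq b r
    have hxb : b < x := hbx1.trans hx1x
    have hr2 : r ^ 2 = x ^ 2 - b ^ 2 := by rw [hxsq]; ring
    have hQpos : 0 < a * (x - x1) * (x2 - x) :=
      mul_pos (mul_pos ha (by linarith)) (by linarith)
    have hWr : W r = a * (x - x1) * (x2 - x) / r ^ 2 := by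
      rw [hW r, show Real.sqrt (b ^ 2 + r ^ 2) = x from hxe, ← hfac x, hr2]
      have h1ne : b + x ≠ 0 := ne_of_gt (by linarith)
      have h2ne : x ^ 2 - b ^ 2 ≠ 0 := by nlinarith
      field_simp
      ring
    have hsW : Real.sqrt (W r) = Real.sqrt (a * (x - x1) * (x2 - x)) / r := by
      rw [hWr, Real.sqrt_div hQpos.le, Real.sqrt_sq hr0.le]
    obtain ⟨s, hse⟩ : ∃ t, Real.sqrt (a * (x - x1) * (x2 - x)) = t := ⟨_, rfl⟩
    have hs0 : 0 < s := by rw [← hse]; exact Real.sqrt_pos.2 hQpos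
    simp only []
    rw [hsW]
    unfold g
    rw [hxe, hse]
    have hxbne : x - b ≠ 0 := by linarith
    have hxbne' : x + b ≠ 0 := ne_of_gt (by linarith)
    have hx0 : (0:ℝ) < x := by linarith
    rw [show x - -b = x + b by ring]
    field_simp
    linear_combination (-(2 * x)) * hr2
  rw [intervalIntegral.integral_congr hEq]
  have hint1 := g_integrable a x1 x2 b b rp ra ha hbx1 h12 hrp hlt hx1f hx2f
  have hint2 := g_integrable a x1 x2 (-b) b rp ra ha hnbx1 h12 hrp hlt hx1f hx2f
  have key1 := key_integral a x1 x2 b b rp ra ha hbx1 h12 hrp hlt hx1f hx2f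
  have key2 := key_integral a x1 x2 (-b) b rp ra ha hnbx1 h12 hrp hlt hx1f hx2f
  have hval : ∫ r in rp..ra, (Λ / 2) * (g a x1 x2 b b r + g a x1 x2 (-b) b r)
      = (Λ / 2) * (Real.pi / Real.sqrt (a * (x1 - b) * (x2 - b))
        + Real.pi / Real.sqrt (a * (x1 - -b) * (x2 - -b))) := by
    rw [intervalIntegral.integral_const_mul, intervalIntegral.integral_add hint1 hint2,
      key1, key2]
  rw [hval]
  have hs1 : Real.sqrt (a * (x1 - b) * (x2 - b)) = Λ := by
    rw [hΛeq, Real.sqrt_sq hΛ.le]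
  have hs2 : Real.sqrt (a * (x1 - -b) * (x2 - -b)) = Real.sqrt (Λ ^ 2 + 4 * b * μ) := by
    rw [show x1 - -b = x1 + b by ring, show x2 - -b = x2 + b by ring, h4eq]
  rw [hs1, hs2]
  have hsp : 0 < Real.sqrt (Λ ^ 2 + 4 * b * μ) := Real.sqrt_pos.2 (by positivity)
  have hπ : (0:ℝ) < Real.pi := Real.pi_pos
  constructor
  · field_simp
  · have hmain : 1 / Real.pi * (Λ / 2 * (Real.pi / Λ + Real.pi / Real.sqrt (Λ ^ 2 + 4 * b * μ)))
        = 1 / 2 + Λ / (2 * Real.sqrt (Λ ^ 2 + 4 * b * μ)) := by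
      field_simp
    rw [hmain]
    have : 0 < Λ / (2 * Real.sqrt (Λ ^ 2 + 4 * b * μ)) := by positivity
    linarith
end

section
/- Let μ > 0, b > 0, Λ > 0 and ξ < 0 be real numbers, and set ψ_he(r) = −μ/(b + √(b² + r²)). Suppose 0 < r_p < r_a are such that the radicand W(r) = 2(ξ − ψ_he(r)) − Λ²/r² satisfies W(r_p) = W(r_a) = 0 and W(r) > 0 for all r ∈ (r_p, r_a). Define the radial period τ_r = 2·∫_{r_p}^{r_a} dr/√(W(r)) and the isochrone semi-major axis a = (√(b² + r_p²) + √(b² + r_a²))/2. Then the generalized Kepler third law holds: μ·τ_r² = 4π²·a³. -/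
open intervalIntegral

noncomputable def usq (b x : ℝ) : ℝ := Real.sqrt (b ^ 2 + x ^ 2)

lemma usq_sq (b x : ℝ) : (usq b x) ^ 2 = b ^ 2 + x ^ 2 :=
  Real.sq_sqrt (by positivity)

lemma usq_pos (b x : ℝ) (hb : 0 < b) : 0 < usq b x :=
  Real.sqrt_pos.2 (by positivity)

lemma usq_lt (b x y : ℝ) (hx : 0 ≤ x) (hxy : x < y) : usq b x < usq b y :=
  Real.sqrt_lt_sqrt (by positivity) (by nlinarith)

lemma usq_hasDeriv (b x : ℝ) (hb : 0 < b) : HasDerivAt (usq b) (x / usq b x) x := by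
  have h1 : HasDerivAt (fun y : ℝ => b ^ 2 + y ^ 2) (2 * x) x := by
    simpa using ((hasDerivAt_pow 2 x).const_add (b ^ 2))
  have h2 := (Real.hasDerivAt_sqrt (show b ^ 2 + x ^ 2 ≠ 0 by positivity)).comp x h1
  have h3 : 0 < Real.sqrt (b ^ 2 + x ^ 2) := Real.sqrt_pos.2 (by positivity)
  refine h2.congr_deriv ?_
  unfold usq
  field_simp

noncomputable def Fad (ε p q b x : ℝ) : ℝ :=
  (1 / Real.sqrt ε) * ((p + q) / 2 * Real.arcsin ((2 * usq b x - (p + q)) / (q - p))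
    - Real.sqrt ((usq b x - p) * (q - usq b x)))

lemma Fad_hasDeriv (ε p q b x : ℝ) (hε : 0 < ε) (hb : 0 < b) (hx : 0 < x)
    (hp : p < usq b x) (hq : usq b x < q) :
    HasDerivAt (Fad ε p q b)
      (x / (Real.sqrt ε * Real.sqrt ((usq b x - p) * (q - usq b x)))) x := by
  have hd : 0 < q - p := by linarith
  have hu0 : 0 < usq b x := usq_pos b x hb
  have hP : 0 < (usq b x - p) * (q - usq b x) := by nlinarith
  have hsP : 0 < Real.sqrt ((usq b x - p) * (q - usq b x)) := Real.sqrt_pos.2 hP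
  have hu' := usq_hasDeriv b x hb
  have hT : HasDerivAt (fun y => (2 * usq b y - (p + q)) / (q - p))
      ((2 * (x / usq b x)) / (q - p)) x :=
    (((hu'.const_mul 2).sub_const (p + q)).div_const (q - p))
  have hT1 : (2 * usq b x - (p + q)) / (q - p) ≠ -1 := by
    intro h; rw [div_eq_iff (by linarith : q - p ≠ 0)] at h; nlinarith
  have hT2 : (2 * usq b x - (p + q)) / (q - p) ≠ 1 := by
    intro h; rw [div_eq_iff (by linarith : q - p ≠ 0)] at h; nlinarith
  have harc := (Real.hasDerivAt_arcsin hT1 hT2).comp x hT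
  have hPd : HasDerivAt (fun y => (usq b y - p) * (q - usq b y))
      ((x / usq b x) * (q - usq b x) + (usq b x - p) * (-(x / usq b x))) x :=
    (hu'.sub_const p).mul ((hu'.neg).const_add q)
  have hsq := (Real.hasDerivAt_sqrt (ne_of_gt hP)).comp x hPd
  have hfull := (((harc.const_mul ((p + q) / 2)).sub hsq).const_mul (1 / Real.sqrt ε))
  refine hfull.congr_deriv ?_
  have h1T : Real.sqrt (1 - ((2 * usq b x - (p + q)) / (q - p)) ^ 2)
      = 2 * Real.sqrt ((usq b x - p) * (q - usq b x)) / (q - p) := by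
    have key : (2 * Real.sqrt ((usq b x - p) * (q - usq b x)) / (q - p)) ^ 2
        = 1 - ((2 * usq b x - (p + q)) / (q - p)) ^ 2 := by
      rw [div_pow, mul_pow, Real.sq_sqrt hP.le]
      field_simp
      ring
    rw [← key, Real.sqrt_sq (by positivity)]
  rw [Function.comp_def] at *
  rw [h1T]
  have hse : 0 < Real.sqrt ε := Real.sqrt_pos.2 hε
  field_simp
  ring

lemma henon_core (b ε rp ra : ℝ) (hb : 0 < b) (hε : 0 < ε) (hrp : 0 < rp) (hlt : rp < ra)
    (W : ℝ → ℝ)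
    (hWf : ∀ r, 0 < r → r ^ 2 * W r = ε * ((usq b r - usq b rp) * (usq b ra - usq b r))) :
    ∫ r in rp..ra, 1 / Real.sqrt (W r)
      = Real.pi * (usq b rp + usq b ra) / (2 * Real.sqrt ε) := by
  set p := usq b rp with hp
  set q := usq b ra with hq
  have hpq : p < q := usq_lt b rp ra hrp.le hlt
  have hse : 0 < Real.sqrt ε := Real.sqrt_pos.2 hε
  have hd : ∀ x ∈ Set.Ioo rp ra, HasDerivAt (Fad ε p q b) (1 / Real.sqrt (W x)) x := by
    intro x hx
    have hx0 : 0 < x := hrp.trans hx.1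
    have hpu : p < usq b x := usq_lt b rp x hrp.le hx.1
    have huq : usq b x < q := usq_lt b x ra hx0.le hx.2
    have hP : 0 < (usq b x - p) * (q - usq b x) := by nlinarith
    have hsP : 0 < Real.sqrt ((usq b x - p) * (q - usq b x)) := Real.sqrt_pos.2 hP
    have hW : W x = (Real.sqrt ε * Real.sqrt ((usq b x - p) * (q - usq b x)) / x) ^ 2 := by
      have h := hWf x hx0
      rw [div_pow, mul_pow, Real.sq_sqrt hε.le, Real.sq_sqrt hP.le]
      field_simp
      linarith [h]
    have hsw : Real.sqrt (W x)
        = Real.sqrt ε * Real.sqrt ((usq b x - p) * (q - usq b x)) / x := by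
      rw [hW, Real.sqrt_sq (by positivity)]
    have := Fad_hasDeriv ε p q b x hε hb hx0 hpu huq
    convert this using 1
    rw [hsw]
    field_simp
  have hcont : Continuous (Fad ε p q b) := by
    have hu : Continuous (usq b) := by
      unfold usq; fun_prop
    unfold Fad
    have harc : Continuous Real.arcsin := Real.continuous_arcsin
    fun_prop
  have hint : IntervalIntegrable (fun r => 1 / Real.sqrt (W r)) MeasureTheory.volume rp ra := by
    apply intervalIntegral.intervalIntegrable_deriv_of_nonneg hcont.continuousOn
    · intro x hx
      rw [min_eq_left hlt.le, max_eq_right hlt.le] at hx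
      exact hd x hx
    · intro x hx
      positivity
  rw [intervalIntegral.integral_eq_sub_of_hasDeriv_right_of_le hlt.le hcont.continuousOn
    (fun x hx => (hd x hx).hasDerivWithinAt) hint]
  have hqp : q - p ≠ 0 := by linarith
  have h1 : Fad ε p q b ra = (1 / Real.sqrt ε) * ((p + q) / 2 * (Real.pi / 2)) := by
    unfold Fad
    rw [show (2 * usq b ra - (p + q)) / (q - p) = 1 by field_simp; ring]
    rw [show (usq b ra - p) * (q - usq b ra) = 0 by rw [← hq]; ring]
    rw [Real.arcsin_one, Real.sqrt_zero]
    ring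
  have h2 : Fad ε p q b rp = (1 / Real.sqrt ε) * ((p + q) / 2 * (-(Real.pi / 2))) := by
    unfold Fad
    rw [show (2 * usq b rp - (p + q)) / (q - p) = -1 by field_simp; ring]
    rw [show (usq b rp - p) * (q - usq b rp) = 0 by rw [← hp]; ring]
    rw [Real.arcsin_neg_one, Real.sqrt_zero]
    ring
  rw [h1, h2]
  field_simp
  ring

/-- **generalized Kepler third law for the Hénon potential.** For the Hénon
isochrone potential `ψ_he(r) = −μ/(b + √(b² + r²))` with `μ, b > 0`, a radially periodic
orbit of energy `ξ < 0` and angular momentum `Λ > 0` with periastron `r_p` and apoastron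
`r_a` (zeros of the radicand `W(r) = 2(ξ − ψ_he(r)) − Λ²/r²`, positive in between),
radial period `τ_r = 2∫_{r_p}^{r_a} dr/√(W(r))` and isochrone semi-major axis
`a = (√(b² + r_p²) + √(b² + r_a²))/2` satisfies `μ τ_r² = 4π² a³`. -/
theorem stmt_16 (μ b Λ ξ : ℝ) (hμ : 0 < μ) (hb : 0 < b) (hΛ : 0 < Λ) (hξ : ξ < 0)
    (rp ra : ℝ) (hrp : 0 < rp) (hlt : rp < ra)
    (W : ℝ → ℝ)
    (hW : ∀ r : ℝ, W r = 2 * (ξ - (-μ / (b + Real.sqrt (b ^ 2 + r ^ 2)))) - Λ ^ 2 / r ^ 2)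
    (hWp : W rp = 0) (hWa : W ra = 0)
    (hWpos : ∀ r ∈ Set.Ioo rp ra, 0 < W r)
    (τr a : ℝ)
    (hτ : τr = 2 * ∫ r in rp..ra, 1 / Real.sqrt (W r))
    (ha : a = (Real.sqrt (b ^ 2 + rp ^ 2) + Real.sqrt (b ^ 2 + ra ^ 2)) / 2) :
    μ * τr ^ 2 = 4 * Real.pi ^ 2 * a ^ 3 := by
  have hεpos : (0:ℝ) < -2 * ξ := by linarith
  set p := usq b rp with hpdef
  set q := usq b ra with hqdef
  have hpq : p < q := usq_lt b rp ra hrp.le hlt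
  have hppos : 0 < p := usq_pos b rp hb
  -- quadratic form of r² W r
  have hQ : ∀ r, 0 < r → r ^ 2 * W r
      = 2 * ξ * (usq b r) ^ 2 + 2 * μ * (usq b r) - (Λ ^ 2 + 2 * μ * b + 2 * ξ * b ^ 2) := by
    intro r hr
    have hu2 := usq_sq b r
    have hu0 : 0 < usq b r := usq_pos b r hb
    have hbu : (0:ℝ) < b + usq b r := by linarith
    have e : Real.sqrt (b ^ 2 + r ^ 2) = usq b r := rfl
    rw [hW r, e]
    field_simp
    linear_combination (-2 * (ξ * (b + usq b r) + μ)) * hu2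
  have hQp : rp ^ 2 * W rp
      = 2 * ξ * p ^ 2 + 2 * μ * p - (Λ ^ 2 + 2 * μ * b + 2 * ξ * b ^ 2) := hQ rp hrp
  have hQa : ra ^ 2 * W ra
      = 2 * ξ * q ^ 2 + 2 * μ * q - (Λ ^ 2 + 2 * μ * b + 2 * ξ * b ^ 2) :=
    hQ ra (hrp.trans hlt)
  rw [hWp, mul_zero] at hQp
  rw [hWa, mul_zero] at hQa
  -- μ = -ξ (p+q)
  have hfac : (p - q) * (2 * ξ * (p + q) + 2 * μ) = 0 := by linear_combination hQa - hQp
  have hμeq : μ = -ξ * (p + q) := by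
    rcases mul_eq_zero.1 hfac with h | h
    · exfalso; linarith [hpq]
    · linarith
  -- the factored form of r² W r
  have hWf : ∀ r, 0 < r → r ^ 2 * W r = (-2 * ξ) * ((usq b r - p) * (q - usq b r)) := by
    intro r hr
    linear_combination hQ r hr - hQp + (2 * usq b r - 2 * p) * hμeq
  have hcore := henon_core b (-2 * ξ) rp ra hb hεpos hrp hlt W hWf
  have hae : a = (p + q) / 2 := ha
  rw [← hpdef, ← hqdef] at hcore
  set ε := -2 * ξ with hεdef
  have hK : (Real.sqrt ε) ^ 2 = ε := Real.sq_sqrt hεpos.le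
  have hKpos : 0 < Real.sqrt ε := Real.sqrt_pos.2 hεpos
  have hμa : μ = ε * ((p + q) / 2) := by rw [hμeq, hεdef]; ring
  rw [hτ, hcore, hae]
  have expand : (2 * (Real.pi * (p + q) / (2 * Real.sqrt ε))) ^ 2
      = Real.pi ^ 2 * (p + q) ^ 2 / ε := by
    rw [mul_pow, div_pow, mul_pow, mul_pow, hK]
    field_simp
  rw [expand, hμa]
  field_simp
  ring
end

section
/- Let μ > 0, b > 0, Λ > 0 and ξ be real numbers, and set ψ_bo(r) = μ/(b + √(b² − r²)) for 0 < r < b. Suppose 0 < r_p < r_a < b are such that the radicand W(r) = 2(ξ − ψ_bo(r)) − Λ²/r² satisfies W(r_p) = W(r_a) = 0 and W(r) > 0 for all r ∈ (r_p, r_a). Define the radial period τ_r = 2·∫_{r_p}^{r_a} dr/√(W(r)) and the isochrone semi-major axis a = (√(b² − r_p²) + √(b² − r_a²))/2. Then the generalized Kepler third law holds: μ·τ_r² = 4π²·a³. -/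
open intervalIntegral

set_option maxHeartbeats 2000000 in
/-- **generalized Kepler third law for the bounded potential.** For the
bounded isochrone potential `ψ_bo(r) = μ/(b + √(b² − r²))` on `(0,b)` with `μ, b > 0`, a
radially periodic orbit of energy `ξ` and angular momentum `Λ > 0` with periastron `r_p`
and apoastron `r_a`, `0 < r_p < r_a < b` (zeros of the radicand
`W(r) = 2(ξ − ψ_bo(r)) − Λ²/r²`, positive in between), radial period
`τ_r = 2∫_{r_p}^{r_a} dr/√(W(r))` and isochrone semi-major axis
`a = (√(b² − r_p²) + √(b² − r_a²))/2` satisfies `μ τ_r² = 4π² a³`. -/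
theorem stmt_17 (μ b Λ ξ : ℝ) (hμ : 0 < μ) (hb : 0 < b) (hΛ : 0 < Λ)
    (rp ra : ℝ) (hrp : 0 < rp) (hlt : rp < ra) (hra : ra < b)
    (W : ℝ → ℝ)
    (hW : ∀ r : ℝ, W r = 2 * (ξ - μ / (b + Real.sqrt (b ^ 2 - r ^ 2))) - Λ ^ 2 / r ^ 2)
    (hWp : W rp = 0) (hWa : W ra = 0)
    (hWpos : ∀ r ∈ Set.Ioo rp ra, 0 < W r)
    (τr a : ℝ)
    (hτ : τr = 2 * ∫ r in rp..ra, 1 / Real.sqrt (W r))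
    (ha : a = (Real.sqrt (b ^ 2 - rp ^ 2) + Real.sqrt (b ^ 2 - ra ^ 2)) / 2) :
    μ * τr ^ 2 = 4 * Real.pi ^ 2 * a ^ 3 := by
  have hrpb : rp < b := hlt.trans hra
  have hra0 : 0 < ra := hrp.trans hlt
  have hQp : (0:ℝ) < b ^ 2 - rp ^ 2 := by nlinarith
  have hQa : (0:ℝ) < b ^ 2 - ra ^ 2 := by nlinarith
  set vp := Real.sqrt (b ^ 2 - rp ^ 2) with hvp_def
  set va := Real.sqrt (b ^ 2 - ra ^ 2) with hva_def
  have hvp2 : vp ^ 2 = b ^ 2 - rp ^ 2 := Real.sq_sqrt hQp.le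
  have hva2 : va ^ 2 = b ^ 2 - ra ^ 2 := Real.sq_sqrt hQa.le
  have hvp0 : 0 < vp := Real.sqrt_pos.mpr hQp
  have hva0 : 0 < va := Real.sqrt_pos.mpr hQa
  have hvav : va < vp := by
    rw [hva_def, hvp_def]
    exact Real.sqrt_lt_sqrt hQa.le (by nlinarith)
  clear_value vp va
  have hvpb : vp < b := by nlinarith
  have hvab : va < b := by nlinarith
  -- base algebraic identity
  have base : ∀ r : ℝ, 0 < r → r < b →
      r ^ 2 * W r =
        2 * ξ * ((b + Real.sqrt (b ^ 2 - r ^ 2)) * (b - Real.sqrt (b ^ 2 - r ^ 2)))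
          - 2 * μ * (b - Real.sqrt (b ^ 2 - r ^ 2)) - Λ ^ 2 := by
    intro r h0 h1
    have h2 : (0:ℝ) < b ^ 2 - r ^ 2 := by nlinarith
    have hw2 : Real.sqrt (b ^ 2 - r ^ 2) ^ 2 = b ^ 2 - r ^ 2 := Real.sq_sqrt h2.le
    have hw0 : 0 < Real.sqrt (b ^ 2 - r ^ 2) := Real.sqrt_pos.mpr h2
    set w := Real.sqrt (b ^ 2 - r ^ 2) with hwdef
    have hbw : b + w ≠ 0 := by positivity
    have hr : r ≠ 0 := ne_of_gt h0
    rw [hW, ← hwdef]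
    field_simp
    linear_combination (2 * (ξ * (b + w) - μ)) * hw2
  have Ep : 2 * ξ * ((b + vp) * (b - vp)) - 2 * μ * (b - vp) - Λ ^ 2 = 0 := by
    have h := base rp hrp hrpb
    rw [hWp, ← hvp_def, mul_zero] at h
    linarith
  have Ea : 2 * ξ * ((b + va) * (b - va)) - 2 * μ * (b - va) - Λ ^ 2 = 0 := by
    have h := base ra hra0 hra
    rw [hWa, ← hva_def, mul_zero] at h
    linarith
  have hξ : 0 < ξ := by nlinarith [Ep, hvp2, mul_pos hμ (sub_pos.mpr hvpb), mul_pos hΛ hΛ, mul_pos hrp hrp]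
  have hsum : ξ * ((b + vp) + (b + va)) = 2 * b * ξ + μ := by
    have key : (vp - va) * (ξ * ((b + vp) + (b + va)) - 2 * b * ξ - μ) = 0 := by
      linear_combination (Ea - Ep) / 2
    rcases mul_eq_zero.mp key with h | h
    · exact absurd h (ne_of_gt (sub_pos.mpr hvav))
    · linarith
  have hprod : 2 * ξ * ((b + vp) * (b + va)) = 4 * b * μ + Λ ^ 2 := by
    linear_combination Ea + 2 * (b + va) * hsum
  have haμ : 2 * ξ * a = μ := by
    rw [ha]; linear_combination hsum
  have ha0 : 0 < a := by rw [ha]; positivity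
  have hvane : vp - va ≠ 0 := ne_of_gt (sub_pos.mpr hvav)
  set c := Real.sqrt (2 * ξ) with hc_def
  have hc2 : c ^ 2 = 2 * ξ := Real.sq_sqrt (by positivity)
  have hc0 : 0 < c := Real.sqrt_pos.mpr (by positivity)
  clear_value c
  set hh := (vp - va) / 2 with hh_def
  have hh0 : 0 < hh := by rw [hh_def]; linarith
  clear_value hh
  -- the antiderivative
  set F : ℝ → ℝ := fun r =>
    (-a * Real.arcsin ((Real.sqrt (b ^ 2 - r ^ 2) - (vp + va) / 2) / hh)
      + Real.sqrt ((vp - Real.sqrt (b ^ 2 - r ^ 2)) * (Real.sqrt (b ^ 2 - r ^ 2) - va))) / c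
    with hF_def
  clear_value F
  have hderiv : ∀ r ∈ Set.Ioo rp ra, HasDerivAt F (1 / Real.sqrt (W r)) r := by
    intro r hr
    obtain ⟨hr1, hr2⟩ := hr
    have h0r : 0 < r := hrp.trans hr1
    have hrb : r < b := hr2.trans hra
    have hsq1 : r ^ 2 < b ^ 2 := by
      have := pow_lt_pow_left₀ hrb h0r.le (two_ne_zero); linarith
    have hsq2 : r ^ 2 < ra ^ 2 := by
      have := pow_lt_pow_left₀ hr2 h0r.le (two_ne_zero); linarith
    have hsq3 : rp ^ 2 < r ^ 2 := by
      have := pow_lt_pow_left₀ hr1 hrp.le (two_ne_zero); linarith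
    have h2 : (0:ℝ) < b ^ 2 - r ^ 2 := by linarith
    have hw2 : Real.sqrt (b ^ 2 - r ^ 2) ^ 2 = b ^ 2 - r ^ 2 := Real.sq_sqrt h2.le
    have hw0 : 0 < Real.sqrt (b ^ 2 - r ^ 2) := Real.sqrt_pos.mpr h2
    have hwa : va < Real.sqrt (b ^ 2 - r ^ 2) := by
      rw [hva_def]; exact Real.sqrt_lt_sqrt hQa.le (by linarith)
    have hwp : Real.sqrt (b ^ 2 - r ^ 2) < vp := by
      rw [hvp_def]; exact Real.sqrt_lt_sqrt h2.le (by linarith)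
    set w := Real.sqrt (b ^ 2 - r ^ 2) with hwdef
    have hP0 : 0 < (vp - w) * (w - va) := mul_pos (by linarith) (by linarith)
    have hp0 : 0 < Real.sqrt ((vp - w) * (w - va)) := Real.sqrt_pos.mpr hP0
    -- derivative of inner sqrt
    have d1 : HasDerivAt (fun x : ℝ => b ^ 2 - x ^ 2) (-(2 * r)) r := by
      simpa using (hasDerivAt_pow 2 r).const_sub (b ^ 2)
    have d2 : HasDerivAt (fun x : ℝ => Real.sqrt (b ^ 2 - x ^ 2)) (-r / w) r := by
      have h := (Real.hasDerivAt_sqrt (ne_of_gt h2)).comp r d1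
      rw [← hwdef] at h
      exact h.congr_deriv (by field_simp)
    -- arcsin part
    have hu_lt : (w - (vp + va) / 2) / hh < 1 := by
      rw [div_lt_one hh0, hh_def]; linarith
    have hu_gt : -1 < (w - (vp + va) / 2) / hh := by
      rw [lt_div_iff₀ hh0, hh_def]; linarith
    have d3 : HasDerivAt
        (fun x : ℝ => Real.arcsin ((Real.sqrt (b ^ 2 - x ^ 2) - (vp + va) / 2) / hh))
        (1 / Real.sqrt (1 - ((w - (vp + va) / 2) / hh) ^ 2) * (-r / w / hh)) r := by
      have du : HasDerivAt (fun x : ℝ => (Real.sqrt (b ^ 2 - x ^ 2) - (vp + va) / 2) / hh)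
          (-r / w / hh) r := (d2.sub_const _).div_const hh
      exact (Real.hasDerivAt_arcsin (ne_of_gt hu_gt) (ne_of_lt hu_lt)).comp r du
    -- sqrt of quadratic part
    have d4 : HasDerivAt
        (fun x : ℝ => (vp - Real.sqrt (b ^ 2 - x ^ 2)) * (Real.sqrt (b ^ 2 - x ^ 2) - va))
        (-(-r / w) * (w - va) + (vp - w) * (-r / w)) r := by
      have := (d2.const_sub vp).mul (d2.sub_const va)
      rw [← hwdef] at this
      exact this
    have d5 : HasDerivAt
        (fun x : ℝ => Real.sqrt ((vp - Real.sqrt (b ^ 2 - x ^ 2)) * (Real.sqrt (b ^ 2 - x ^ 2) - va)))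
        (1 / (2 * Real.sqrt ((vp - w) * (w - va))) * (-(-r / w) * (w - va) + (vp - w) * (-r / w)))
        r := by
      exact (Real.hasDerivAt_sqrt (ne_of_gt hP0)).comp r d4
    have d6 : HasDerivAt F
        ((-a * (1 / Real.sqrt (1 - ((w - (vp + va) / 2) / hh) ^ 2) * (-r / w / hh))
          + 1 / (2 * Real.sqrt ((vp - w) * (w - va))) * (-(-r / w) * (w - va) + (vp - w) * (-r / w))) / c) r := by
      rw [hF_def]
      exact ((d3.const_mul (-a)).add d5).div_const c
    -- identify the derivative value
    have hWr : W r = 2 * ξ * ((vp - w) * (w - va)) / r ^ 2 := by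
      have hb2 := base r h0r hrb
      rw [← hwdef] at hb2
      have hr2ne : (r:ℝ) ^ 2 ≠ 0 := by positivity
      field_simp
      linear_combination hb2 + hprod - 2 * (b + w) * hsum
    have hsq1 : Real.sqrt (1 - ((w - (vp + va) / 2) / hh) ^ 2)
        = Real.sqrt ((vp - w) * (w - va)) / hh := by
      rw [show 1 - ((w - (vp + va) / 2) / hh) ^ 2 = ((vp - w) * (w - va)) / hh ^ 2 by
        rw [hh_def]; field_simp; ring]
      rw [Real.sqrt_div hP0.le, Real.sqrt_sq hh0.le]
    have hsqrtW : Real.sqrt (W r) = c * Real.sqrt ((vp - w) * (w - va)) / r := by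
      rw [hWr, Real.sqrt_div (by positivity), Real.sqrt_mul (by positivity), Real.sqrt_sq h0r.le,
        ← hc_def]
    convert d6 using 1
    rw [hsqrtW, hsq1]
    rw [ha]
    field_simp
    ring
  have hcont : ContinuousOn F (Set.Icc rp ra) := by
    rw [hF_def]
    apply Continuous.continuousOn
    have csqrt : Continuous fun r : ℝ => Real.sqrt (b ^ 2 - r ^ 2) :=
      Real.continuous_sqrt.comp (by fun_prop)
    exact ((continuous_const.mul
      (Real.continuous_arcsin.comp ((csqrt.sub continuous_const).div_const hh))).add
      (Real.continuous_sqrt.comp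
        ((continuous_const.sub csqrt).mul (csqrt.sub continuous_const)))).div_const c
  have hint : IntervalIntegrable (fun r => 1 / Real.sqrt (W r)) MeasureTheory.volume rp ra := by
    apply intervalIntegrable_deriv_of_nonneg (g := F)
    · rw [Set.uIcc_of_le hlt.le]; exact hcont
    · intro x hx
      rw [min_eq_left hlt.le, max_eq_right hlt.le] at hx
      exact hderiv x hx
    · intro x hx
      positivity
  have hFTC : ∫ r in rp..ra, 1 / Real.sqrt (W r) = F ra - F rp :=
    integral_eq_sub_of_hasDeriv_right_of_le hlt.le hcont
      (fun x hx => (hderiv x hx).hasDerivWithinAt) hint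
  have hFp : F rp = -a * (Real.pi / 2) / c := by
    simp only [hF_def]
    rw [← hvp_def]
    rw [show vp - (vp + va) / 2 = hh by rw [hh_def]; ring, div_self hh0.ne',
      Real.arcsin_one, sub_self, zero_mul, Real.sqrt_zero, add_zero]
  have hFa : F ra = -a * (-(Real.pi / 2)) / c := by
    simp only [hF_def]
    rw [← hva_def]
    rw [show va - (vp + va) / 2 = -hh by rw [hh_def]; ring, neg_div, div_self hh0.ne',
      Real.arcsin_neg_one, sub_self, mul_zero, Real.sqrt_zero, add_zero]
  rw [hτ, hFTC, hFp, hFa]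
  have hcne : c ≠ 0 := hc0.ne'
  field_simp
  linear_combination (-4)*haμ + (-4*a)*hc2
end
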